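/- arXiv:2507.11650 — 7 statements merged into one kernel-verified Lean document; each statement's English description precedes it below -/
import Mathlib

section
/- Fix integers d_1,…,d_s ≥ 0 and let F = ⊕_{i=1}^s F^{FI,d_i} be a free FI-module over an FI-algebra A over a commutative ring K. Then the restriction F|_OI is isomorphic, as an OI-module over A|_OI, to ⊕_{i=1}^s (F^{OI,d_i})^{⊕ d_i!}; in particular, F|_OI is a free OI-module of rank Σ_{i=1}^s d_i!. -/
/-- The index type of the free FI-module `F = ⊕_{i=1}^s F^{FI,d_i}` in width `n`:
pairs `(i, π)` with `π ∈ Hom_FI([d_i],[n])`. -/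
abbrev FIIdx {s : ℕ} (d : Fin s → ℕ) (n : ℕ) : Type := Σ i : Fin s, Fin (d i) ↪ Fin n

/-- The index type of the free OI-module `⊕_{i=1}^s (F^{OI,d_i})^{⊕ d_i!}` in width
`n`: triples `(i, j, π)` with `j ∈ [d_i!]` and `π ∈ Hom_OI([d_i],[n])`. -/
abbrev OIIdx {s : ℕ} (d : Fin s → ℕ) (n : ℕ) : Type :=
  Σ i : Fin s, Fin (d i).factorial × (Fin (d i) ↪o Fin n)

/-- Width-`n` component of the free FI-module `F = ⊕_{i=1}^s F^{FI,d_i}` over an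
FI-algebra `A`: the free `A n`-module `⊕_{(i,π)} A n · e_{π,i}`. -/
abbrev FreeFI (A : ℕ → Type) [∀ n, CommRing (A n)] {s : ℕ} (d : Fin s → ℕ)
    (n : ℕ) : Type := FIIdx d n →₀ A n

/-- Width-`n` component of the free OI-module `⊕_{i=1}^s (F^{OI,d_i})^{⊕ d_i!}`. -/
abbrev FreeOI (A : ℕ → Type) [∀ n, CommRing (A n)] {s : ℕ} (d : Fin s → ℕ)
    (n : ℕ) : Type := OIIdx d n →₀ A n

/-- The structure map of the free FI-module `⊕ F^{FI,d_i}` along an FI-morphism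
`ε : [m] ↪ [n]`: `a e_{π,i} ↦ A(ε)(a) e_{ε∘π,i}`. -/
noncomputable def freeFIMap {K : Type} [CommRing K] (A : ℕ → Type)
    [∀ n, CommRing (A n)] [∀ n, Algebra K (A n)]
    (Amap : ∀ {m n : ℕ}, (Fin m ↪ Fin n) → (A m →ₐ[K] A n))
    {s : ℕ} (d : Fin s → ℕ) {m n : ℕ} (ε : Fin m ↪ Fin n)
    (f : FreeFI A d m) : FreeFI A d n :=
  f.sum fun p a => Finsupp.single ⟨p.1, p.2.trans ε⟩ (Amap ε a)

/-- The structure map of the free OI-module `⊕ (F^{OI,d_i})^{⊕ d_i!}` (over the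
restriction `A|_OI`) along an OI-morphism `ε : [m] ↪o [n]`. -/
noncomputable def freeOIMap {K : Type} [CommRing K] (A : ℕ → Type)
    [∀ n, CommRing (A n)] [∀ n, Algebra K (A n)]
    (Amap : ∀ {m n : ℕ}, (Fin m ↪ Fin n) → (A m →ₐ[K] A n))
    {s : ℕ} (d : Fin s → ℕ) {m n : ℕ} (ε : Fin m ↪o Fin n)
    (f : FreeOI A d m) : FreeOI A d n :=
  f.sum fun p a => Finsupp.single ⟨p.1, (p.2.1, p.2.2.trans ε)⟩ (Amap ε.toEmbedding a)


noncomputable def sortEmb {k n : ℕ} (π : Fin k ↪ Fin n) : Fin k ↪o Fin n :=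
  (Finset.univ.map π).orderEmbOfFin (by simp)

noncomputable def permOf {k n : ℕ} (π : Fin k ↪ Fin n) : Equiv.Perm (Fin k) :=
  Equiv.ofBijective
    (fun i => ((Finset.univ.map π).orderIsoOfFin (by simp)).symm
      ⟨π i, by simp [Finset.mem_map]⟩)
    (Finite.injective_iff_bijective.mp (fun a b h => π.injective (by
      have := congrArg ((Finset.univ.map π).orderIsoOfFin (by simp)) h
      simpa [Subtype.ext_iff] using this)))

lemma sortEmb_permOf {k n : ℕ} (π : Fin k ↪ Fin n) (i : Fin k) :
    sortEmb π (permOf π i) = π i := by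
  simp only [sortEmb, permOf, Equiv.ofBijective_apply, ← Finset.coe_orderIsoOfFin_apply,
    OrderIso.apply_symm_apply]

noncomputable def fiDecomp {k n : ℕ} : (Fin k ↪ Fin n) ≃ Equiv.Perm (Fin k) × (Fin k ↪o Fin n) where
  toFun π := (permOf π, sortEmb π)
  invFun p := p.1.toEmbedding.trans p.2.toEmbedding
  left_inv π := by
    ext i
    exact congrArg Fin.val (sortEmb_permOf π i)
  right_inv p := by
    obtain ⟨σ, τ⟩ := p
    set π := σ.toEmbedding.trans τ.toEmbedding with hπ
    have hτ : sortEmb π = τ := by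
      refine (Finset.orderEmbOfFin_unique' _ (fun x => ?_)).symm
      simp only [Finset.mem_map, Finset.mem_univ, true_and]
      exact ⟨σ.symm x, by simp [hπ]⟩
    have hσ : permOf π = σ := by
      ext i
      have h1 : sortEmb π (permOf π i) = π i := sortEmb_permOf π i
      have h2 : π i = sortEmb π (σ i) := by rw [hτ]; rfl
      exact congrArg Fin.val ((sortEmb π).injective (h1.trans h2))
    exact Prod.ext hσ hτ

lemma fiDecomp_trans {k m n : ℕ} (π : Fin k ↪ Fin m) (ε : Fin m ↪o Fin n) :
    fiDecomp (π.trans ε.toEmbedding) =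
      ((fiDecomp π).1, (fiDecomp π).2.trans ε) := by
  have h : π.trans ε.toEmbedding
      = fiDecomp.symm ((fiDecomp π).1, (fiDecomp π).2.trans ε) := by
    ext i
    exact congrArg (fun x => (ε x : ℕ)) (sortEmb_permOf π i).symm
  rw [h, Equiv.apply_symm_apply]

/-- Permutations of `Fin k` indexed by `Fin k!`. -/
noncomputable def permFinEquiv (k : ℕ) : Equiv.Perm (Fin k) ≃ Fin k.factorial :=
  Fintype.equivFinOfCardEq (by simp [Fintype.card_perm])

/-- The index bijection `FIIdx d n ≃ OIIdx d n`. -/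
noncomputable def idxEquiv {s : ℕ} (d : Fin s → ℕ) (n : ℕ) : FIIdx d n ≃ OIIdx d n :=
  Equiv.sigmaCongrRight fun i =>
    fiDecomp.trans (Equiv.prodCongr (permFinEquiv (d i)) (Equiv.refl _))

lemma idxEquiv_trans {s : ℕ} (d : Fin s → ℕ) {m n : ℕ} (ε : Fin m ↪o Fin n)
    (p : FIIdx d m) :
    idxEquiv d n ⟨p.1, p.2.trans ε.toEmbedding⟩ =
      ⟨p.1, ((idxEquiv d m p).2.1, (idxEquiv d m p).2.2.trans ε)⟩ := by
  obtain ⟨i, π⟩ := p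
  show (⟨i, (Equiv.prodCongr (permFinEquiv (d i)) (Equiv.refl _))
      (fiDecomp (π.trans ε.toEmbedding))⟩ : OIIdx d n) = _
  rw [fiDecomp_trans π ε]
  rfl

lemma freeFIMap_single {K : Type} [CommRing K] (A : ℕ → Type)
    [∀ n, CommRing (A n)] [∀ n, Algebra K (A n)]
    (Amap : ∀ {m n : ℕ}, (Fin m ↪ Fin n) → (A m →ₐ[K] A n))
    {s : ℕ} (d : Fin s → ℕ) {m n : ℕ} (ε : Fin m ↪ Fin n)
    (p : FIIdx d m) (a : A m) :
    freeFIMap A Amap d ε (Finsupp.single p a)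
      = Finsupp.single ⟨p.1, p.2.trans ε⟩ (Amap ε a) := by
  rw [freeFIMap, Finsupp.sum_single_index (by simp)]

lemma freeFIMap_add {K : Type} [CommRing K] (A : ℕ → Type)
    [∀ n, CommRing (A n)] [∀ n, Algebra K (A n)]
    (Amap : ∀ {m n : ℕ}, (Fin m ↪ Fin n) → (A m →ₐ[K] A n))
    {s : ℕ} (d : Fin s → ℕ) {m n : ℕ} (ε : Fin m ↪ Fin n)
    (f g : FreeFI A d m) :
    freeFIMap A Amap d ε (f + g)
      = freeFIMap A Amap d ε f + freeFIMap A Amap d ε g := by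
  rw [freeFIMap, Finsupp.sum_add_index (by simp)
    (by intros; simp [map_add, Finsupp.single_add])]
  rfl

lemma freeOIMap_single {K : Type} [CommRing K] (A : ℕ → Type)
    [∀ n, CommRing (A n)] [∀ n, Algebra K (A n)]
    (Amap : ∀ {m n : ℕ}, (Fin m ↪ Fin n) → (A m →ₐ[K] A n))
    {s : ℕ} (d : Fin s → ℕ) {m n : ℕ} (ε : Fin m ↪o Fin n)
    (p : OIIdx d m) (a : A m) :
    freeOIMap A Amap d ε (Finsupp.single p a)
      = Finsupp.single ⟨p.1, (p.2.1, p.2.2.trans ε)⟩ (Amap ε.toEmbedding a) := by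
  rw [freeOIMap, Finsupp.sum_single_index (by simp)]

lemma freeOIMap_add {K : Type} [CommRing K] (A : ℕ → Type)
    [∀ n, CommRing (A n)] [∀ n, Algebra K (A n)]
    (Amap : ∀ {m n : ℕ}, (Fin m ↪ Fin n) → (A m →ₐ[K] A n))
    {s : ℕ} (d : Fin s → ℕ) {m n : ℕ} (ε : Fin m ↪o Fin n)
    (f g : FreeOI A d m) :
    freeOIMap A Amap d ε (f + g)
      = freeOIMap A Amap d ε f + freeOIMap A Amap d ε g := by
  rw [freeOIMap, Finsupp.sum_add_index (by simp)
    (by intros; simp [map_add, Finsupp.single_add])]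
  rfl

/-- Fix integers `d_1, …, d_s ≥ 0` and let `F = ⊕_{i=1}^s F^{FI,d_i}`
be a free FI-module over an FI-algebra `A` over a commutative ring `K`. Then the
restriction `F|_OI` is isomorphic, as an OI-module over `A|_OI`, to
`⊕_{i=1}^s (F^{OI,d_i})^{⊕ d_i!}`: there is a family of `A n`-linear isomorphisms
in every width commuting with the OI-structure maps. In particular `F|_OI` is a
free OI-module of rank `Σ_{i=1}^s d_i!`. -/
theorem stmt_6 {K : Type} [CommRing K] (A : ℕ → Type)
    [∀ n, CommRing (A n)] [∀ n, Algebra K (A n)]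
    (Amap : ∀ {m n : ℕ}, (Fin m ↪ Fin n) → (A m →ₐ[K] A n))
    (hid : ∀ (n : ℕ) (a : A n), Amap (Function.Embedding.refl (Fin n)) a = a)
    (hcomp : ∀ {m n p : ℕ} (ε : Fin m ↪ Fin n) (δ : Fin n ↪ Fin p) (a : A m),
      Amap (ε.trans δ) a = Amap δ (Amap ε a))
    {s : ℕ} (d : Fin s → ℕ) :
    ∃ e : ∀ n, FreeFI A d n ≃ₗ[A n] FreeOI A d n,
      ∀ (m n : ℕ) (ε : Fin m ↪o Fin n) (x : FreeFI A d m),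
        e n (freeFIMap A Amap d ε.toEmbedding x) = freeOIMap A Amap d ε (e m x) := by
  refine ⟨fun n => Finsupp.domLCongr (idxEquiv d n), fun m n ε x => ?_⟩
  induction x using Finsupp.induction with
  | zero => simp [freeFIMap, freeOIMap]
  | single_add p a f _ _ ih =>
    rw [freeFIMap_add, map_add, map_add, freeOIMap_add, ← ih, freeFIMap_single]
    congr 1
    rw [Finsupp.domLCongr_single, Finsupp.domLCongr_single, freeOIMap_single, idxEquiv_trans]
    rfl
end

section
/- Let A be an OI-algebra over a commutative ring K with colimit 𝒜 = lim A. For every integer d ≥ 0, the colimit of the free OI-module F^{OI,d} over A is isomorphic, as an Inc-module over 𝒜, to the free Inc-module F^{Inc,d} over 𝒜, via the map sending the class [a e_π] (for a ∈ A_n and π an OI-morphism [d] → [n]) to [a] ε_{π̃}, where π̃: [d] → ℕ is π followed by the inclusion [n] ↪ ℕ. -/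
/-- The monoid `Inc` of strictly increasing maps `ℕ → ℕ`, under composition. -/
def Inc : Type := {f : ℕ → ℕ // StrictMono f}

instance : Monoid Inc where
  mul σ τ := ⟨σ.1 ∘ τ.1, σ.2.comp τ.2⟩
  one := ⟨id, strictMono_id⟩
  mul_assoc _ _ _ := rfl
  one_mul _ := rfl
  mul_one _ := rfl

/-- `Hom_OI([d], ℕ)`: strictly increasing maps `[d] → ℕ`. -/
def OIHomNat (d : ℕ) : Type := {π : Fin d → ℕ // StrictMono π}

/-- The action of `Inc` on `Hom_OI([d], ℕ)` by composition. -/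
def incAct {d : ℕ} (τ : Inc) (π : OIHomNat d) : OIHomNat d :=
  ⟨τ.1 ∘ π.1, τ.2.comp π.2⟩

/-- The identity OI-morphism `[n] → [n]`. -/
def oeId (n : ℕ) : Fin n ↪o Fin n := OrderEmbedding.ofStrictMono id strictMono_id

/-- The inclusion OI-morphism `ι_{m,n} : [m] → [n]`, `j ↦ j`, for `m ≤ n`. -/
def oeLE {m n : ℕ} (h : m ≤ n) : Fin m ↪o Fin n := Fin.castLEOrderEmb h

/-- The width `τ(n)` of the target of the OI-morphism `τ·id_n` induced by `τ ∈ Inc`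
(in 0-based indexing: `[n] = {0,…,n-1}` is mapped into `{0,…,τ(n-1)}`). -/
def incWidth (τ : Inc) : ℕ → ℕ
  | 0 => 0
  | n + 1 => τ.1 n + 1

/-- The OI-morphism `τ·id_n : [n] → [τ(n)]`, `j ↦ τ(j)`, induced by `τ ∈ Inc`. -/
def incRestrict (τ : Inc) (n : ℕ) : Fin n ↪o Fin (incWidth τ n) :=
  OrderEmbedding.ofStrictMono
    (fun j => ⟨τ.1 j, by
      cases n with
      | zero => exact absurd j.isLt (Nat.not_lt_zero _)
      | succ k => exact Nat.lt_succ_of_le (τ.2.le_iff_le.mpr (Nat.lt_succ_iff.mp j.isLt))⟩)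
    (fun a b hab => by exact τ.2 (show (a : ℕ) < b from hab))

/-- The extension `π̃ : [d] → ℕ` of an OI-morphism `π : [d] → [n]` along the
inclusion `[n] ↪ ℕ`. -/
def extendHom {d n : ℕ} (π : Fin d ↪o Fin n) : OIHomNat d :=
  ⟨fun j => (π j : ℕ), fun _ _ h => π.strictMono h⟩

-- helper lemmas to insert
lemma extendHom_injective {d n : ℕ} :
    Function.Injective (extendHom (d := d) (n := n)) := by
  intro π π' h
  ext j
  exact congrFun (congrArg Subtype.val h) j

lemma extendHom_trans_oeLE {d m n : ℕ} (h : m ≤ n) (π : Fin d ↪o Fin m) :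
    extendHom (π.trans (oeLE h)) = extendHom π := by
  apply Subtype.ext; funext j; simp [extendHom, oeLE]

lemma oeLE_trans {m n p : ℕ} (h₁ : m ≤ n) (h₂ : n ≤ p) :
    (oeLE h₁).trans (oeLE h₂) = oeLE (h₁.trans h₂) := by
  ext j; simp [oeLE]

lemma trans_oeLE_injective {d m n : ℕ} (h : m ≤ n) :
    Function.Injective (fun π : Fin d ↪o Fin m => π.trans (oeLE h)) := by
  intro π π' hh
  ext j
  exact congrArg Fin.val (by simpa [oeLE] using DFunLike.congr_fun hh j)
/-- Let `A` be an OI-algebra over a commutative ring `K` with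
colimit `𝒜 = lim A` (an Inc-algebra via `τ·[a] = [A(τ·id_n)(a)]`). For every
`d ≥ 0`, the colimit of the free OI-module `F^{OI,d}` over `A` is isomorphic, as an
Inc-module over `𝒜`, to the free Inc-module `F^{Inc,d} = ⊕_{π ∈ Hom_OI(d,ℕ)} 𝒜 ε_π`
via `[a e_π] ↦ [a] ε_{π̃}`. Concretely: the maps
`λ n : F^{OI,d}_n → F^{Inc,d}`, `a e_π ↦ κ n (a) ε_{π̃}`, are additive, `A n`-linear
over `κ n`, Inc-equivariant, and present `F^{Inc,d}` as the colimit of `F^{OI,d}`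
(they are compatible, jointly surjective, and identify two elements exactly when
they agree in a common width). -/
theorem stmt_13 {K : Type} [CommRing K]
    (A : ℕ → Type) [∀ n, CommRing (A n)] [∀ n, Algebra K (A n)]
    (Amap : ∀ {m n : ℕ}, (Fin m ↪o Fin n) → (A m →ₐ[K] A n))
    (hAid : ∀ (n : ℕ) (a : A n), Amap (oeId n) a = a)
    (hAcomp : ∀ {m n p : ℕ} (ε : Fin m ↪o Fin n) (δ : Fin n ↪o Fin p) (a : A m),
      Amap (ε.trans δ) a = Amap δ (Amap ε a))
    -- the colimit Inc-algebra `𝒜 = lim A`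
    (𝒜 : Type) [CommRing 𝒜] [Algebra K 𝒜] (κ : ∀ n, A n →ₐ[K] 𝒜)
    (hκ : ∀ {m n : ℕ} (h : m ≤ n) (a : A m), κ n (Amap (oeLE h) a) = κ m a)
    (hκsurj : ∀ x : 𝒜, ∃ (n : ℕ) (a : A n), κ n a = x)
    (hκeq : ∀ {m n : ℕ} (a : A m) (b : A n), κ m a = κ n b ↔
      ∃ (p : ℕ) (h₁ : m ≤ p) (h₂ : n ≤ p), Amap (oeLE h₁) a = Amap (oeLE h₂) b)
    (actA : Inc → (𝒜 →ₐ[K] 𝒜))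
    (hactA : ∀ (τ : Inc) (n : ℕ) (a : A n),
      actA τ (κ n a) = κ (incWidth τ n) (Amap (incRestrict τ n) a))
    (hactA1 : ∀ a : 𝒜, actA (1 : Inc) a = a)
    (hactAmul : ∀ (σ τ : Inc) (a : 𝒜), actA (σ * τ) a = actA σ (actA τ a))
    (d : ℕ) :
    -- the comparison maps `λ n : F^{OI,d}_n → F^{Inc,d}`, `a e_π ↦ [a] ε_{π̃}` ...
    ∀ lam : ∀ n, ((Fin d ↪o Fin n) →₀ A n) → (OIHomNat d →₀ 𝒜),
      (∀ (n : ℕ) (f : (Fin d ↪o Fin n) →₀ A n),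
        lam n f = f.sum fun π a => Finsupp.single (extendHom π) (κ n a)) →
      -- ... are additive and `A n`-semilinear over `κ n`,
      (∀ (n : ℕ) (f g : (Fin d ↪o Fin n) →₀ A n), lam n (f + g) = lam n f + lam n g) ∧
      (∀ (n : ℕ) (a : A n) (f : (Fin d ↪o Fin n) →₀ A n),
        lam n (a • f) = κ n a • lam n f) ∧
      -- commute with the OI-structure maps of `F^{OI,d}` (cocone compatibility),
      (∀ (m n : ℕ) (h : m ≤ n) (f : (Fin d ↪o Fin m) →₀ A m),
        lam n (f.sum fun π a => Finsupp.single (π.trans (oeLE h)) (Amap (oeLE h) a))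
          = lam m f) ∧
      -- are jointly surjective,
      (∀ y : OIHomNat d →₀ 𝒜, ∃ (n : ℕ) (f : (Fin d ↪o Fin n) →₀ A n), lam n f = y) ∧
      -- identify two elements exactly when they agree in a common width,
      (∀ (m n : ℕ) (f : (Fin d ↪o Fin m) →₀ A m) (g : (Fin d ↪o Fin n) →₀ A n),
        lam m f = lam n g ↔ ∃ (p : ℕ) (h₁ : m ≤ p) (h₂ : n ≤ p),
          (f.sum fun π a => Finsupp.single (π.trans (oeLE h₁)) (Amap (oeLE h₁) a))
            = (g.sum fun π a => Finsupp.single (π.trans (oeLE h₂)) (Amap (oeLE h₂) a))) ∧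
      -- and intertwine the OI-structure maps along `τ·id_n` with the Inc-action
      -- `τ·(a ε_π) = (τ·a) ε_{τ∘π}` of `F^{Inc,d}`:
      (∀ (τ : Inc) (n : ℕ) (f : (Fin d ↪o Fin n) →₀ A n),
        ((lam n f).sum fun π a => Finsupp.single (incAct τ π) (actA τ a))
          = lam (incWidth τ n)
              (f.sum fun π a =>
                Finsupp.single (π.trans (incRestrict τ n)) (Amap (incRestrict τ n) a))) := by
  classical
  intro lam hlam
  have hadd : ∀ {n : ℕ} (π : Fin d ↪o Fin n) (b₁ b₂ : A n),
      (Finsupp.single (extendHom π) (κ n (b₁ + b₂)) : OIHomNat d →₀ 𝒜)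
        = Finsupp.single (extendHom π) (κ n b₁) + Finsupp.single (extendHom π) (κ n b₂) := by
    intro n π b₁ b₂; rw [map_add, Finsupp.single_add]
  have lam_single : ∀ (n : ℕ) (π : Fin d ↪o Fin n) (a : A n),
      lam n (Finsupp.single π a) = Finsupp.single (extendHom π) (κ n a) := by
    intro n π a
    rw [hlam, Finsupp.sum_single_index (by simp)]
  have lam_add : ∀ (n : ℕ) (f g : (Fin d ↪o Fin n) →₀ A n),
      lam n (f + g) = lam n f + lam n g := by
    intro n f g
    rw [hlam, hlam, hlam]
    exact Finsupp.sum_add_index' (fun π => by simp) hadd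
  have lam_push : ∀ {m n : ℕ} (h : m ≤ n) (f : (Fin d ↪o Fin m) →₀ A m),
      lam n (f.sum fun π a => Finsupp.single (π.trans (oeLE h)) (Amap (oeLE h) a))
        = lam m f := by
    intro m n h f
    rw [hlam, hlam,
      Finsupp.sum_sum_index (fun π => by simp) (fun π b₁ b₂ => hadd _ _ _)]
    refine Finsupp.sum_congr fun π _ => ?_
    rw [Finsupp.sum_single_index (by simp), hκ, extendHom_trans_oeLE]
  have lam_eq : ∀ (n : ℕ) (f : (Fin d ↪o Fin n) →₀ A n),
      lam n f = Finsupp.embDomain ⟨extendHom, extendHom_injective⟩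
        (f.mapRange (κ n) (map_zero _)) := by
    intro n f
    rw [hlam, Finsupp.embDomain_eq_mapDomain, Finsupp.mapDomain,
      Finsupp.sum_mapRange_index (fun π => Finsupp.single_zero _)]
    rfl
  have push_eq : ∀ {m n : ℕ} (h : m ≤ n) (f : (Fin d ↪o Fin m) →₀ A m),
      (f.sum fun π a => Finsupp.single (π.trans (oeLE h)) (Amap (oeLE h) a))
        = Finsupp.embDomain ⟨fun π => π.trans (oeLE h), trans_oeLE_injective h⟩
            (f.mapRange (Amap (oeLE h)) (map_zero _)) := by
    intro m n h f
    rw [Finsupp.embDomain_eq_mapDomain, Finsupp.mapDomain,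
      Finsupp.sum_mapRange_index (fun π => Finsupp.single_zero _)]
    rfl
  have push_comp : ∀ {m n p : ℕ} (h₁ : m ≤ n) (h₂ : n ≤ p) (h₃ : m ≤ p)
      (f : (Fin d ↪o Fin m) →₀ A m),
      ((f.sum fun π a => Finsupp.single (π.trans (oeLE h₁)) (Amap (oeLE h₁) a)).sum
          fun π a => Finsupp.single (π.trans (oeLE h₂)) (Amap (oeLE h₂) a))
        = f.sum fun π a => Finsupp.single (π.trans (oeLE h₃)) (Amap (oeLE h₃) a) := by
    intro m n p h₁ h₂ h₃ f
    rw [Finsupp.sum_sum_index (fun π => by simp)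
      (fun π b₁ b₂ => by rw [map_add, Finsupp.single_add])]
    refine Finsupp.sum_congr fun π _ => ?_
    rw [Finsupp.sum_single_index (by simp), ← hAcomp]
    have he : (oeLE h₁).trans (oeLE h₂) = oeLE h₃ := by rw [oeLE_trans]
    rw [show (π.trans (oeLE h₁)).trans (oeLE h₂) = π.trans (oeLE h₃) from by
      rw [← he]; rfl, he]
  refine ⟨lam_add, ?_, fun m n h f => lam_push h f, ?_, ?_, ?_⟩
  · -- semilinearity
    intro n a f
    rw [hlam, hlam, Finsupp.smul_sum, Finsupp.sum_smul_index' (fun π => by simp)]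
    refine Finsupp.sum_congr fun π _ => ?_
    rw [smul_eq_mul, map_mul, Finsupp.smul_single']
  · -- joint surjectivity
    intro y
    induction y using Finsupp.induction with
    | zero => exact ⟨0, 0, by rw [hlam, Finsupp.sum_zero_index]⟩
    | single_add π c y hπ hc ih =>
      obtain ⟨n₁, f₁, hf₁⟩ := ih
      obtain ⟨n₂, a, ha⟩ := hκsurj c
      set N := max (max n₁ n₂) ((Finset.univ.sup π.1) + 1) with hN
      have hn₁ : n₁ ≤ N := le_trans (le_max_left _ _) (le_max_left _ _)
      have hn₂ : n₂ ≤ N := le_trans (le_max_right _ _) (le_max_left _ _)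
      have hbound : ∀ j, π.1 j < N := fun j =>
        lt_of_lt_of_le (Nat.lt_succ_of_le (Finset.le_sup (Finset.mem_univ j)))
          (le_max_right _ _)
      refine ⟨N, (f₁.sum fun σ b => Finsupp.single (σ.trans (oeLE hn₁)) (Amap (oeLE hn₁) b))
        + Finsupp.single (OrderEmbedding.ofStrictMono (fun j => (⟨π.1 j, hbound j⟩ : Fin N))
            (fun s t hst => by exact π.2 hst)) (Amap (oeLE hn₂) a), ?_⟩
      rw [lam_add, lam_push, hf₁, lam_single, hκ, ha]
      have : extendHom (OrderEmbedding.ofStrictMono (fun j => (⟨π.1 j, hbound j⟩ : Fin N))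
          (fun s t hst => by exact π.2 hst)) = π := by
        apply Subtype.ext; funext j; rfl
      rw [this]
      exact add_comm _ _
  · -- injectivity criterion
    intro m n f g
    constructor
    · intro hfg
      set F := f.sum fun π a =>
        Finsupp.single (π.trans (oeLE (le_max_left m n))) (Amap (oeLE (le_max_left m n)) a)
        with hF
      set G := g.sum fun π a =>
        Finsupp.single (π.trans (oeLE (le_max_right m n))) (Amap (oeLE (le_max_right m n)) a)
        with hG
      have hFG : lam (max m n) F = lam (max m n) G := by
        rw [hF, hG, lam_push, lam_push, hfg]
      have hpt : ∀ π, κ (max m n) (F π) = κ (max m n) (G π) := by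
        intro π
        have h1 : F.mapRange (κ (max m n)) (map_zero _)
            = G.mapRange (κ (max m n)) (map_zero _) :=
          Finsupp.embDomain_injective _ (by rw [← lam_eq, ← lam_eq, hFG])
        have h2 := DFunLike.congr_fun h1 π
        rwa [Finsupp.mapRange_apply, Finsupp.mapRange_apply] at h2
      choose q hq₁ hq₂ heqq using fun π => (hκeq (F π) (G π)).mp (hpt π)
      set p := max (max m n) ((F.support ∪ G.support).sup q) with hp
      have hmn : max m n ≤ p := le_max_left _ _
      have hAll : ∀ π, Amap (oeLE hmn) (F π) = Amap (oeLE hmn) (G π) := by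
        intro π
        by_cases hmem : π ∈ F.support ∪ G.support
        · have hqp : q π ≤ p := le_trans (Finset.le_sup hmem) (le_max_right _ _)
          have h2 : Amap (oeLE hqp) (Amap (oeLE (hq₁ π)) (F π))
              = Amap (oeLE hqp) (Amap (oeLE (hq₂ π)) (G π)) := by rw [heqq]
          rw [← hAcomp, ← hAcomp, oeLE_trans] at h2
          exact h2
        · rw [Finset.mem_union, not_or] at hmem
          rw [Finsupp.notMem_support_iff.mp hmem.1, Finsupp.notMem_support_iff.mp hmem.2]
      refine ⟨p, le_trans (le_max_left m n) hmn, le_trans (le_max_right m n) hmn, ?_⟩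
      calc (f.sum fun π a => Finsupp.single (π.trans (oeLE (le_trans (le_max_left m n) hmn)))
              (Amap (oeLE (le_trans (le_max_left m n) hmn)) a))
          = F.sum fun π a => Finsupp.single (π.trans (oeLE hmn)) (Amap (oeLE hmn) a) :=
            (push_comp (le_max_left m n) hmn _ f).symm
        _ = G.sum fun π a => Finsupp.single (π.trans (oeLE hmn)) (Amap (oeLE hmn) a) := by
            rw [push_eq hmn F, push_eq hmn G]
            congr 1
            exact Finsupp.ext fun π => by
              rw [Finsupp.mapRange_apply, Finsupp.mapRange_apply, hAll]
        _ = g.sum fun π a => Finsupp.single (π.trans (oeLE (le_trans (le_max_right m n) hmn)))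
              (Amap (oeLE (le_trans (le_max_right m n) hmn)) a) :=
            push_comp (le_max_right m n) hmn _ g
    · rintro ⟨p, h₁, h₂, heq⟩
      rw [← lam_push h₁ f, ← lam_push h₂ g, heq]
  · -- Inc-equivariance
    intro τ n f
    rw [hlam n f,
      Finsupp.sum_sum_index (fun π => by simp)
        (fun π b₁ b₂ => by rw [map_add, Finsupp.single_add]),
      hlam (incWidth τ n),
      Finsupp.sum_sum_index (fun π => by simp)
        (fun π b₁ b₂ => by rw [map_add, Finsupp.single_add])]
    refine Finsupp.sum_congr fun π _ => ?_
    rw [Finsupp.sum_single_index (by simp), Finsupp.sum_single_index (by simp), hactA]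
    have : incAct τ (extendHom π) = extendHom (π.trans (incRestrict τ n)) := by
      apply Subtype.ext; funext j
      simp [incAct, extendHom, incRestrict, OrderEmbedding.ofStrictMono]
    rw [this]
end

section
/- Let A be an OI-algebra over a commutative ring K with colimit 𝒜 = lim A. If M is a finitely generated OI-module over A, then its colimit ℳ = lim M is a finitely generated Inc-module over 𝒜. -/
section Colim

variable {K : Type} [CommRing K]

/-- An OI-module over an OI-algebra `A` (unbundled): width components, functorial
structure maps, and compatibility with the `A`-module structures. -/
structure OIMod (K : Type) [CommRing K] (A : ℕ → Type) [∀ n, CommRing (A n)]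
    [∀ n, Algebra K (A n)]
    (Amap : ∀ {m n : ℕ}, (Fin m ↪o Fin n) → (A m →ₐ[K] A n)) where
  M : ℕ → Type
  [acg : ∀ n, AddCommGroup (M n)]
  [mod : ∀ n, Module (A n) (M n)]
  map : ∀ {m n : ℕ}, (Fin m ↪o Fin n) → (M m →+ M n)
  map_id : ∀ (n : ℕ) (x : M n), map (oeId n) x = x
  map_comp : ∀ {m n p : ℕ} (ε : Fin m ↪o Fin n) (δ : Fin n ↪o Fin p) (x : M m),
    map (ε.trans δ) x = map δ (map ε x)
  map_smul : ∀ {m n : ℕ} (ε : Fin m ↪o Fin n) (a : A m) (x : M m),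
    map ε (a • x) = Amap ε a • map ε x

attribute [instance] OIMod.acg OIMod.mod

/-- Presentation of an additive group `ℳ` as the colimit `lim M` of an OI-module
`M` along the direct system induced by the inclusions `ι_{m,n}`. -/
structure ColimPres {A : ℕ → Type} [∀ n, CommRing (A n)] [∀ n, Algebra K (A n)]
    {Amap : ∀ {m n : ℕ}, (Fin m ↪o Fin n) → (A m →ₐ[K] A n)}
    (D : OIMod K A @Amap) (ℳ : Type) [AddCommGroup ℳ] where
  μ : ∀ n, D.M n →+ ℳ
  compat : ∀ {m n : ℕ} (h : m ≤ n) (x : D.M m), μ n (D.map (oeLE h) x) = μ m x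
  jointSurj : ∀ q : ℳ, ∃ (n : ℕ) (x : D.M n), μ n x = q
  eq_iff : ∀ {m n : ℕ} (x : D.M m) (y : D.M n), μ m x = μ n y ↔
    ∃ (p : ℕ) (h₁ : m ≤ p) (h₂ : n ≤ p), D.map (oeLE h₁) x = D.map (oeLE h₂) y

end Colim

/-- Let `A` be an OI-algebra over a commutative ring `K` with
colimit `𝒜 = lim A` (an Inc-algebra). If `M` is a finitely generated OI-module over
`A`, then its colimit `ℳ = lim M` — with the `𝒜`-module structure
`[a]·[q] = [A(ι_{m,k})(a)·M(ι_{n,k})(q)]` and Inc-action `τ·[q] = [M(τ·id_n)(q)]` —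
is a finitely generated Inc-module over `𝒜`: there are finitely many elements of
`ℳ` contained in no proper Inc-stable submodule. -/
theorem stmt_14 {K : Type} [CommRing K]
    (A : ℕ → Type) [∀ n, CommRing (A n)] [∀ n, Algebra K (A n)]
    (Amap : ∀ {m n : ℕ}, (Fin m ↪o Fin n) → (A m →ₐ[K] A n))
    (hAid : ∀ (n : ℕ) (a : A n), Amap (oeId n) a = a)
    (hAcomp : ∀ {m n p : ℕ} (ε : Fin m ↪o Fin n) (δ : Fin n ↪o Fin p) (a : A m),
      Amap (ε.trans δ) a = Amap δ (Amap ε a))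
    -- the colimit Inc-algebra `𝒜 = lim A`
    (𝒜 : Type) [CommRing 𝒜] [Algebra K 𝒜] (κ : ∀ n, A n →ₐ[K] 𝒜)
    (hκ : ∀ {m n : ℕ} (h : m ≤ n) (a : A m), κ n (Amap (oeLE h) a) = κ m a)
    (hκsurj : ∀ x : 𝒜, ∃ (n : ℕ) (a : A n), κ n a = x)
    (hκeq : ∀ {m n : ℕ} (a : A m) (b : A n), κ m a = κ n b ↔
      ∃ (p : ℕ) (h₁ : m ≤ p) (h₂ : n ≤ p), Amap (oeLE h₁) a = Amap (oeLE h₂) b)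
    (actA : Inc → (𝒜 →ₐ[K] 𝒜))
    (hactA : ∀ (τ : Inc) (n : ℕ) (a : A n),
      actA τ (κ n a) = κ (incWidth τ n) (Amap (incRestrict τ n) a))
    -- the OI-module `M` and its colimit `ℳ = lim M`
    (M : OIMod K A @Amap)
    (ℳ : Type) [AddCommGroup ℳ] [Module 𝒜 ℳ] (c : ColimPres M ℳ)
    (hsmul : ∀ (m n : ℕ) (a : A m) (x : M.M n),
      κ m a • c.μ n x = c.μ (max m n)
        (Amap (oeLE (le_max_left m n)) a • M.map (oeLE (le_max_right m n)) x))
    (actM : Inc → (ℳ →+ ℳ))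
    (hactM : ∀ (τ : Inc) (n : ℕ) (x : M.M n),
      actM τ (c.μ n x) = c.μ (incWidth τ n) (M.map (incRestrict τ n) x))
    -- `M` is a finitely generated OI-module
    (hfg : ∃ (k : ℕ) (w : Fin k → ℕ) (g : ∀ i, M.M (w i)),
      ∀ S : ∀ n, Submodule (A n) (M.M n),
        (∀ (m n : ℕ) (ε : Fin m ↪o Fin n) (x : M.M m), x ∈ S m → M.map ε x ∈ S n) →
        (∀ i, g i ∈ S (w i)) →
        ∀ (n : ℕ) (x : M.M n), x ∈ S n) :
    -- then `ℳ` is a finitely generated Inc-module over `𝒜`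
    ∃ (k : ℕ) (q : Fin k → ℳ),
      ∀ S : Submodule 𝒜 ℳ,
        (∀ (τ : Inc) (x : ℳ), x ∈ S → actM τ x ∈ S) →
        (∀ i, q i ∈ S) →
        ∀ x : ℳ, x ∈ S := by
  obtain ⟨k, w, g, hgen⟩ := hfg
  refine ⟨k, fun i => c.μ (w i) (g i), ?_⟩
  intro S hSinc hSq x
  obtain ⟨n, y, rfl⟩ := c.jointSurj x
  -- the preimage submodules
  let S' : ∀ n, Submodule (A n) (M.M n) := fun n =>
    { carrier := {y | c.μ n y ∈ S}
      add_mem' := fun ha hb => by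
        simp only [Set.mem_setOf_eq, map_add] at *
        exact S.add_mem ha hb
      zero_mem' := by simp only [Set.mem_setOf_eq, map_zero]; exact S.zero_mem
      smul_mem' := fun a y hy => by
        simp only [Set.mem_setOf_eq] at *
        have h1 : κ n a • c.μ n y ∈ S := S.smul_mem _ hy
        have h2 : c.μ n (a • y) = κ n a • c.μ n y := by
          calc c.μ n (a • y)
              = c.μ (max n n) (M.map (oeLE (le_max_left n n)) (a • y)) :=
                (c.compat (le_max_left n n) (a • y)).symm
            _ = c.μ (max n n) (Amap (oeLE (le_max_left n n)) a •
                  M.map (oeLE (le_max_left n n)) y) := by rw [M.map_smul]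
            _ = κ n a • c.μ n y := (hsmul n n a y).symm
        rw [h2]; exact h1 }
  have hmap : ∀ (m n : ℕ) (ε : Fin m ↪o Fin n) (x : M.M m),
      x ∈ S' m → M.map ε x ∈ S' n := by
    intro m n ε x hx
    -- extend ε to an element of Inc
    have hf : StrictMono (fun j => if h : j < m then (ε ⟨j, h⟩ : ℕ) else n + (j - m)) := by
      intro a b hab
      by_cases ha : a < m
      · by_cases hb : b < m
        · simpa [ha, hb] using (ε.strictMono (show (⟨a, ha⟩ : Fin m) < ⟨b, hb⟩ from hab))
        · simp only [ha, hb, dif_pos, dif_neg]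
          exact lt_of_lt_of_le (ε ⟨a, ha⟩).isLt (Nat.le_add_right n _)
      · have hb : ¬ b < m := fun h => ha (lt_trans hab h)
        simp only [dif_neg ha, dif_neg hb]
        omega
    let τ : Inc := ⟨_, hf⟩
    have hw : incWidth τ m ≤ n := by
      cases m with
      | zero => exact Nat.zero_le n
      | succ p =>
          show (if h : p < p + 1 then (ε ⟨p, h⟩ : ℕ) else n + (p - (p+1))) + 1 ≤ n
          rw [dif_pos (Nat.lt_succ_self p)]
          exact (ε ⟨p, Nat.lt_succ_self p⟩).isLt
    have hε : ε = (incRestrict τ m).trans (oeLE hw) := by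
      ext j
      show (ε j : ℕ) = ((oeLE hw) ((incRestrict τ m) j) : ℕ)
      have : (((incRestrict τ m) j : Fin (incWidth τ m)) : ℕ) = τ.1 j := rfl
      simp only [oeLE, Fin.castLEOrderEmb, OrderEmbedding.coe_ofStrictMono,
        Fin.coe_castLE, this]
      show (ε j : ℕ) = if h : (j : ℕ) < m then (ε ⟨j, h⟩ : ℕ) else n + ((j : ℕ) - m)
      rw [dif_pos j.isLt]
    show c.μ n (M.map ε x) ∈ S
    have key : c.μ n (M.map ε x) = actM τ (c.μ m x) := by
      rw [hε, M.map_comp, c.compat hw, ← hactM]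
    rw [key]
    exact hSinc τ _ hx
  exact hgen S' hmap hSq n y
end

section
/- Let A be an OI-algebra over a commutative ring K with colimit 𝒜 = lim A. If M is a Noetherian OI-module over A (i.e., every OI-submodule of M is finitely generated), then its colimit ℳ = lim M is a Noetherian Inc-module over 𝒜 (i.e., every Inc-submodule of ℳ is finitely generated). -/
/-- Let `A` be an OI-algebra over a commutative ring `K` with
colimit `𝒜 = lim A`. If `M` is a Noetherian OI-module over `A` (every OI-submodule
of `M` is finitely generated), then its colimit `ℳ = lim M` — with the `𝒜`-module
structure `[a]·[q] = [A(ι_{m,k})(a)·M(ι_{n,k})(q)]` and Inc-action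
`τ·[q] = [M(τ·id_n)(q)]` — is a Noetherian Inc-module over `𝒜` (every Inc-stable
submodule of `ℳ` is finitely generated as an Inc-module). -/
theorem stmt_15 {K : Type} [CommRing K]
    (A : ℕ → Type) [∀ n, CommRing (A n)] [∀ n, Algebra K (A n)]
    (Amap : ∀ {m n : ℕ}, (Fin m ↪o Fin n) → (A m →ₐ[K] A n))
    (hAid : ∀ (n : ℕ) (a : A n), Amap (oeId n) a = a)
    (hAcomp : ∀ {m n p : ℕ} (ε : Fin m ↪o Fin n) (δ : Fin n ↪o Fin p) (a : A m),
      Amap (ε.trans δ) a = Amap δ (Amap ε a))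
    -- the colimit Inc-algebra `𝒜 = lim A`
    (𝒜 : Type) [CommRing 𝒜] [Algebra K 𝒜] (κ : ∀ n, A n →ₐ[K] 𝒜)
    (hκ : ∀ {m n : ℕ} (h : m ≤ n) (a : A m), κ n (Amap (oeLE h) a) = κ m a)
    (hκsurj : ∀ x : 𝒜, ∃ (n : ℕ) (a : A n), κ n a = x)
    (hκeq : ∀ {m n : ℕ} (a : A m) (b : A n), κ m a = κ n b ↔
      ∃ (p : ℕ) (h₁ : m ≤ p) (h₂ : n ≤ p), Amap (oeLE h₁) a = Amap (oeLE h₂) b)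
    (actA : Inc → (𝒜 →ₐ[K] 𝒜))
    (hactA : ∀ (τ : Inc) (n : ℕ) (a : A n),
      actA τ (κ n a) = κ (incWidth τ n) (Amap (incRestrict τ n) a))
    -- the OI-module `M` and its colimit `ℳ = lim M`
    (M : OIMod K A @Amap)
    (ℳ : Type) [AddCommGroup ℳ] [Module 𝒜 ℳ] (c : ColimPres M ℳ)
    (hsmul : ∀ (m n : ℕ) (a : A m) (x : M.M n),
      κ m a • c.μ n x = c.μ (max m n)
        (Amap (oeLE (le_max_left m n)) a • M.map (oeLE (le_max_right m n)) x))
    (actM : Inc → (ℳ →+ ℳ))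
    (hactM : ∀ (τ : Inc) (n : ℕ) (x : M.M n),
      actM τ (c.μ n x) = c.μ (incWidth τ n) (M.map (incRestrict τ n) x))
    -- `M` is a Noetherian OI-module: every OI-submodule is finitely generated
    (hnoeth : ∀ S : ∀ n, Submodule (A n) (M.M n),
      (∀ (m n : ℕ) (ε : Fin m ↪o Fin n) (x : M.M m), x ∈ S m → M.map ε x ∈ S n) →
      ∃ (k : ℕ) (w : Fin k → ℕ) (g : ∀ i, M.M (w i)),
        (∀ i, g i ∈ S (w i)) ∧
        ∀ T : ∀ n, Submodule (A n) (M.M n),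
          (∀ (m n : ℕ) (ε : Fin m ↪o Fin n) (x : M.M m), x ∈ T m → M.map ε x ∈ T n) →
          (∀ i, g i ∈ T (w i)) →
          ∀ n, S n ≤ T n) :
    -- then `ℳ` is a Noetherian Inc-module: every Inc-stable submodule is finitely
    -- generated as an Inc-module
    ∀ 𝒮 : Submodule 𝒜 ℳ,
      (∀ (τ : Inc) (x : ℳ), x ∈ 𝒮 → actM τ x ∈ 𝒮) →
      ∃ (k : ℕ) (q : Fin k → ℳ),
        (∀ i, q i ∈ 𝒮) ∧
        ∀ 𝒯 : Submodule 𝒜 ℳ,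
          (∀ (τ : Inc) (x : ℳ), x ∈ 𝒯 → actM τ x ∈ 𝒯) →
          (∀ i, q i ∈ 𝒯) →
          𝒮 ≤ 𝒯 := by

  intro 𝒮 hstab
  -- smul compatibility at equal index
  have hsm : ∀ (n : ℕ) (a : A n) (x : M.M n), c.μ n (a • x) = κ n a • c.μ n x := by
    intro n a x
    have h := hsmul n n a x
    rw [show oeLE (le_max_left n n) = oeLE (le_max_right n n) from rfl,
      ← M.map_smul, c.compat] at h
    exact h.symm
  -- key: images under arbitrary OI-morphisms stay in an Inc-stable submodule
  have key : ∀ (𝒯 : Submodule 𝒜 ℳ), (∀ (τ : Inc) (x : ℳ), x ∈ 𝒯 → actM τ x ∈ 𝒯) →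
      ∀ (m n : ℕ) (ε : Fin m ↪o Fin n) (x : M.M m), c.μ m x ∈ 𝒯 →
        c.μ n (M.map ε x) ∈ 𝒯 := by
    intro 𝒯 hT m n ε x hx
    cases m with
    | zero =>
      have hε : ε = oeLE (Nat.zero_le n) := by
        apply DFunLike.ext
        intro j; exact absurd j.isLt (Nat.not_lt_zero _)
      rw [hε, c.compat]; exact hx
    | succ k =>
      have hmono : StrictMono (fun j => if h : j < k + 1 then (ε ⟨j, h⟩ : ℕ)
          else (ε ⟨k, Nat.lt_succ_self k⟩ : ℕ) + (j - k)) := by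
        intro a b hab
        dsimp only
        rcases lt_or_ge a (k+1) with ha | ha
        · rcases lt_or_ge b (k+1) with hb | hb
          · rw [dif_pos ha, dif_pos hb]
            exact ε.strictMono (show (⟨a, ha⟩ : Fin (k+1)) < ⟨b, hb⟩ from hab)
          · rw [dif_pos ha, dif_neg (by omega)]
            have h1 : (ε ⟨a, ha⟩ : ℕ) ≤ (ε ⟨k, Nat.lt_succ_self k⟩ : ℕ) :=
              ε.monotone (show (⟨a, ha⟩ : Fin (k+1)) ≤ ⟨k, Nat.lt_succ_self k⟩ from
                Nat.lt_succ_iff.mp ha)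
            omega
        · rw [dif_neg (by omega), dif_neg (by omega)]
          omega
      set τ : Inc := ⟨_, hmono⟩ with hτ
      have hτk : τ.1 k = (ε ⟨k, Nat.lt_succ_self k⟩ : ℕ) := by
        show (if h : k < k + 1 then (ε ⟨k, h⟩ : ℕ) else _) = _
        rw [dif_pos (Nat.lt_succ_self k)]
      have hw : incWidth τ (k+1) ≤ n := by
        show τ.1 k + 1 ≤ n
        rw [hτk]
        exact (ε ⟨k, Nat.lt_succ_self k⟩).isLt
      have hε : ε = (incRestrict τ (k+1)).trans (oeLE hw) := by
        apply DFunLike.ext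
        intro j
        apply Fin.ext
        show (ε j : ℕ) = τ.1 j.1
        show (ε j : ℕ) = if h : j.1 < k + 1 then (ε ⟨j.1, h⟩ : ℕ) else _
        rw [dif_pos j.isLt]
      rw [hε, M.map_comp, c.compat hw, ← hactM]
      exact hT τ _ hx
  -- the OI-submodule of preimages
  have mkS : ∀ (𝒯 : Submodule 𝒜 ℳ), ∃ S : ∀ n, Submodule (A n) (M.M n),
      ∀ n (x : M.M n), x ∈ S n ↔ c.μ n x ∈ 𝒯 := by
    intro 𝒯
    refine ⟨fun n =>
      { carrier := {x | c.μ n x ∈ 𝒯}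
        add_mem' := ?_
        zero_mem' := ?_
        smul_mem' := ?_ }, fun n x => Iff.rfl⟩
    · intro a b ha hb
      simp only [Set.mem_setOf_eq, map_add] at *
      exact 𝒯.add_mem ha hb
    · simp only [Set.mem_setOf_eq, map_zero]
      exact 𝒯.zero_mem
    · intro a x hx
      simp only [Set.mem_setOf_eq] at *
      rw [hsm]
      exact 𝒯.smul_mem _ hx
  obtain ⟨S, hS⟩ := mkS 𝒮
  obtain ⟨k, w, g, hg, hmin⟩ := hnoeth S (by
    intro m n ε x hx
    rw [hS] at hx ⊢
    exact key 𝒮 hstab m n ε x hx)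
  refine ⟨k, fun i => c.μ (w i) (g i), fun i => (hS _ _).mp (hg i), ?_⟩
  intro 𝒯 hTstab hq z hz
  obtain ⟨n, x, hx⟩ := c.jointSurj z
  subst hx
  obtain ⟨T, hT⟩ := mkS 𝒯
  have hle := hmin T (by
    intro m n ε x hx
    rw [hT] at hx ⊢
    exact key 𝒯 hTstab m n ε x hx) (fun i => (hT _ _).mpr (hq i))
  exact (hT n x).mp (hle n (hS n x |>.mpr hz))
end

section
/- Let K be a Noetherian commutative ring and c ≥ 1. Then every finitely generated free Inc-module over the Inc-algebra 𝒫 = K[x_{i,j} : i ∈ [c], j ∈ ℕ] is Noetherian, i.e., every Inc-submodule of a finite direct sum ⊕_{i=1}^r F^{Inc,d_i} is generated by a finite subset as an Inc-module. -/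
/-- The polynomial ring `𝒫 = K[x_{i,j} : i ∈ [c], j ∈ ℕ]` in `c` rows of infinitely
many variables. -/
abbrev PInf (K : Type) [CommRing K] (c : ℕ) := MvPolynomial (Fin c × ℕ) K

/-- The Inc-algebra action of `τ ∈ Inc` on `𝒫`, induced by `τ·x_{i,j} = x_{i,τ(j)}`. -/
noncomputable def incP (K : Type) [CommRing K] (c : ℕ) (τ : Inc) :
    PInf K c →ₐ[K] PInf K c :=
  MvPolynomial.rename (fun p => (p.1, τ.1 p.2))

/-- The finitely generated free Inc-module `ℱ = ⊕_{i=1}^r F^{Inc,d_i}` over `𝒫`: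
the free `𝒫`-module with basis `ε_{π,i}` indexed by pairs `(i, π)` with
`π ∈ Hom_OI([d_i], ℕ)`. -/
abbrev FreeIncP (K : Type) [CommRing K] (c : ℕ) {r : ℕ} (d : Fin r → ℕ) : Type :=
  (Σ i : Fin r, OIHomNat (d i)) →₀ PInf K c

/-- The Inc-action on the free Inc-module `ℱ`, induced by
`τ·(a ε_{π,i}) = (τ·a) ε_{τ∘π,i}`. -/
noncomputable def freeIncPAct (K : Type) [CommRing K] (c : ℕ) {r : ℕ}
    {d : Fin r → ℕ} (τ : Inc) (f : FreeIncP K c d) : FreeIncP K c d :=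
  f.sum fun p a => Finsupp.single ⟨p.1, incAct τ p.2⟩ (incP K c τ a)

namespace S16

open MvPolynomial Finsupp

variable {K : Type} [CommRing K] {c : ℕ} {r : ℕ} {d : Fin r → ℕ}

/-- variable renaming map -/
def vmap (c : ℕ) (τ : Inc) : Fin c × ℕ → Fin c × ℕ := fun p => (p.1, τ.1 p.2)

lemma vmap_injective (τ : Inc) : Function.Injective (vmap c τ) := by
  rintro ⟨t, j⟩ ⟨t', j'⟩ h
  simp only [vmap, Prod.mk.injEq] at h
  exact Prod.ext h.1 (τ.2.injective h.2)

lemma incP_apply (τ : Inc) (q : PInf K c) :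
    incP K c τ q = rename (vmap c τ) q := rfl

lemma vmap_comp (τ τ' : Inc) : vmap c τ ∘ vmap c τ' = vmap c (τ * τ') := rfl

lemma vmap_one : vmap c 1 = id := rfl

lemma incP_incP (τ τ' : Inc) (q : PInf K c) :
    incP K c τ (incP K c τ' q) = incP K c (τ * τ') q := by
  simp only [incP_apply, rename_rename, vmap_comp]

lemma incP_one (q : PInf K c) : incP K c 1 q = q := by
  simp only [incP_apply, vmap_one, rename_id, AlgHom.id_apply]

/-- index renaming map -/
def gmap (d : Fin r → ℕ) (τ : Inc) : (Σ i : Fin r, OIHomNat (d i)) → Σ i : Fin r, OIHomNat (d i) :=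
  fun σ => ⟨σ.1, incAct τ σ.2⟩

lemma incAct_injective {n : ℕ} (τ : Inc) : Function.Injective (incAct (d := n) τ) := by
  intro π π' h
  apply Subtype.ext
  funext k
  have : τ.1 (π.1 k) = τ.1 (π'.1 k) := congrFun (congrArg Subtype.val h) k
  exact τ.2.injective this

lemma gmap_injective (τ : Inc) : Function.Injective (gmap d τ) := by
  rintro ⟨i, π⟩ ⟨i', π'⟩ h
  have h1 : i = i' := congrArg Sigma.fst h
  subst h1
  simp only [gmap] at h
  have h2 : incAct τ π = incAct τ π' := by injection h
  rw [incAct_injective τ h2]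

lemma gmap_gmap (τ τ' : Inc) (σ : Σ i : Fin r, OIHomNat (d i)) :
    gmap d τ (gmap d τ' σ) = gmap d (τ * τ') σ := rfl

lemma gmap_one (σ : Σ i : Fin r, OIHomNat (d i)) : gmap d 1 σ = σ := rfl

lemma act_eq (τ : Inc) (f : FreeIncP K c d) :
    freeIncPAct K c τ f =
      Finsupp.mapDomain (gmap d τ) (Finsupp.mapRange (incP K c τ) (map_zero _) f) := by
  rw [Finsupp.mapDomain, Finsupp.sum_mapRange_index (fun a => by simp)]
  rfl

lemma act_apply_gmap (τ : Inc) (f : FreeIncP K c d) (σ : Σ i : Fin r, OIHomNat (d i)) :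
    freeIncPAct K c τ f (gmap d τ σ) = incP K c τ (f σ) := by
  rw [act_eq, Finsupp.mapDomain_apply (gmap_injective τ), Finsupp.mapRange_apply]

lemma act_apply_notin (τ : Inc) (f : FreeIncP K c d) (σ' : Σ i : Fin r, OIHomNat (d i))
    (h : σ' ∉ Set.range (gmap d τ)) : freeIncPAct K c τ f σ' = 0 := by
  rw [act_eq, Finsupp.mapDomain_notin_range _ _ h]

lemma act_zero (τ : Inc) : freeIncPAct K c (d := d) τ 0 = 0 := by
  rw [act_eq]; simp

lemma act_add (τ : Inc) (f g : FreeIncP K c d) :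
    freeIncPAct K c τ (f + g) = freeIncPAct K c τ f + freeIncPAct K c τ g := by
  rw [act_eq, act_eq, act_eq, Finsupp.mapRange_add (map_add _), Finsupp.mapDomain_add]

lemma act_smul (τ : Inc) (p : PInf K c) (f : FreeIncP K c d) :
    freeIncPAct K c τ (p • f) = incP K c τ p • freeIncPAct K c τ f := by
  ext σ'
  by_cases h : σ' ∈ Set.range (gmap d τ)
  · obtain ⟨σ, rfl⟩ := h
    rw [act_apply_gmap, Finsupp.smul_apply, Finsupp.smul_apply, act_apply_gmap,
      smul_eq_mul, smul_eq_mul, map_mul]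
  · rw [act_apply_notin _ _ _ h, Finsupp.smul_apply, act_apply_notin _ _ _ h,
      smul_eq_mul, mul_zero]

lemma act_act (τ τ' : Inc) (f : FreeIncP K c d) :
    freeIncPAct K c τ (freeIncPAct K c τ' f) = freeIncPAct K c (τ * τ') f := by
  ext σ'
  by_cases h : σ' ∈ Set.range (gmap d τ)
  · obtain ⟨σ₁, rfl⟩ := h
    rw [act_apply_gmap]
    by_cases h' : σ₁ ∈ Set.range (gmap d τ')
    · obtain ⟨σ₀, rfl⟩ := h'
      rw [act_apply_gmap, incP_incP, gmap_gmap, act_apply_gmap]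
    · rw [act_apply_notin _ _ _ h', map_zero, act_apply_notin]
      rintro ⟨σ₀, hσ₀⟩
      rw [← gmap_gmap] at hσ₀
      exact h' ⟨σ₀, gmap_injective τ hσ₀⟩
  · rw [act_apply_notin _ _ _ h, act_apply_notin]
    rintro ⟨σ₀, hσ₀⟩
    exact h ⟨gmap d τ' σ₀, by rw [gmap_gmap, hσ₀]⟩

lemma act_one (f : FreeIncP K c d) : freeIncPAct K c 1 f = f := by
  apply Finsupp.ext
  intro σ'
  exact (act_apply_gmap 1 f σ').trans (incP_one _)

/-- The Inc-submodule generated by a set. -/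
noncomputable def IncSpan (K : Type) [CommRing K] (c : ℕ) {r : ℕ} (d : Fin r → ℕ) (A : Set (FreeIncP K c d)) :
    Submodule (PInf K c) (FreeIncP K c d) :=
  Submodule.span (PInf K c) (⋃ τ : Inc, freeIncPAct K c τ '' A)

lemma subset_incSpan (A : Set (FreeIncP K c d)) : A ⊆ IncSpan K c d A := by
  intro a ha
  apply Submodule.subset_span
  exact Set.mem_iUnion.2 ⟨1, ⟨a, ha, act_one a⟩⟩

lemma incSpan_le {A : Set (FreeIncP K c d)} {T : Submodule (PInf K c) (FreeIncP K c d)}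
    (hT : ∀ (τ : Inc) (x : FreeIncP K c d), x ∈ T → freeIncPAct K c τ x ∈ T)
    (hA : A ⊆ T) : IncSpan K c d A ≤ T := by
  apply Submodule.span_le.2
  rintro x hx
  obtain ⟨τ, a, ha, rfl⟩ := by simpa using hx
  exact hT τ a (hA ha)

lemma incSpan_stable {A : Set (FreeIncP K c d)} (τ : Inc) (x : FreeIncP K c d)
    (hx : x ∈ IncSpan K c d A) : freeIncPAct K c τ x ∈ IncSpan K c d A := by
  induction hx using Submodule.span_induction with
  | mem y hy =>
      obtain ⟨τ', a, ha, rfl⟩ := by simpa using hy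
      rw [act_act]
      exact Submodule.subset_span (Set.mem_iUnion.2 ⟨τ * τ', ⟨a, ha, rfl⟩⟩)
  | zero => rw [act_zero]; exact Submodule.zero_mem _
  | add y z _ _ hy hz => rw [act_add]; exact Submodule.add_mem _ hy hz
  | smul p y _ hy => rw [act_smul]; exact Submodule.smul_mem _ _ hy

end S16
namespace S16

open MvPolynomial Finsupp

variable {K : Type} [CommRing K] {c : ℕ} {r : ℕ} {d : Fin r → ℕ}

/-- the set of "monomials" of the free module: a basis index together with an exponent vector -/
abbrev MonE (c : ℕ) {r : ℕ} (d : Fin r → ℕ) : Type :=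
  (Σ i : Fin r, OIHomNat (d i)) × ((Fin c × ℕ) →₀ ℕ)

/-- coefficient of a monomial -/
noncomputable def coeffM (f : FreeIncP K c d) (e : MonE c d) : K := coeff e.2 (f e.1)

/-- action of `(τ, m)` on monomials -/
noncomputable def opE (τ : Inc) (m : (Fin c × ℕ) →₀ ℕ) (e : MonE c d) : MonE c d :=
  (gmap d τ e.1, m + Finsupp.mapDomain (vmap c τ) e.2)

/-- action of `(τ, m, b)` on the free module -/
noncomputable def opF (K : Type) [CommRing K] (c : ℕ) {r : ℕ} (d : Fin r → ℕ)
    (τ : Inc) (m : (Fin c × ℕ) →₀ ℕ) (b : K) (f : FreeIncP K c d) : FreeIncP K c d :=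
  (monomial m b : PInf K c) • freeIncPAct K c τ f

lemma opE_opE (τ τ' : Inc) (m m' : (Fin c × ℕ) →₀ ℕ) (e : MonE c d) :
    opE τ' m' (opE τ m e) = opE (τ' * τ) (m' + Finsupp.mapDomain (vmap c τ') m) e := by
  unfold opE
  refine Prod.ext (gmap_gmap _ _ _) ?_
  show m' + Finsupp.mapDomain (vmap c τ') (m + Finsupp.mapDomain (vmap c τ) e.2) = _
  rw [Finsupp.mapDomain_add, ← add_assoc]
  congr 1
  rw [← Finsupp.mapDomain_comp, vmap_comp]

lemma opE_one_zero (e : MonE c d) : opE (d := d) 1 0 e = e := by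
  unfold opE
  rw [gmap_one, vmap_one, Finsupp.mapDomain_id, zero_add]

lemma coeffM_opF (τ : Inc) (m : (Fin c × ℕ) →₀ ℕ) (b : K) (f : FreeIncP K c d) (e : MonE c d) :
    coeffM (opF K c d τ m b f) (opE τ m e) = b * coeffM f e := by
  unfold coeffM opF opE
  rw [Finsupp.smul_apply, act_apply_gmap, smul_eq_mul, mul_comm, coeff_mul_monomial']
  show (if m ≤ m + mapDomain (vmap c τ) e.2 then
      coeff (m + mapDomain (vmap c τ) e.2 - m) ((incP K c τ) (f e.1)) * b else 0) = _
  rw [if_pos (self_le_add_right m _), add_tsub_cancel_left, incP_apply,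
    coeff_rename_mapDomain _ (vmap_injective τ), mul_comm]

lemma mem_suppM_iff {f : FreeIncP K c d} {e : MonE c d} :
    e ∈ {e : MonE c d | coeffM f e ≠ 0} ↔ coeffM f e ≠ 0 := Iff.rfl

/-- support of f as a set of monomials -/
def suppM (f : FreeIncP K c d) : Set (MonE c d) := {e | coeffM f e ≠ 0}

lemma suppM_finite (f : FreeIncP K c d) : (suppM f).Finite := by
  apply Set.Finite.subset (Set.Finite.biUnion (f.support.finite_toSet)
    (fun σ _ => Set.Finite.image (fun u => ((σ, u) : MonE c d)) (f σ).support.finite_toSet))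
  rintro ⟨σ, u⟩ he
  have h1 : f σ ≠ 0 := fun h => he (by simp [coeffM, h])
  exact Set.mem_biUnion (Finsupp.mem_support_iff.2 h1)
    ⟨u, MvPolynomial.mem_support_iff.2 he, rfl⟩

lemma suppM_nonempty {f : FreeIncP K c d} (hf : f ≠ 0) : (suppM f).Nonempty := by
  obtain ⟨σ, hσ⟩ : ∃ σ, f σ ≠ 0 := by
    by_contra h
    push_neg at h
    exact hf (Finsupp.ext h)
  obtain ⟨u, hu⟩ := MvPolynomial.ne_zero_iff.1 hσ
  exact ⟨(σ, u), hu⟩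

lemma suppM_opF (τ : Inc) (m : (Fin c × ℕ) →₀ ℕ) (b : K) (f : FreeIncP K c d) :
    suppM (opF K c d τ m b f) ⊆ (opE τ m) '' suppM f := by
  rintro ⟨σ', v⟩ he
  have hne : coeff v ((monomial m b : PInf K c) * freeIncPAct K c τ f σ') ≠ 0 := by
    simpa [suppM, coeffM, opF, Finsupp.smul_apply] using he
  by_cases h : σ' ∈ Set.range (gmap d τ)
  · obtain ⟨σ, rfl⟩ := h
    rw [act_apply_gmap, mul_comm, coeff_mul_monomial'] at hne
    by_cases hm : m ≤ v
    · rw [if_pos hm] at hne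
      have h2 : coeff (v - m) (rename (vmap c τ) (f σ)) ≠ 0 := by
        intro h0; rw [incP_apply, h0, zero_mul] at hne; exact hne rfl
      obtain ⟨u, hu1, hu2⟩ := coeff_rename_ne_zero _ _ _ h2
      refine ⟨(σ, u), hu2, ?_⟩
      unfold opE
      refine Prod.ext rfl ?_
      show m + Finsupp.mapDomain (vmap c τ) u = v
      rw [hu1, add_tsub_cancel_of_le hm]
    · rw [if_neg hm] at hne; exact absurd rfl hne
  · rw [act_apply_notin _ _ _ h, mul_zero] at hne
    exact absurd rfl hne

lemma coeffM_sub (f g : FreeIncP K c d) (e : MonE c d) :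
    coeffM (f - g) e = coeffM f e - coeffM g e := by
  unfold coeffM; rw [Finsupp.sub_apply, coeff_sub]

lemma coeffM_sum {α : Type*} (s : Finset α) (g : α → FreeIncP K c d) (e : MonE c d) :
    coeffM (∑ j ∈ s, g j) e = ∑ j ∈ s, coeffM (g j) e := by
  unfold coeffM; rw [Finsupp.finset_sum_apply, MvPolynomial.coeff_sum]

end S16
namespace S16

open MvPolynomial Finsupp

variable {K : Type} [CommRing K] {c : ℕ} {r : ℕ} {d : Fin r → ℕ}

/-! ### Encoding monomials into `ℕ →₀ ℕ` and the key order -/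

abbrev VL : Type := Lex (ℕᵒᵈ →₀ ℕ)

/-- dualized lex encoding -/
def dN (x : ℕ →₀ ℕ) : VL := toLex (Finsupp.equivMapDomain OrderDual.toDual x)

lemma dN_apply (x : ℕ →₀ ℕ) (k : ℕ) : ofLex (dN x) (OrderDual.toDual k) = x k := by
  simp [dN, Finsupp.equivMapDomain_apply]

lemma dN_add (x y : ℕ →₀ ℕ) : dN (x + y) = dN x + dN y := by
  unfold dN
  rw [Finsupp.equivMapDomain_eq_mapDomain, Finsupp.equivMapDomain_eq_mapDomain,
    Finsupp.equivMapDomain_eq_mapDomain, Finsupp.mapDomain_add]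
  rfl

lemma dN_injective : Function.Injective dN := by
  intro x y h
  ext k
  rw [← dN_apply x k, ← dN_apply y k, h]

lemma dN_lt_iff {u v : ℕ →₀ ℕ} :
    dN u < dN v ↔ ∃ j : ℕ, (∀ k, j < k → u k = v k) ∧ u j < v j := by
  show Finsupp.Lex (· < ·) (· < ·) _ _ ↔ _
  rw [Finsupp.lex_def]
  constructor
  · rintro ⟨j, h1, h2⟩
    refine ⟨OrderDual.ofDual j, fun k hk => ?_, ?_⟩
    · have := h1 (OrderDual.toDual k) (by exact OrderDual.toDual_lt_toDual.2 hk)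
      simpa [dN, Finsupp.equivMapDomain_apply] using this
    · simpa [dN, Finsupp.equivMapDomain_apply] using h2
  · rintro ⟨j, h1, h2⟩
    refine ⟨OrderDual.toDual j, fun k hk => ?_, ?_⟩
    · have hk' : j < OrderDual.ofDual k := OrderDual.toDual_lt_toDual.1 hk
      simpa [dN, Finsupp.equivMapDomain_apply] using h1 (OrderDual.ofDual k) hk'
    · simpa [dN, Finsupp.equivMapDomain_apply] using h2

lemma dN_mapDomain_lt {g : ℕ → ℕ} (hg : StrictMono g) {u v : ℕ →₀ ℕ}
    (h : dN u < dN v) : dN (Finsupp.mapDomain g u) < dN (Finsupp.mapDomain g v) := by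
  rw [dN_lt_iff] at h ⊢
  obtain ⟨j, h1, h2⟩ := h
  refine ⟨g j, fun k hk => ?_, ?_⟩
  · by_cases hkr : k ∈ Set.range g
    · obtain ⟨k0, rfl⟩ := hkr
      rw [Finsupp.mapDomain_apply hg.injective, Finsupp.mapDomain_apply hg.injective,
        h1 k0 (hg.lt_iff_lt.1 hk)]
    · rw [Finsupp.mapDomain_notin_range _ _ hkr, Finsupp.mapDomain_notin_range _ _ hkr]
  · rw [Finsupp.mapDomain_apply hg.injective, Finsupp.mapDomain_apply hg.injective]
    exact h2

/-- variable encoding -/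
def emb (c : ℕ) : Fin c × ℕ → ℕ := fun p => (c + 1) * p.2 + p.1

lemma emb_injective : Function.Injective (emb c) := by
  rintro ⟨t, j⟩ ⟨t', j'⟩ h
  unfold emb at h
  simp only at h
  have ht : (t : ℕ) < c + 1 := t.2.trans (Nat.lt_succ_self c)
  have ht' : (t' : ℕ) < c + 1 := t'.2.trans (Nat.lt_succ_self c)
  have h1 : (t : ℕ) = t' := by
    have := congrArg (· % (c+1)) h
    simpa [Nat.mul_add_mod, Nat.mod_eq_of_lt ht, Nat.mod_eq_of_lt ht'] using this
  have h2 : j = j' := by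
    have := congrArg (· / (c+1)) h
    simpa [Nat.mul_add_div (Nat.succ_pos c), Nat.div_eq_of_lt ht, Nat.div_eq_of_lt ht'] using this
  exact Prod.ext (Fin.ext h1) h2

lemma emb_ne_mark (p : Fin c × ℕ) (a : ℕ) : emb c p ≠ (c + 1) * a + c := by
  intro h
  have ht : (p.1 : ℕ) < c + 1 := p.1.2.trans (Nat.lt_succ_self c)
  have := congrArg (· % (c+1)) h
  simp only [emb, Nat.mul_add_mod, Nat.mod_eq_of_lt ht,
    Nat.mod_eq_of_lt (Nat.lt_succ_self c)] at this
  exact absurd this (Nat.ne_of_lt p.1.2)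

/-- coordinate action of `τ` -/
def Gfun (c : ℕ) (τ : Inc) : ℕ → ℕ := fun v => (c + 1) * τ.1 (v / (c + 1)) + v % (c + 1)

lemma Gfun_strictMono (τ : Inc) : StrictMono (Gfun c τ) := by
  intro v v' h
  unfold Gfun
  have hq : v / (c+1) ≤ v' / (c+1) := Nat.div_le_div_right h.le
  rcases eq_or_lt_of_le hq with hq' | hq'
  · have hv := Nat.div_add_mod v (c+1)
    have hv' := Nat.div_add_mod v' (c+1)
    rw [← hq'] at hv'
    have hs : v % (c+1) < v' % (c+1) := by omega
    rw [← hq']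
    exact Nat.add_lt_add_left hs _
  · have h1 : τ.1 (v / (c+1)) + 1 ≤ τ.1 (v' / (c+1)) := τ.2 hq'
    have h2 : v % (c+1) < c + 1 := Nat.mod_lt _ (Nat.succ_pos c)
    calc (c+1) * τ.1 (v / (c+1)) + v % (c+1)
        < (c+1) * (τ.1 (v / (c+1)) + 1) := by rw [Nat.mul_succ]; omega
      _ ≤ (c+1) * τ.1 (v' / (c+1)) := Nat.mul_le_mul_left _ h1
      _ ≤ _ := Nat.le_add_right _ _

lemma Gfun_emb (τ : Inc) (p : Fin c × ℕ) : Gfun c τ (emb c p) = emb c (vmap c τ p) := by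
  unfold Gfun emb vmap
  have ht : (p.1 : ℕ) < c + 1 := p.1.2.trans (Nat.lt_succ_self c)
  simp [Nat.mul_add_mod, Nat.mul_add_div (Nat.succ_pos c), Nat.mod_eq_of_lt ht,
    Nat.div_eq_of_lt ht]

lemma Gfun_mark (τ : Inc) (a : ℕ) : Gfun c τ ((c + 1) * a + c) = (c + 1) * τ.1 a + c := by
  unfold Gfun
  simp [Nat.mul_add_mod, Nat.mul_add_div (Nat.succ_pos c), Nat.mod_eq_of_lt (Nat.lt_succ_self c),
    Nat.div_eq_of_lt (Nat.lt_succ_self c)]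

/-- the marks part of the encoding -/
noncomputable def marksF (c : ℕ) {r : ℕ} {d : Fin r → ℕ} (σ : Σ i : Fin r, OIHomNat (d i)) :
    ℕ →₀ ℕ :=
  ∑ k : Fin (d σ.1), Finsupp.single ((c + 1) * σ.2.1 k + c) ((k : ℕ) + 1)

lemma marksF_apply_ne (σ : Σ i : Fin r, OIHomNat (d i)) (y : ℕ)
    (hy : ∀ k : Fin (d σ.1), y ≠ (c + 1) * σ.2.1 k + c) : marksF c σ y = 0 := by
  unfold marksF
  rw [Finsupp.finset_sum_apply]
  exact Finset.sum_eq_zero fun k _ => by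
    rw [Finsupp.single_apply, if_neg (fun h => hy k (by rw [h]))]

lemma marksF_apply_eq (σ : Σ i : Fin r, OIHomNat (d i)) (k : Fin (d σ.1)) :
    marksF c σ ((c + 1) * σ.2.1 k + c) = (k : ℕ) + 1 := by
  unfold marksF
  rw [Finsupp.finset_sum_apply]
  rw [Finset.sum_eq_single k]
  · rw [Finsupp.single_apply, if_pos rfl]
  · intro k' _ hk'
    rw [Finsupp.single_apply, if_neg]
    intro h
    have := Nat.eq_of_mul_eq_mul_left (show 0 < c + 1 by omega) (by omega : (c+1) * σ.2.1 k' = (c+1) * σ.2.1 k)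
    exact hk' (σ.2.2.injective this)
  · intro h
    exact absurd (Finset.mem_univ k) h

lemma marksF_gmap (τ : Inc) (σ : Σ i : Fin r, OIHomNat (d i)) :
    marksF c (gmap d τ σ) = Finsupp.mapDomain (Gfun c τ) (marksF c σ) := by
  unfold marksF
  rw [← Finsupp.mapDomain.addMonoidHom_apply, map_sum]
  apply Finset.sum_congr rfl
  intro k _
  rw [Finsupp.mapDomain.addMonoidHom_apply, Finsupp.mapDomain_single, Gfun_mark]
  rfl

/-- full encoding of a monomial -/
noncomputable def Ncode (e : MonE c d) : ℕ →₀ ℕ :=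
  Finsupp.mapDomain (emb c) e.2 + marksF c e.1

lemma Ncode_opE (τ : Inc) (m : (Fin c × ℕ) →₀ ℕ) (e : MonE c d) :
    Ncode (opE τ m e) =
      Finsupp.mapDomain (emb c) m + Finsupp.mapDomain (Gfun c τ) (Ncode e) := by
  unfold Ncode opE
  show Finsupp.mapDomain (emb c) (m + Finsupp.mapDomain (vmap c τ) e.2) + marksF c (gmap d τ e.1) = _
  rw [Finsupp.mapDomain_add, marksF_gmap, Finsupp.mapDomain_add (f := Gfun c τ), add_assoc]
  congr 2
  rw [← Finsupp.mapDomain_comp, ← Finsupp.mapDomain_comp]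
  congr 1
  funext p
  exact (Gfun_emb τ p).symm

/-- the key (a well-ordered monomial order compatible with all operations) -/
noncomputable def keyM (e : MonE c d) : Lex ((Fin r) × VL) := toLex (e.1.1, dN (Ncode e))

lemma Ncode_apply_emb (e : MonE c d) (p : Fin c × ℕ) : Ncode e (emb c p) = e.2 p := by
  unfold Ncode
  rw [Finsupp.add_apply, Finsupp.mapDomain_apply emb_injective,
    marksF_apply_ne _ _ (fun k => emb_ne_mark p _), add_zero]

lemma Ncode_apply_mark (e : MonE c d) (k : Fin (d e.1.1)) :
    Ncode e ((c + 1) * e.1.2.1 k + c) = (k : ℕ) + 1 := by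
  unfold Ncode
  rw [Finsupp.add_apply, Finsupp.mapDomain_notin_range, marksF_apply_eq, zero_add]
  rintro ⟨p, hp⟩
  exact emb_ne_mark p _ hp

lemma keyM_fst (e : MonE c d) : (ofLex (keyM e)).1 = e.1.1 := rfl

lemma keyM_injective : Function.Injective (keyM (c := c) (d := d)) := by
  rintro ⟨⟨i, π⟩, u⟩ ⟨⟨i', π'⟩, u'⟩ h
  unfold keyM at h
  have h' := toLex.injective h
  have hi : i = i' := congrArg Prod.fst h'
  subst hi
  have hN : Ncode ((⟨⟨i, π⟩, u⟩ : MonE c d)) = Ncode ((⟨⟨i, π'⟩, u'⟩ : MonE c d)) :=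
    dN_injective (congrArg Prod.snd h')
  have hu : u = u' := by
    ext p
    rw [← Ncode_apply_emb ((⟨⟨i, π⟩, u⟩ : MonE c d)) p,
      ← Ncode_apply_emb ((⟨⟨i, π'⟩, u'⟩ : MonE c d)) p, hN]
  have hπ : π = π' := by
    apply Subtype.ext
    funext k
    have h1 : Ncode ((⟨⟨i, π'⟩, u'⟩ : MonE c d)) ((c+1) * π.1 k + c) = (k : ℕ) + 1 := by
      rw [← hN]
      exact Ncode_apply_mark (⟨⟨i, π⟩, u⟩ : MonE c d) k
    have h2 : marksF c (⟨i, π'⟩ : Σ i : Fin r, OIHomNat (d i)) ((c+1) * π.1 k + c)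
        = (k : ℕ) + 1 := by
      unfold Ncode at h1
      rwa [Finsupp.add_apply, Finsupp.mapDomain_notin_range _ _
        (by rintro ⟨p, hp⟩; exact emb_ne_mark p _ hp), zero_add] at h1
    have h3 : ∃ k' : Fin (d i), (c+1) * π.1 k + c = (c+1) * π'.1 k' + c := by
      by_contra hcon
      push_neg at hcon
      rw [marksF_apply_ne _ _ (fun k' => hcon k')] at h2
      exact absurd h2.symm (Nat.succ_ne_zero _)
    obtain ⟨k', hk'⟩ := h3
    have h4 : marksF c (⟨i, π'⟩ : Σ i : Fin r, OIHomNat (d i)) ((c+1) * π'.1 k' + c)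
        = (k' : ℕ) + 1 := marksF_apply_eq (⟨i, π'⟩ : Σ i : Fin r, OIHomNat (d i)) k'
    rw [hk', h4] at h2
    have hkk : k' = k := Fin.ext (by omega)
    rw [hkk] at hk'
    exact Nat.eq_of_mul_eq_mul_left (show 0 < c + 1 by omega)
      (by omega : (c+1) * π.1 k = (c+1) * π'.1 k)
  subst hu
  subst hπ
  rfl

lemma keyM_opE_lt (τ : Inc) (m : (Fin c × ℕ) →₀ ℕ) {e e' : MonE c d}
    (h : keyM e < keyM e') : keyM (opE τ m e) < keyM (opE τ m e') := by
  unfold keyM at h ⊢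
  rw [Prod.Lex.lt_iff] at h ⊢
  rcases h with h | ⟨h1, h2⟩
  · exact Or.inl h
  · refine Or.inr ⟨h1, ?_⟩
    show dN (Ncode (opE τ m e)) < dN (Ncode (opE τ m e'))
    rw [Ncode_opE, Ncode_opE, dN_add, dN_add]
    exact add_lt_add_right (dN_mapDomain_lt (Gfun_strictMono τ) h2) _

lemma keyM_opE_le (τ : Inc) (m : (Fin c × ℕ) →₀ ℕ) {e e' : MonE c d}
    (h : keyM e ≤ keyM e') : keyM (opE τ m e) ≤ keyM (opE τ m e') := by
  rcases eq_or_lt_of_le h with h' | h'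
  · rw [keyM_injective h']
  · exact (keyM_opE_lt τ m h').le

end S16
namespace S16

open MvPolynomial Finsupp

variable {K : Type} [CommRing K] {c : ℕ} {r : ℕ} {d : Fin r → ℕ}

/-- the Inc-divisibility relation on monomials -/
def RM (c : ℕ) {r : ℕ} (d : Fin r → ℕ) : MonE c d → MonE c d → Prop :=
  fun e e' => ∃ τ m, opE τ m e = e'

instance : IsRefl (MonE c d) (RM c d) := ⟨fun e => ⟨1, 0, opE_one_zero e⟩⟩

instance : IsTrans (MonE c d) (RM c d) :=
  ⟨fun _ _ _ ⟨τ, m, h1⟩ ⟨τ', m', h2⟩ =>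
    ⟨τ' * τ, m' + Finsupp.mapDomain (vmap c τ') m, by rw [← opE_opE, h1, h2]⟩⟩

instance : IsPreorder (MonE c d) (RM c d) where

/-- length of the word encoding -/
def lenW {r : ℕ} {d : Fin r → ℕ} (i : Fin r) (π : OIHomNat (d i)) (u : (Fin c × ℕ) →₀ ℕ) : ℕ :=
  (u.support.sup fun p => p.2 + 1) ⊔ (Finset.univ.sup fun k : Fin (d i) => π.1 k + 1)

lemma lt_lenW_pi (i : Fin r) (π : OIHomNat (d i)) (u : (Fin c × ℕ) →₀ ℕ) (k : Fin (d i)) :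
    π.1 k < lenW (c := c) i π u := by
  unfold lenW
  have h1 : π.1 k + 1 ≤ Finset.univ.sup (fun k : Fin (d i) => π.1 k + 1) :=
    Finset.le_sup (f := fun k : Fin (d i) => π.1 k + 1) (Finset.mem_univ k)
  have h2 := le_sup_right (a := u.support.sup fun p : Fin c × ℕ => p.2 + 1)
    (b := Finset.univ.sup fun k : Fin (d i) => π.1 k + 1)
  exact Nat.lt_of_lt_of_le (Nat.lt_succ_self _) (le_trans h1 h2)

lemma u_zero_of_ge (i : Fin r) (π : OIHomNat (d i)) (u : (Fin c × ℕ) →₀ ℕ) (t : Fin c) (j : ℕ)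
    (hj : lenW (c := c) i π u ≤ j) : u (t, j) = 0 := by
  by_contra h
  have hm : (t, j) ∈ u.support := Finsupp.mem_support_iff.2 h
  have h1 : j + 1 ≤ u.support.sup (fun p : Fin c × ℕ => p.2 + 1) :=
    Finset.le_sup (f := fun p : Fin c × ℕ => p.2 + 1) hm
  have h2 := le_sup_left (a := u.support.sup fun p : Fin c × ℕ => p.2 + 1)
    (b := Finset.univ.sup fun k : Fin (d i) => π.1 k + 1)
  unfold lenW at hj
  omega

/-- the letters of the word encoding -/
def letterW {r : ℕ} {d : Fin r → ℕ} (i : Fin r) (π : OIHomNat (d i)) (u : (Fin c × ℕ) →₀ ℕ)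
    (j : ℕ) : Fin (c + d i) → ℕ :=
  Fin.addCases (fun t => u (t, j)) (fun k => if π.1 k = j then 1 else 0)

/-- the word encoding -/
def wordW {r : ℕ} {d : Fin r → ℕ} (i : Fin r) (π : OIHomNat (d i)) (u : (Fin c × ℕ) →₀ ℕ) :
    List (Fin (c + d i) → ℕ) :=
  (List.range (lenW i π u)).map (letterW i π u)

lemma sfa_decode {α : Type*} {rr : α → α → Prop} {l₁ l₂ : List α}
    (h : List.SublistForall₂ rr l₁ l₂) :
    ∃ φ : ℕ → ℕ, StrictMono φ ∧
      ∀ j, (hj : j < l₁.length) → ∃ hj2 : φ j < l₂.length, rr (l₁[j]'hj) (l₂[φ j]'hj2) := by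
  induction h with
  | nil => exact ⟨id, strictMono_id, fun j hj => absurd hj (by simp)⟩
  | @cons a b l₁ l₂ hab h ih =>
      obtain ⟨φ, hφ, hspec⟩ := ih
      refine ⟨fun j => match j with | 0 => 0 | j+1 => φ j + 1, ?_, ?_⟩
      · apply strictMono_nat_of_lt_succ
        intro j
        cases j with
        | zero => simp
        | succ j => exact Nat.succ_lt_succ (hφ (Nat.lt_succ_self j))
      · intro j hj
        cases j with
        | zero => exact ⟨by simp, by simpa using hab⟩
        | succ j =>
            obtain ⟨h2, hr⟩ := hspec j (by simpa using hj)
            exact ⟨by simpa using h2, by simpa using hr⟩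
  | @cons_right a l₁ l₂ h ih =>
      obtain ⟨φ, hφ, hspec⟩ := ih
      refine ⟨fun j => φ j + 1, fun x y hxy => Nat.succ_lt_succ (hφ hxy), ?_⟩
      intro j hj
      obtain ⟨h2, hr⟩ := hspec j hj
      exact ⟨by simpa using h2, by simpa using hr⟩

lemma embed_RM {i : Fin r} {πa πb : OIHomNat (d i)} {ua ub : (Fin c × ℕ) →₀ ℕ}
    (h : List.SublistForall₂ (· ≤ ·) (wordW i πa ua) (wordW i πb ub)) :
    RM c d (⟨i, πa⟩, ua) (⟨i, πb⟩, ub) := by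
  obtain ⟨φ, hφ, hspec⟩ := sfa_decode h
  have hspec' : ∀ j, j < lenW (c := c) i πa ua →
      letterW i πa ua j ≤ letterW i πb ub (φ j) := by
    intro j hj
    obtain ⟨h2, hr⟩ := hspec j (by simpa [wordW] using hj)
    have e1 : φ j < lenW (c := c) i πb ub := by simpa [wordW] using h2
    simpa [wordW] using hr
  set τ : Inc := ⟨φ, hφ⟩ with hτ
  have hmark : ∀ k : Fin (d i), φ (πa.1 k) = πb.1 k := by
    intro k
    have hj := lt_lenW_pi (c := c) i πa ua k
    have hr := hspec' _ hj (Fin.natAdd c k)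
    have hL : letterW (c := c) i πa ua (πa.1 k) (Fin.natAdd c k) = 1 := by
      simp [letterW]
    rw [hL] at hr
    by_contra hb
    have hR : letterW (c := c) i πb ub (φ (πa.1 k)) (Fin.natAdd c k) = 0 := by
      simp only [letterW, Fin.addCases_right]
      rw [if_neg (fun hx => hb hx.symm)]
    rw [hR] at hr
    exact absurd hr (by norm_num)
  have hle : Finsupp.mapDomain (vmap c τ) ua ≤ ub := by
    rw [Finsupp.le_def]
    rintro ⟨t, j'⟩
    by_cases hr : j' ∈ Set.range φ
    · obtain ⟨j₀, rfl⟩ := hr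
      have : ((t, φ j₀) : Fin c × ℕ) = vmap c τ (t, j₀) := rfl
      rw [this, Finsupp.mapDomain_apply (vmap_injective τ)]
      by_cases hj : j₀ < lenW (c := c) i πa ua
      · have hrr := hspec' _ hj (Fin.castAdd (d i) t)
        rw [letterW, letterW, Fin.addCases_left, Fin.addCases_left] at hrr
        exact hrr
      · rw [u_zero_of_ge i πa ua t j₀ (le_of_not_gt hj)]
        exact Nat.zero_le _
    · rw [Finsupp.mapDomain_notin_range]
      · exact Nat.zero_le _
      · rintro ⟨⟨t₀, j₀⟩, hpq⟩
        exact hr ⟨j₀, congrArg Prod.snd hpq⟩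
  refine ⟨τ, ub - Finsupp.mapDomain (vmap c τ) ua, ?_⟩
  unfold opE
  refine Prod.ext ?_ ?_
  · show gmap d τ ⟨i, πa⟩ = ⟨i, πb⟩
    unfold gmap
    have : incAct τ πa = πb := Subtype.ext (funext fun k => hmark k)
    rw [this]
  · show ub - Finsupp.mapDomain (vmap c τ) ua + Finsupp.mapDomain (vmap c τ) ua = ub
    ext p
    have h1 : Finsupp.mapDomain (vmap c τ) ua p ≤ ub p := by
      rw [Finsupp.le_def] at hle
      exact hle p
    rw [Finsupp.add_apply, Finsupp.tsub_apply]
    omega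

lemma sigma_transport {σ : Σ i : Fin r, OIHomNat (d i)} {i : Fin r} (h : σ.1 = i) :
    σ = ⟨i, h ▸ σ.2⟩ := by
  cases σ
  cases h
  rfl

/-- the set of monomials with basis index `i` -/
def Pset (c : ℕ) {r : ℕ} (d : Fin r → ℕ) (i : Fin r) : Set (MonE c d) := {e | e.1.1 = i}

lemma pwo_Pset (i : Fin r) : (Pset c d i).PartiallyWellOrderedOn (RM c d) := by
  intro f0
  set f : ℕ → MonE c d := fun n => (f0 n).1 with hfdef
  have hf : ∀ n, f n ∈ Pset c d i := fun n => (f0 n).2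
  haveI hwo : ∀ j : Fin (c + d i), IsWellOrder ((fun _ : Fin (c + d i) => ℕ) j) (· < ·) :=
    fun _ => inferInstanceAs (IsWellOrder ℕ (· < ·))
  have hpwo' : (Set.univ : Set (Fin (c + d i) → ℕ)).IsPWO :=
    Set.isPWO_of_wellQuasiOrderedLE _
  have hpwo : (Set.univ : Set (Fin (c + d i) → ℕ)).PartiallyWellOrderedOn (· ≤ ·) := hpwo'
  have hH := Set.PartiallyWellOrderedOn.partiallyWellOrderedOn_sublistForall₂ _ hpwo
  obtain ⟨a, b, hab, hsab⟩ :=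
    hH (fun n => ⟨wordW i ((hf n) ▸ (f n).1.2) (f n).2, fun x _ => Set.mem_univ x⟩)
  refine ⟨a, b, hab, ?_⟩
  show RM c d (f a) (f b)
  have ha : f a = ((⟨i, (hf a) ▸ (f a).1.2⟩, (f a).2) : MonE c d) :=
    Prod.ext (sigma_transport (hf a)) rfl
  have hb : f b = ((⟨i, (hf b) ▸ (f b).1.2⟩, (f b).2) : MonE c d) :=
    Prod.ext (sigma_transport (hf b)) rfl
  rw [ha, hb]
  exact embed_RM hsab

theorem pwo_univ : (Set.univ : Set (MonE c d)).PartiallyWellOrderedOn (RM c d) := by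
  have haux : ∀ s : Finset (Fin r), (⋃ i ∈ s, Pset c d i).PartiallyWellOrderedOn (RM c d) := by
    intro s
    induction s using Finset.induction_on with
    | empty => simpa using Set.partiallyWellOrderedOn_empty (RM c d)
    | insert _ _ hi ih =>
        rw [Finset.set_biUnion_insert]
        exact (pwo_Pset _).union ih
  apply (haux Finset.univ).mono
  intro e _
  exact Set.mem_biUnion (Finset.mem_univ e.1.1) rfl

end S16
namespace S16

open MvPolynomial Finsupp

variable {K : Type} [CommRing K] {c : ℕ} {r : ℕ} {d : Fin r → ℕ}

lemma pick_exists {S : Submodule (PInf K c) (FreeIncP K c d)} {A : Set (FreeIncP K c d)}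
    (hne : ∃ f, f ∈ S ∧ f ∉ IncSpan K c d A) :
    ∃ p : FreeIncP K c d × MonE c d,
      p.1 ∈ S ∧ p.1 ∉ IncSpan K c d A ∧ p.2 ∈ suppM p.1 ∧
      (∀ e' ∈ suppM p.1, keyM e' ≤ keyM p.2) ∧
      (∀ f', f' ∈ S → f' ∉ IncSpan K c d A →
        ∃ e', e' ∈ suppM f' ∧ keyM p.2 ≤ keyM e') := by
  set Λ : Set (Lex (Fin r × VL)) :=
    {x | ∃ f, (f ∈ S ∧ f ∉ IncSpan K c d A) ∧
      ∃ e, e ∈ suppM f ∧ (∀ e' ∈ suppM f, keyM e' ≤ keyM e) ∧ keyM e = x} with hΛdef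
  have hΛ : Λ.Nonempty := by
    obtain ⟨f, hf1, hf2⟩ := hne
    have hf0 : f ≠ 0 := fun h => hf2 (h ▸ (IncSpan K c d A).zero_mem)
    obtain ⟨e, he1, he2⟩ :=
      Set.exists_max_image (suppM f) keyM (suppM_finite f) (suppM_nonempty hf0)
    exact ⟨keyM e, f, ⟨hf1, hf2⟩, e, he1, he2, rfl⟩
  obtain ⟨x, hxΛ, hxmin⟩ := (wellFounded_lt (α := Lex (Fin r × VL))).has_min Λ hΛ
  obtain ⟨f, ⟨hf1, hf2⟩, e, he1, he2, rfl⟩ := hxΛ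
  refine ⟨(f, e), hf1, hf2, he1, he2, ?_⟩
  intro f' h1 h2
  have hf0' : f' ≠ 0 := fun h => h2 (h ▸ (IncSpan K c d A).zero_mem)
  obtain ⟨e'', he''1, he''2⟩ :=
    Set.exists_max_image (suppM f') keyM (suppM_finite f') (suppM_nonempty hf0')
  refine ⟨e'', he''1, ?_⟩
  have hmem : keyM e'' ∈ Λ := ⟨f', ⟨h1, h2⟩, e'', he''1, he''2, rfl⟩
  exact le_of_not_gt (fun hlt => hxmin _ hmem hlt)

variable (K c d) in
/-- one step of the bad-sequence construction -/
noncomputable def pickP (S : Submodule (PInf K c) (FreeIncP K c d))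
    (hbad : ∀ l : List (FreeIncP K c d), (∀ x ∈ l, x ∈ S) →
      ∃ f, f ∈ S ∧ f ∉ IncSpan K c d {x | x ∈ l})
    (l : List (FreeIncP K c d)) (hl : ∀ x ∈ l, x ∈ S) : FreeIncP K c d × MonE c d :=
  Classical.choose (pick_exists (hbad l hl))

lemma pickP_spec (S : Submodule (PInf K c) (FreeIncP K c d))
    (hbad : ∀ l : List (FreeIncP K c d), (∀ x ∈ l, x ∈ S) →
      ∃ f, f ∈ S ∧ f ∉ IncSpan K c d {x | x ∈ l})
    (l : List (FreeIncP K c d)) (hl : ∀ x ∈ l, x ∈ S) :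
    (pickP K c d S hbad l hl).1 ∈ S ∧
      (pickP K c d S hbad l hl).1 ∉ IncSpan K c d {x | x ∈ l} ∧
      (pickP K c d S hbad l hl).2 ∈ suppM (pickP K c d S hbad l hl).1 ∧
      (∀ e' ∈ suppM (pickP K c d S hbad l hl).1, keyM e' ≤ keyM (pickP K c d S hbad l hl).2) ∧
      (∀ f', f' ∈ S → f' ∉ IncSpan K c d {x | x ∈ l} →
        ∃ e', e' ∈ suppM f' ∧ keyM (pickP K c d S hbad l hl).2 ≤ keyM e') :=
  Classical.choose_spec (pick_exists (hbad l hl))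

variable (K c d) in
/-- the history of the bad-sequence construction -/
noncomputable def chainL (S : Submodule (PInf K c) (FreeIncP K c d))
    (hbad : ∀ l : List (FreeIncP K c d), (∀ x ∈ l, x ∈ S) →
      ∃ f, f ∈ S ∧ f ∉ IncSpan K c d {x | x ∈ l}) :
    (n : ℕ) → {l : List (FreeIncP K c d) // ∀ x ∈ l, x ∈ S}
  | 0 => ⟨[], by simp⟩
  | n+1 =>
      ⟨(chainL S hbad n).1 ++ [(pickP K c d S hbad (chainL S hbad n).1 (chainL S hbad n).2).1], by
        intro x hx
        rcases List.mem_append.1 hx with h | h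
        · exact (chainL S hbad n).2 x h
        · rw [List.mem_singleton.1 h]
          exact (pickP_spec S hbad _ _).1⟩

variable (K c d) in
/-- the bad sequence with its leading monomials -/
noncomputable def FF (S : Submodule (PInf K c) (FreeIncP K c d))
    (hbad : ∀ l : List (FreeIncP K c d), (∀ x ∈ l, x ∈ S) →
      ∃ f, f ∈ S ∧ f ∉ IncSpan K c d {x | x ∈ l}) (n : ℕ) : FreeIncP K c d × MonE c d :=
  pickP K c d S hbad (chainL K c d S hbad n).1 (chainL K c d S hbad n).2

lemma chainL_succ (S : Submodule (PInf K c) (FreeIncP K c d)) (hbad) (n : ℕ) :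
    (chainL K c d S hbad (n+1)).1
      = (chainL K c d S hbad n).1 ++ [(FF K c d S hbad n).1] := rfl

lemma FF_mem_chain (S : Submodule (PInf K c) (FreeIncP K c d)) (hbad) (n m : ℕ) (h : m < n) :
    (FF K c d S hbad m).1 ∈ (chainL K c d S hbad n).1 := by
  induction n with
  | zero => omega
  | succ n ih =>
      rw [chainL_succ]
      rcases Nat.lt_succ_iff_lt_or_eq.1 h with h | h
      · exact List.mem_append.2 (Or.inl (ih h))
      · subst h
        exact List.mem_append.2 (Or.inr (List.mem_singleton.2 rfl))

end S16
/-- Let `K` be a Noetherian commutative ring and `c ≥ 1`. Every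
finitely generated free Inc-module `ℱ = ⊕_{i=1}^r F^{Inc,d_i}` over the Inc-algebra
`𝒫 = K[x_{i,j} : i ∈ [c], j ∈ ℕ]` is Noetherian: every Inc-stable submodule of `ℱ`
is generated, as an Inc-module, by a finite subset. -/
theorem stmt_16 (K : Type) [CommRing K] [IsNoetherianRing K] (c : ℕ) (hc : 1 ≤ c)
    {r : ℕ} (d : Fin r → ℕ) :
    ∀ S : Submodule (PInf K c) (FreeIncP K c d),
      (∀ (τ : Inc) (x : FreeIncP K c d), x ∈ S → freeIncPAct K c τ x ∈ S) →
      ∃ (k : ℕ) (g : Fin k → FreeIncP K c d),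
        (∀ i, g i ∈ S) ∧
        ∀ T : Submodule (PInf K c) (FreeIncP K c d),
          (∀ (τ : Inc) (x : FreeIncP K c d), x ∈ T → freeIncPAct K c τ x ∈ T) →
          (∀ i, g i ∈ T) →
          S ≤ T := by
  classical
  intro S hS
  by_contra hcon
  push_neg at hcon
  open S16 in
  have hbad : ∀ l : List (FreeIncP K c d), (∀ x ∈ l, x ∈ S) →
      ∃ f, f ∈ S ∧ f ∉ IncSpan K c d {x | x ∈ l} := by
    intro l hl
    by_contra hno
    push_neg at hno
    obtain ⟨T, hT1, hT2, hT3⟩ :=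
      hcon l.length (fun j => l.get j) (fun j => hl _ (l.get_mem j))
    apply hT3
    intro x hx
    refine incSpan_le hT1 ?_ (hno x hx)
    intro y hy
    obtain ⟨j, hj⟩ := List.mem_iff_get.1 hy
    exact hj ▸ hT2 j
  open S16 in
  exact absurd hbad (by
    intro hbad
    set F : ℕ → FreeIncP K c d := fun n => (FF K c d S hbad n).1 with hFdef
    set E : ℕ → MonE c d := fun n => (FF K c d S hbad n).2 with hEdef
    have spec := fun n => pickP_spec S hbad (chainL K c d S hbad n).1 (chainL K c d S hbad n).2
    have hFS : ∀ n, F n ∈ S := fun n => (spec n).1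
    have hFnot : ∀ n, F n ∉ IncSpan K c d {x | x ∈ (chainL K c d S hbad n).1} :=
      fun n => (spec n).2.1
    have hEmax : ∀ n, ∀ e' ∈ suppM (F n), keyM e' ≤ keyM (E n) := fun n => (spec n).2.2.2.1
    have hmin : ∀ n f', f' ∈ S → f' ∉ IncSpan K c d {x | x ∈ (chainL K c d S hbad n).1} →
        ∃ e', e' ∈ suppM f' ∧ keyM (E n) ≤ keyM e' := fun n => (spec n).2.2.2.2
    obtain ⟨φ, hφ⟩ := pwo_univ.exists_monotone_subseq (f := E) (fun n => Set.mem_univ _)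
    set a : ℕ → K := fun n => coeffM (F n) (E n) with hadef
    have hJ : ∃ n₀ : ℕ, a (φ (n₀+1)) ∈ Ideal.span {x : K | ∃ j ≤ n₀, x = a (φ j)} := by
      set J : ℕ →o Ideal K := ⟨fun n => Ideal.span {x | ∃ j ≤ n, x = a (φ j)}, by
        intro n n' hnn'
        apply Ideal.span_mono
        rintro x ⟨j, hj, rfl⟩
        exact ⟨j, hj.trans hnn', rfl⟩⟩ with hJdef
      obtain ⟨n₀, hn₀⟩ :=
        (monotone_stabilizes_iff_noetherian.2 (isNoetherianRing_iff.1 inferInstance)) J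
      refine ⟨n₀, ?_⟩
      have h1 : a (φ (n₀+1)) ∈ J (n₀+1) := Ideal.subset_span ⟨n₀+1, le_rfl, rfl⟩
      rwa [← hn₀ (n₀+1) (Nat.le_succ n₀)] at h1
    obtain ⟨n₀, hn₀⟩ := hJ
    have hsr : {x : K | ∃ j ≤ n₀, x = a (φ j)}
        = Set.range (fun j : Fin (n₀+1) => a (φ j)) := by
      ext x
      constructor
      · rintro ⟨j, hj, rfl⟩
        exact ⟨⟨j, Nat.lt_succ_of_le hj⟩, rfl⟩
      · rintro ⟨j, rfl⟩
        exact ⟨j, Nat.lt_succ_iff.1 j.2, rfl⟩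
    rw [hsr] at hn₀
    obtain ⟨cc, hcc⟩ := Ideal.mem_span_range_iff_exists_fun.1 hn₀
    set n := φ (n₀ + 1) with hndef
    have hops : ∀ j : Fin (n₀+1), RM c d (E (φ j)) (E n) :=
      fun j => hφ j (n₀+1) (le_of_lt j.2)
    choose τs ms hτm using hops
    set h := F n - ∑ j : Fin (n₀+1), opF K c d (τs j) (ms j) (cc j) (F (φ j)) with hhdef
    have hhS : h ∈ S := by
      refine Submodule.sub_mem _ (hFS n) (Submodule.sum_mem _ (fun j _ => ?_))
      exact Submodule.smul_mem _ _ (hS (τs j) _ (hFS (φ j)))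
    set T := IncSpan K c d {x | x ∈ (chainL K c d S hbad n).1} with hTdef
    have hsumT : (∑ j : Fin (n₀+1), opF K c d (τs j) (ms j) (cc j) (F (φ j))) ∈ T := by
      refine Submodule.sum_mem _ (fun j _ => ?_)
      have h1 : F (φ j) ∈ T := by
        apply subset_incSpan
        exact FF_mem_chain S hbad n (φ j)
          (lt_of_le_of_lt (φ.monotone (Nat.lt_succ_iff.1 j.2)) (φ.strictMono (Nat.lt_succ_self n₀)))
      exact Submodule.smul_mem _ _ (incSpan_stable (τs j) _ h1)
    have hhT : h ∉ T := by
      intro hmem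
      apply hFnot n
      have : F n = h + ∑ j : Fin (n₀+1), opF K c d (τs j) (ms j) (cc j) (F (φ j)) := by
        rw [hhdef]
        abel
      rw [← hTdef, this]
      exact Submodule.add_mem _ hmem hsumT
    have hbound : ∀ e', e' ∈ suppM h → keyM e' < keyM (E n) := by
      intro e' he'
      by_contra hge
      have hge : keyM (E n) ≤ keyM e' := le_of_not_gt hge
      have hzero : coeffM h e' = 0 := by
        rw [hhdef, coeffM_sub, coeffM_sum]
        rcases eq_or_lt_of_le hge with heq | hlt
        · obtain rfl : E n = e' := keyM_injective heq
          have hterm : ∀ j : Fin (n₀+1),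
              coeffM (opF K c d (τs j) (ms j) (cc j) (F (φ j))) (E n) = cc j * a (φ j) := by
            intro j
            rw [← hτm j, coeffM_opF]
          rw [Finset.sum_congr rfl (fun j _ => hterm j), hcc]
          exact sub_self _
        · have h1 : coeffM (F n) e' = 0 := by
            by_contra hne
            exact absurd (hEmax n e' hne) (not_le.2 hlt)
          have h2 : ∀ j : Fin (n₀+1),
              coeffM (opF K c d (τs j) (ms j) (cc j) (F (φ j))) e' = 0 := by
            intro j
            by_contra hne
            obtain ⟨e₀, he₀, heq⟩ := suppM_opF (τs j) (ms j) (cc j) (F (φ j)) hne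
            have hk : keyM e' ≤ keyM (E n) := by
              rw [← heq, ← hτm j]
              exact keyM_opE_le _ _ (hEmax (φ j) e₀ he₀)
            exact absurd hk (not_le.2 hlt)
          rw [h1, Finset.sum_eq_zero (fun j _ => h2 j), sub_zero]
      exact he' hzero
    obtain ⟨e', he'1, he'2⟩ := hmin n h hhS (hTdef ▸ hhT)
    exact absurd he'2 (not_le.2 (hbound e' he'1)))
end

section
/- Let K be a Noetherian commutative ring and c ≥ 1, and let ℳ be an Inc-submodule of a finitely generated free Inc-module ℱ = ⊕_{i=1}^r F^{Inc,d_i} over 𝒫 = K[x_{i,j} : i ∈ [c], j ∈ ℕ]. Then ℳ is the colimit of an OI-module: writing ℱ = lim F with F = ⊕_{i=1}^r F^{OI,d_i} over P^{OI,c} and κ_n: F_n → ℱ the natural maps to the colimit, and choosing a finite generating set {g_1,…,g_s} of ℳ with norms ν(g_i) = min{n : g_i ∈ κ_n(F_n)}, the OI-submodule M of F generated by the unique elements b_i ∈ F_{ν(g_i)} with κ_{ν(g_i)}(b_i) = g_i satisfies lim M = ℳ. -/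
/-- The width-`n` component `P^{OI,c}_n = K[x_{i,j} : i ∈ [c], j ∈ [n]]` of the
polynomial OI-algebra `P^{OI,c}`. -/
abbrev POIn (K : Type) [CommRing K] (c n : ℕ) := MvPolynomial (Fin c × Fin n) K

/-- The structure map of `P^{OI,c}` along an OI-morphism, `x_{i,j} ↦ x_{i,ε(j)}`. -/
noncomputable def POInmap (K : Type) [CommRing K] (c : ℕ) {m n : ℕ}
    (ε : Fin m ↪o Fin n) : POIn K c m →ₐ[K] POIn K c n :=
  MvPolynomial.rename (fun p => (p.1, ε p.2))

/-- Width-`n` component of the free OI-module `F = ⊕_{i=1}^r F^{OI,d_i}` over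
`P^{OI,c}`. -/
abbrev FreeOIP (K : Type) [CommRing K] (c : ℕ) {r : ℕ} (d : Fin r → ℕ) (n : ℕ) :
    Type := (Σ i : Fin r, Fin (d i) ↪o Fin n) →₀ POIn K c n

/-- The structure map of the free OI-module `F` along an OI-morphism `ε`. -/
noncomputable def freeOIPmap (K : Type) [CommRing K] (c : ℕ) {r : ℕ}
    (d : Fin r → ℕ) {m n : ℕ} (ε : Fin m ↪o Fin n) (f : FreeOIP K c d m) :
    FreeOIP K c d n :=
  f.sum fun p a => Finsupp.single ⟨p.1, p.2.trans ε⟩ (POInmap K c ε a)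

/-- The canonical map `P^{OI,c}_n → 𝒫` into the colimit. -/
noncomputable def toPInf (K : Type) [CommRing K] (c n : ℕ) :
    POIn K c n →ₐ[K] PInf K c :=
  MvPolynomial.rename (fun p => (p.1, (p.2 : ℕ)))

/-- The natural map `κ_n : F_n → ℱ` from the width-`n` component of the free
OI-module `F = ⊕ F^{OI,d_i}` to its colimit, the free Inc-module
`ℱ = ⊕ F^{Inc,d_i}`. -/
noncomputable def kappaF (K : Type) [CommRing K] (c : ℕ) {r : ℕ} (d : Fin r → ℕ)
    (n : ℕ) (f : FreeOIP K c d n) : FreeIncP K c d :=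
  f.sum fun p a => Finsupp.single ⟨p.1, extendHom p.2⟩ (toPInf K c n a)

/-- The norm `ν(q) = min {n : q ∈ κ_n(F_n)}` of an element `q ∈ ℱ`. -/
noncomputable def normF (K : Type) [CommRing K] (c : ℕ) {r : ℕ} (d : Fin r → ℕ)
    (q : FreeIncP K c d) : ℕ :=
  sInf {n | ∃ y : FreeOIP K c d n, kappaF K c d n y = q}


/-! ### Auxiliary lemmas -/

section Aux

variable (K : Type) [CommRing K] (c : ℕ) {r : ℕ} (d : Fin r → ℕ)

lemma kappaF_single {n : ℕ} (p : Σ i : Fin r, Fin (d i) ↪o Fin n) (a : POIn K c n) :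
    kappaF K c d n (Finsupp.single p a)
      = Finsupp.single ⟨p.1, extendHom p.2⟩ (toPInf K c n a) := by
  unfold kappaF
  rw [Finsupp.sum_single_index (by simp)]

lemma kappaF_zero {n : ℕ} : kappaF K c d n 0 = 0 := by
  unfold kappaF; simp

lemma kappaF_add {n : ℕ} (f h : FreeOIP K c d n) :
    kappaF K c d n (f + h) = kappaF K c d n f + kappaF K c d n h := by
  unfold kappaF
  exact Finsupp.sum_add_index' (fun p => by simp) (fun p b₁ b₂ => by
    rw [map_add, Finsupp.single_add])

lemma kappaF_smul {n : ℕ} (a : POIn K c n) (f : FreeOIP K c d n) :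
    kappaF K c d n (a • f) = toPInf K c n a • kappaF K c d n f := by
  induction f using Finsupp.induction_linear with
  | zero => rw [smul_zero, kappaF_zero, smul_zero]
  | add f h hf hh => rw [smul_add, kappaF_add, hf, hh, kappaF_add, smul_add]
  | single p x =>
      rw [Finsupp.smul_single, kappaF_single, kappaF_single, Finsupp.smul_single,
        smul_eq_mul, smul_eq_mul, map_mul]

lemma freeOIPmap_single {m n : ℕ} (ε : Fin m ↪o Fin n)
    (p : Σ i : Fin r, Fin (d i) ↪o Fin m) (a : POIn K c m) :
    freeOIPmap K c d ε (Finsupp.single p a)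
      = Finsupp.single ⟨p.1, p.2.trans ε⟩ (POInmap K c ε a) := by
  unfold freeOIPmap
  rw [Finsupp.sum_single_index (by simp)]

lemma freeIncPAct_single (τ : Inc) (p : Σ i : Fin r, OIHomNat (d i)) (a : PInf K c) :
    freeIncPAct K c τ (Finsupp.single p a)
      = Finsupp.single ⟨p.1, incAct τ p.2⟩ (incP K c τ a) := by
  unfold freeIncPAct
  rw [Finsupp.sum_single_index (by simp)]

lemma kappa_comp {m n : ℕ} (ε : Fin m ↪o Fin n) (τ : Inc)
    (hτ : ∀ j : Fin m, τ.1 (j : ℕ) = ((ε j : Fin n) : ℕ)) (f : FreeOIP K c d m) :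
    kappaF K c d n (freeOIPmap K c d ε f) = freeIncPAct K c τ (kappaF K c d m f) := by
  induction f using Finsupp.induction_linear with
  | zero =>
      unfold freeOIPmap freeIncPAct
      simp [kappaF_zero]
  | add f h hf hh =>
      have hA : ∀ g₁ g₂ : FreeOIP K c d m, freeOIPmap K c d ε (g₁ + g₂)
          = freeOIPmap K c d ε g₁ + freeOIPmap K c d ε g₂ := fun g₁ g₂ => by
        unfold freeOIPmap
        exact Finsupp.sum_add_index' (fun p => by simp)
          (fun p b₁ b₂ => by rw [map_add, Finsupp.single_add])
      have hB : ∀ g₁ g₂ : FreeIncP K c d, freeIncPAct K c τ (g₁ + g₂)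
          = freeIncPAct K c τ g₁ + freeIncPAct K c τ g₂ := fun g₁ g₂ => by
        unfold freeIncPAct
        exact Finsupp.sum_add_index' (fun p => by simp)
          (fun p b₁ b₂ => by rw [map_add, Finsupp.single_add])
      rw [hA, kappaF_add, hf, hh, kappaF_add, hB]
  | single p x =>
      rw [freeOIPmap_single, kappaF_single, kappaF_single, freeIncPAct_single]
      have hidx : extendHom (p.2.trans ε) = incAct τ (extendHom p.2) :=
        Subtype.ext (funext fun j => (hτ (p.2 j)).symm)
      have hval : toPInf K c n (POInmap K c ε x) = incP K c τ (toPInf K c m x) := by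
        unfold toPInf POInmap incP
        rw [MvPolynomial.rename_rename, MvPolynomial.rename_rename]
        have hfun : ((fun q : Fin c × ℕ => (q.1, τ.1 q.2)) ∘
            (fun q : Fin c × Fin m => (q.1, (q.2 : ℕ))))
            = ((fun q : Fin c × Fin n => (q.1, (q.2 : ℕ))) ∘
              (fun q : Fin c × Fin m => (q.1, ε q.2))) :=
          funext fun q => Prod.ext rfl (hτ q.2)
        rw [hfun]
      rw [hidx, hval]

lemma kappa_incl {m n : ℕ} (h : m ≤ n) (f : FreeOIP K c d m) :
    kappaF K c d n (freeOIPmap K c d (oeLE h) f) = kappaF K c d m f := by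
  induction f using Finsupp.induction_linear with
  | zero =>
      unfold freeOIPmap
      simp [kappaF_zero]
  | add f g hf hg =>
      have hA : freeOIPmap K c d (oeLE h) (f + g)
          = freeOIPmap K c d (oeLE h) f + freeOIPmap K c d (oeLE h) g := by
        unfold freeOIPmap
        exact Finsupp.sum_add_index' (fun p => by simp)
          (fun p b₁ b₂ => by rw [map_add, Finsupp.single_add])
      rw [hA, kappaF_add, hf, hg, kappaF_add]
  | single p x =>
      rw [freeOIPmap_single, kappaF_single, kappaF_single]
      have hidx : extendHom (p.2.trans (oeLE h)) = extendHom p.2 :=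
        Subtype.ext (funext fun j => rfl)
      have hval : toPInf K c n (POInmap K c (oeLE h) x) = toPInf K c m x := by
        unfold toPInf POInmap
        rw [MvPolynomial.rename_rename]
        rfl
      rw [hidx, hval]

lemma toPInf_incl {m n : ℕ} (h : m ≤ n) (a : POIn K c m) :
    toPInf K c n (POInmap K c (oeLE h) a) = toPInf K c m a := by
  unfold toPInf POInmap
  rw [MvPolynomial.rename_rename]
  rfl

/-- Extension of an OI-morphism to an element of `Inc`. -/
def extInc {m n : ℕ} (ε : Fin m ↪o Fin n) : Inc :=
  ⟨fun j => if h : j < m then ((ε ⟨j, h⟩ : Fin n) : ℕ) else j + n, by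
    intro a b hab
    dsimp only
    by_cases ha : a < m
    · by_cases hb : b < m
      · rw [dif_pos ha, dif_pos hb]
        exact ε.strictMono hab
      · rw [dif_pos ha, dif_neg hb]
        exact lt_of_lt_of_le (ε ⟨a, ha⟩).isLt (Nat.le_add_left _ _)
    · have hb : ¬ b < m := fun hb => ha (lt_trans hab hb)
      rw [dif_neg ha, dif_neg hb]
      omega⟩

lemma extInc_spec {m n : ℕ} (ε : Fin m ↪o Fin n) (j : Fin m) :
    (extInc ε).1 (j : ℕ) = ((ε j : Fin n) : ℕ) := by
  show (if h : (j : ℕ) < m then ((ε ⟨j, h⟩ : Fin n) : ℕ) else (j : ℕ) + n) = _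
  rw [dif_pos j.isLt]

lemma exists_rep (q : PInf K c) : ∃ (n : ℕ) (a : POIn K c n), toPInf K c n a = q := by
  obtain ⟨s, q', rfl⟩ := MvPolynomial.exists_finset_rename q
  refine ⟨(s.sup fun x => x.2) + 1,
    MvPolynomial.rename (fun x => (x.1.1, ⟨x.1.2,
      Nat.lt_succ_of_le (Finset.le_sup (f := fun y : Fin c × ℕ => y.2) x.2)⟩)) q', ?_⟩
  unfold toPInf
  rw [MvPolynomial.rename_rename]
  rfl

lemma extendHom_inj {dd n : ℕ} : Function.Injective (@extendHom dd n) := by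
  intro π π' h
  have h2 : ∀ j, ((π j : Fin n) : ℕ) = ((π' j : Fin n) : ℕ) := fun j =>
    congrFun (congrArg Subtype.val h) j
  ext j
  exact h2 j

lemma kappaF_injective (n : ℕ) : Function.Injective (kappaF K c d n) := by
  have einj : Function.Injective
      (fun p : Σ i : Fin r, Fin (d i) ↪o Fin n =>
        (⟨p.1, extendHom p.2⟩ : Σ i : Fin r, OIHomNat (d i))) := by
    intro p q h
    obtain ⟨i, π⟩ := p
    obtain ⟨i', π'⟩ := q
    obtain ⟨h1, h2⟩ := Sigma.mk.inj_iff.mp h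
    dsimp only at h1 h2
    subst h1
    rw [extendHom_inj (eq_of_heq h2)]
  have tinj : Function.Injective (toPInf K c n) := by
    apply MvPolynomial.rename_injective
    intro a b hab
    have h1 : (a.1, (a.2 : ℕ)) = (b.1, (b.2 : ℕ)) := hab
    rw [Prod.mk.injEq] at h1
    exact Prod.ext h1.1 (Fin.ext h1.2)
  have hrw : ∀ f : FreeOIP K c d n, kappaF K c d n f
      = Finsupp.embDomain ⟨_, einj⟩
          (Finsupp.mapRange (toPInf K c n) (map_zero _) f) := by
    intro f
    rw [Finsupp.embDomain_eq_mapDomain, Finsupp.mapDomain,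
      Finsupp.sum_mapRange_index (by simp)]
    rfl
  intro f g h
  rw [hrw, hrw] at h
  have h1 := Finsupp.embDomain_injective _ h
  exact Finsupp.mapRange_injective _ (map_zero _) tinj h1

end Aux

/-- Let `K` be a Noetherian commutative ring, `c ≥ 1`, and let `ℳ`
be an Inc-submodule of a finitely generated free Inc-module `ℱ = ⊕_{i=1}^r F^{Inc,d_i}`
over `𝒫 = K[x_{i,j} : i ∈ [c], j ∈ ℕ]`. Then `ℳ` is the colimit of an OI-module:
writing `ℱ = lim F` with `F = ⊕_{i=1}^r F^{OI,d_i}` over `P^{OI,c}` and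
`κ_n : F_n → ℱ` the natural maps, and choosing a finite generating set `g_1, …, g_s`
of `ℳ` with norms `ν(g_i)`, the elements `b_i ∈ F_{ν(g_i)}` with `κ(b_i) = g_i` are
unique, and the OI-submodule `M` of `F` generated by the `b_i` satisfies
`lim M = ℳ`, i.e. `ℳ = ⋃_n κ_n(M_n)`. -/
theorem stmt_17 (K : Type) [CommRing K] [IsNoetherianRing K] (c : ℕ) (hc : 1 ≤ c)
    {r : ℕ} (d : Fin r → ℕ)
    -- `ℳ` is an Inc-submodule of `ℱ`
    (ℳ : Submodule (PInf K c) (FreeIncP K c d))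
    (hM : ∀ (τ : Inc) (x : FreeIncP K c d), x ∈ ℳ → freeIncPAct K c τ x ∈ ℳ)
    -- `{g_1, …, g_s}` is a generating set of `ℳ` as an Inc-module
    {s : ℕ} (g : Fin s → FreeIncP K c d)
    (hgmem : ∀ i, g i ∈ ℳ)
    (hgspan : ∀ T : Submodule (PInf K c) (FreeIncP K c d),
      (∀ (τ : Inc) (x : FreeIncP K c d), x ∈ T → freeIncPAct K c τ x ∈ T) →
      (∀ i, g i ∈ T) → ℳ ≤ T)
    -- `b_i ∈ F_{ν(g_i)}` is an element with `κ_{ν(g_i)}(b_i) = g_i`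
    (b : ∀ i, FreeOIP K c d (normF K c d (g i)))
    (hb : ∀ i, kappaF K c d (normF K c d (g i)) (b i) = g i) :
    -- such `b_i` are unique, and `ℳ = lim M` where `M = ⟨b_1, …, b_s⟩` is the
    -- OI-submodule of `F` generated by the `b_i`
    (∀ (i : Fin s) (y : FreeOIP K c d (normF K c d (g i))),
      kappaF K c d (normF K c d (g i)) y = g i → y = b i) ∧
    (∀ x : FreeIncP K c d, x ∈ ℳ ↔
      ∃ (n : ℕ) (y : FreeOIP K c d n),
        (∀ T : ∀ m, Submodule (POIn K c m) (FreeOIP K c d m),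
          (∀ (m p : ℕ) (ε : Fin m ↪o Fin p) (z : FreeOIP K c d m),
            z ∈ T m → freeOIPmap K c d ε z ∈ T p) →
          (∀ i, b i ∈ T (normF K c d (g i))) →
          y ∈ T n) ∧
        kappaF K c d n y = x) := by
  constructor
  · intro i y hy
    exact kappaF_injective K c d _ (hy.trans (hb i).symm)
  · intro x
    constructor
    · intro hx
      let S : Submodule (PInf K c) (FreeIncP K c d) :=
        { carrier := {x | ∃ (n : ℕ) (y : FreeOIP K c d n),
            (∀ T : ∀ m, Submodule (POIn K c m) (FreeOIP K c d m),
              (∀ (m p : ℕ) (ε : Fin m ↪o Fin p) (z : FreeOIP K c d m),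
                z ∈ T m → freeOIPmap K c d ε z ∈ T p) →
              (∀ i, b i ∈ T (normF K c d (g i))) →
              y ∈ T n) ∧ kappaF K c d n y = x}
          zero_mem' := ⟨0, 0, fun T _ _ => (T 0).zero_mem, kappaF_zero K c d⟩
          add_mem' := by
            rintro a b' ⟨m, y, hy, rfl⟩ ⟨n, z, hz, rfl⟩
            refine ⟨max m n, freeOIPmap K c d (oeLE (le_max_left m n)) y
              + freeOIPmap K c d (oeLE (le_max_right m n)) z, ?_, ?_⟩
            · intro T hT hTb
              exact (T _).add_mem (hT _ _ _ _ (hy T hT hTb)) (hT _ _ _ _ (hz T hT hTb))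
            · rw [kappaF_add, kappa_incl, kappa_incl]
          smul_mem' := by
            rintro q x ⟨n, y, hy, rfl⟩
            obtain ⟨m, a, rfl⟩ := exists_rep K c q
            refine ⟨max m n, POInmap K c (oeLE (le_max_left m n)) a
              • freeOIPmap K c d (oeLE (le_max_right m n)) y, ?_, ?_⟩
            · intro T hT hTb
              exact (T _).smul_mem _ (hT _ _ _ _ (hy T hT hTb))
            · rw [kappaF_smul, kappa_incl, toPInf_incl] }
      refine hgspan S ?_ (fun i => ⟨_, b i, fun T hT hTb => hTb i, hb i⟩) hx
      rintro τ x ⟨n, y, hy, hk⟩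
      refine ⟨incWidth τ n, freeOIPmap K c d (incRestrict τ n) y, ?_, ?_⟩
      · intro T hT hTb
        exact hT _ _ _ _ (hy T hT hTb)
      · rw [kappa_comp K c d (incRestrict τ n) τ (fun j => rfl), hk]
    · rintro ⟨n, y, hQ, rfl⟩
      let T : ∀ m, Submodule (POIn K c m) (FreeOIP K c d m) := fun m =>
        { carrier := {z | kappaF K c d m z ∈ ℳ}
          zero_mem' := by
            show kappaF K c d m 0 ∈ ℳ
            rw [kappaF_zero]
            exact ℳ.zero_mem
          add_mem' := by
            intro z w hz hw
            show kappaF K c d m (z + w) ∈ ℳ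
            rw [kappaF_add]
            exact ℳ.add_mem hz hw
          smul_mem' := by
            intro a z hz
            show kappaF K c d m (a • z) ∈ ℳ
            rw [kappaF_smul]
            exact ℳ.smul_mem _ hz }
      refine hQ T ?_ ?_
      · intro m p ε z hz
        show kappaF K c d p (freeOIPmap K c d ε z) ∈ ℳ
        rw [kappa_comp K c d ε (extInc ε) (fun j => extInc_spec ε j)]
        exact hM _ _ hz
      · intro i
        show kappaF K c d _ (b i) ∈ ℳ
        rw [hb i]
        exact hgmem i
end

section
/- Let K be a Noetherian commutative ring and c ≥ 1. Every Inc-submodule ℳ of a finitely generated free Inc-module over 𝒫 = K[x_{i,j} : i ∈ [c], j ∈ ℕ] admits a free resolution ⋯ → ℱ₂ → ℱ₁ → ℳ → 0 in which each ℱ_i is a free Inc-module over 𝒫 that is finitely generated as an Inc-module and all differentials (and the augmentation) are Inc-equivariant 𝒫-module homomorphisms. Moreover, if ℳ is a graded module (with respect to the standard grading of 𝒫 giving every variable degree one), then such a resolution exists with all differentials of degree zero. -/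
open MvPolynomial

/-- The degree-`j` homogeneous component of an element of a free module over `𝒫`
(taken coefficientwise), for the standard grading in which every variable has
degree one and every basis element `ε_{π,i}` has degree zero. -/
noncomputable def homCompF (K : Type) [CommRing K] (c : ℕ) {ι : Type} (j : ℕ)
    (f : ι →₀ PInf K c) : ι →₀ PInf K c :=
  Finsupp.mapRange (homogeneousComponent j) (map_zero _) f

namespace S18

open MvPolynomial Finsupp

theorem Inc.mul_apply (σ τ : Inc) (n : ℕ) : (σ * τ).1 n = σ.1 (τ.1 n) := rfl
theorem Inc.one_apply (n : ℕ) : (1 : Inc).1 n = n := rfl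

variable {K : Type} [CommRing K] {c : ℕ} {r : ℕ} {d : Fin r → ℕ}

/-- index type of the free module -/
abbrev Bdx (d : Fin r → ℕ) : Type := Σ i : Fin r, OIHomNat (d i)

/-- exponent type -/
abbrev Expo (c : ℕ) : Type := Fin c × ℕ →₀ ℕ

/-- term type -/
abbrev Tm (c : ℕ) (d : Fin r → ℕ) : Type := Bdx d × Expo c

variable (c) in
/-- action of `Inc` on variables -/
def vmap (τ : Inc) : Fin c × ℕ → Fin c × ℕ := fun v => (v.1, τ.1 v.2)

theorem vmap_injective (τ : Inc) : Function.Injective (vmap c τ) := by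
  rintro ⟨i, j⟩ ⟨i', j'⟩ h
  simp only [vmap, Prod.mk.injEq] at h
  exact Prod.ext h.1 (τ.2.injective h.2)

theorem incAct_injective {n : ℕ} (τ : Inc) :
    Function.Injective (incAct (d := n) τ) := by
  rintro ⟨π, hπ⟩ ⟨π', hπ'⟩ h
  have h' : τ.1 ∘ π = τ.1 ∘ π' := congrArg Subtype.val h
  exact Subtype.ext (funext fun j => τ.2.injective (congrFun h' j))

/-- action of `Inc` on basis indices -/
def bmap (τ : Inc) (b : Bdx d) : Bdx d := ⟨b.1, incAct τ b.2⟩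

theorem bmap_injective (τ : Inc) : Function.Injective (bmap (d := d) τ) := by
  rintro ⟨i, π⟩ ⟨i', π'⟩ h
  obtain rfl : i = i' := congrArg Sigma.fst h
  have h2 : HEq (incAct τ π) (incAct τ π') := (Sigma.ext_iff.mp h).2
  exact congrArg (Sigma.mk i) (incAct_injective τ (eq_of_heq h2))

variable (c) in
/-- action of `Inc` on exponents -/
noncomputable def emap (τ : Inc) (e : Expo c) : Expo c := e.mapDomain (vmap c τ)

variable (c) in
/-- action of `Inc` on terms -/
noncomputable def tmap (τ : Inc) (t : Tm c d) : Tm c d := (bmap τ t.1, emap c τ t.2)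

theorem incP_apply (τ : Inc) (a : PInf K c) : incP K c τ a = rename (vmap c τ) a := rfl

theorem act_eq (τ : Inc) (f : FreeIncP K c d) :
    freeIncPAct K c τ f =
      Finsupp.mapDomain (bmap τ) (Finsupp.mapRange (incP K c τ) (map_zero _) f) := by
  rw [Finsupp.mapDomain, Finsupp.sum_mapRange_index (fun b => Finsupp.single_zero _)]
  rfl

theorem act_zero (τ : Inc) : freeIncPAct K c τ (0 : FreeIncP K c d) = 0 := by
  simp [act_eq]

theorem act_add (τ : Inc) (f g : FreeIncP K c d) :
    freeIncPAct K c τ (f + g) = freeIncPAct K c τ f + freeIncPAct K c τ g := by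
  simp only [act_eq]
  rw [← Finsupp.mapDomain_add]
  congr 1
  ext b
  simp [map_add]

theorem act_smul (τ : Inc) (a : PInf K c) (f : FreeIncP K c d) :
    freeIncPAct K c τ (a • f) = incP K c τ a • freeIncPAct K c τ f := by
  simp only [act_eq]
  rw [← Finsupp.mapDomain_smul]
  congr 1
  ext b
  simp [map_mul]

theorem act_single (τ : Inc) (b : Bdx d) (a : PInf K c) :
    freeIncPAct K c τ (Finsupp.single b a) = Finsupp.single (bmap τ b) (incP K c τ a) := by
  classical
  rw [freeIncPAct, Finsupp.sum_single_index]
  · rfl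
  · rw [map_zero, Finsupp.single_zero]

theorem vmap_comp (σ τ : Inc) : vmap c σ ∘ vmap c τ = vmap c (σ * τ) := rfl

theorem bmap_comp (σ τ : Inc) (b : Bdx d) : bmap σ (bmap τ b) = bmap (σ * τ) b := rfl

theorem incP_incP (σ τ : Inc) (a : PInf K c) :
    incP K c σ (incP K c τ a) = incP K c (σ * τ) a := by
  simp only [incP_apply]
  rw [rename_rename]
  rfl

theorem act_act (σ τ : Inc) (f : FreeIncP K c d) :
    freeIncPAct K c σ (freeIncPAct K c τ f) = freeIncPAct K c (σ * τ) f := by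
  induction f using Finsupp.induction_linear with
  | zero => simp [act_zero]
  | add f g hf hg => rw [act_add, act_add, act_add, hf, hg]
  | single b a => rw [act_single, act_single, act_single, bmap_comp, incP_incP]

theorem bmap_one (b : Bdx d) : bmap 1 b = b := by
  cases b with
  | mk i π => exact congrArg (Sigma.mk i) (Subtype.ext rfl)

theorem incP_one (a : PInf K c) : incP K c 1 a = a := by
  have h1 : vmap c 1 = id := by funext v; cases v; rfl
  rw [incP_apply, h1, rename_id, AlgHom.id_apply]

theorem act_one (f : FreeIncP K c d) : freeIncPAct K c 1 f = f := by
  induction f using Finsupp.induction_linear with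
  | zero => simp [act_zero]
  | add f g hf hg => rw [act_add, hf, hg]
  | single b a => rw [act_single, bmap_one, incP_one]

end S18
namespace S18

open MvPolynomial Finsupp

variable {K : Type} [CommRing K] {c : ℕ} {r : ℕ} {d : Fin r → ℕ}

noncomputable instance : DecidableEq (Bdx d) := Classical.decEq _
noncomputable instance : DecidableEq (Tm c d) := Classical.decEq _

/-- coefficient of a term in an element of the free module -/
noncomputable def tc (f : FreeIncP K c d) (t : Tm c d) : K := coeff t.2 (f t.1)

/-- the finite set of terms of `f` -/
noncomputable def tsupp (f : FreeIncP K c d) : Finset (Tm c d) :=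
  f.support.biUnion fun b => (f b).support.image fun e => (b, e)

theorem mem_tsupp {f : FreeIncP K c d} {t : Tm c d} : t ∈ tsupp f ↔ tc f t ≠ 0 := by
  classical
  obtain ⟨b, e⟩ := t
  simp only [tsupp, Finset.mem_biUnion, Finset.mem_image, Finsupp.mem_support_iff, tc]
  constructor
  · rintro ⟨b', hb', e', he', h⟩
    obtain ⟨rfl, rfl⟩ : b' = b ∧ e' = e := by
      exact ⟨congrArg Prod.fst h, congrArg Prod.snd h⟩
    simpa [MvPolynomial.mem_support_iff] using he'
  · intro h
    refine ⟨b, fun hb => h ?_, e, ?_, rfl⟩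
    · simp [hb, MvPolynomial.coeff_zero]
    · simpa [MvPolynomial.mem_support_iff] using h

theorem tc_eq_zero_of_not_mem_tsupp {f : FreeIncP K c d} {t : Tm c d}
    (h : t ∉ tsupp f) : tc f t = 0 := by
  by_contra h'; exact h (mem_tsupp.mpr h')

theorem tsupp_eq_empty_iff {f : FreeIncP K c d} : tsupp f = ∅ ↔ f = 0 := by
  constructor
  · intro h
    ext b e
    have : (b, e) ∉ tsupp f := by simp [h]
    simpa [tc, MvPolynomial.coeff_zero] using tc_eq_zero_of_not_mem_tsupp this
  · rintro rfl
    simp [tsupp]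

theorem tc_add (f g : FreeIncP K c d) (t : Tm c d) : tc (f + g) t = tc f t + tc g t := by
  simp [tc, MvPolynomial.coeff_add]

theorem tc_sub (f g : FreeIncP K c d) (t : Tm c d) : tc (f - g) t = tc f t - tc g t := by
  simp [tc, MvPolynomial.coeff_sub]

theorem tsupp_add_subset (f g : FreeIncP K c d) : tsupp (f + g) ⊆ tsupp f ∪ tsupp g := by
  intro t ht
  rw [mem_tsupp, tc_add] at ht
  rw [Finset.mem_union, mem_tsupp, mem_tsupp]
  by_contra h
  push_neg at h
  rw [h.1, h.2, add_zero] at ht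
  exact ht rfl

theorem tc_C_smul (k : K) (f : FreeIncP K c d) (t : Tm c d) :
    tc ((C k : PInf K c) • f) t = k * tc f t := by
  simp [tc, Finsupp.smul_apply, MvPolynomial.coeff_C_mul, smul_eq_mul]

theorem tsupp_C_smul_subset (k : K) (f : FreeIncP K c d) :
    tsupp ((C k : PInf K c) • f) ⊆ tsupp f := by
  intro t ht
  rw [mem_tsupp, tc_C_smul] at ht
  rw [mem_tsupp]
  intro h; rw [h, mul_zero] at ht; exact ht rfl

/-- multiplication by a monomial -/
theorem tc_monomial_smul (m : Expo c) (f : FreeIncP K c d) (b : Bdx d) (e : Expo c) :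
    tc ((monomial m 1 : PInf K c) • f) (b, e + m) = tc f (b, e) := by
  simp only [tc, Finsupp.smul_apply, smul_eq_mul]
  rw [mul_comm, MvPolynomial.coeff_mul_monomial']
  simp

theorem tsupp_monomial_smul_subset (m : Expo c) (f : FreeIncP K c d) :
    tsupp ((monomial m 1 : PInf K c) • f) ⊆ (tsupp f).image fun t => (t.1, t.2 + m) := by
  classical
  intro t ht
  obtain ⟨b, e'⟩ := t
  rw [mem_tsupp] at ht
  simp only [tc, Finsupp.smul_apply, smul_eq_mul] at ht
  rw [mul_comm, MvPolynomial.coeff_mul_monomial'] at ht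
  by_cases hle : m ≤ e'
  · simp only [if_pos hle, mul_one] at ht
    refine Finset.mem_image.mpr ⟨(b, e' - m), mem_tsupp.mpr ht, ?_⟩
    simp [tsub_add_cancel_of_le hle]
  · rw [if_neg hle] at ht
    exact absurd rfl ht

/-- coefficients under the Inc action -/
theorem tc_act (τ : Inc) (f : FreeIncP K c d) (t : Tm c d) :
    tc (freeIncPAct K c τ f) (tmap c τ t) = tc f t := by
  obtain ⟨b, e⟩ := t
  rw [act_eq]
  simp only [tc, tmap]
  rw [Finsupp.mapDomain_apply (bmap_injective τ), Finsupp.mapRange_apply, incP_apply]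
  exact coeff_rename_mapDomain _ (vmap_injective τ) _ _

theorem tsupp_act_subset (τ : Inc) (f : FreeIncP K c d) :
    tsupp (freeIncPAct K c τ f) ⊆ (tsupp f).image (tmap c τ) := by
  classical
  intro t ht
  obtain ⟨b', e'⟩ := t
  rw [mem_tsupp] at ht
  simp only [tc, act_eq] at ht
  by_cases hb : ∃ b, bmap (d := d) τ b = b'
  · obtain ⟨b, rfl⟩ := hb
    rw [Finsupp.mapDomain_apply (bmap_injective τ), Finsupp.mapRange_apply, incP_apply] at ht
    by_cases he : ∃ e, Finsupp.mapDomain (vmap c τ) e = e'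
    · obtain ⟨e, rfl⟩ := he
      rw [coeff_rename_mapDomain _ (vmap_injective τ)] at ht
      exact Finset.mem_image.mpr ⟨(b, e), mem_tsupp.mpr ht, rfl⟩
    · rw [coeff_rename_eq_zero] at ht
      · exact absurd rfl ht
      · intro u hu; exact absurd ⟨u, hu⟩ he
  · rw [Finsupp.mapDomain_notin_range] at ht
    · simp at ht
    · rintro ⟨b, rfl⟩; exact hb ⟨b, rfl⟩

end S18
namespace S18

open MvPolynomial Finsupp

variable {K : Type} [CommRing K] {c : ℕ} {r : ℕ} {d : Fin r → ℕ}

/-- the well-ordered value monoid for leading terms -/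
abbrev Om (r : ℕ) : Type := Lex ((Lex (ℕᵒᵈ →₀ ℕ)) × ((Fin r) ×ₗ (Lex (ℕᵒᵈ →₀ ℕ))))

example : WellFoundedLT (Om r) := inferInstance

/-- key of an `ℕ`-indexed exponent vector: lex with *larger* indices more significant -/
noncomputable def dKey (g : ℕ →₀ ℕ) : Lex (ℕᵒᵈ →₀ ℕ) :=
  toLex (g.mapDomain (OrderDual.toDual : ℕ → ℕᵒᵈ))

theorem dKey_injective : Function.Injective dKey := fun g g' h =>
  Finsupp.mapDomain_injective (OrderDual.toDual.injective) (toLex.injective h)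

theorem dKey_apply (g : ℕ →₀ ℕ) (w : ℕ) :
    (ofLex (dKey g)) (OrderDual.toDual w) = g w :=
  Finsupp.mapDomain_apply (OrderDual.toDual.injective) g w

theorem dKey_lt_iff {g g' : ℕ →₀ ℕ} :
    dKey g < dKey g' ↔ ∃ v : ℕ, (∀ w, v < w → g w = g' w) ∧ g v < g' v := by
  change Finsupp.Lex _ _ _ _ ↔ _
  rw [Finsupp.lex_def]
  constructor
  · rintro ⟨j, hj, hlt⟩
    refine ⟨OrderDual.ofDual j, fun w hw => ?_, ?_⟩
    · have := hj (OrderDual.toDual w) hw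
      rwa [dKey_apply, dKey_apply] at this
    · have : j = OrderDual.toDual (OrderDual.ofDual j) := rfl
      rw [this, dKey_apply, dKey_apply] at hlt
      exact hlt
  · rintro ⟨v, hv, hlt⟩
    refine ⟨OrderDual.toDual v, fun j hj => ?_, ?_⟩
    · have : j = OrderDual.toDual (OrderDual.ofDual j) := rfl
      rw [this, dKey_apply, dKey_apply]
      exact hv _ hj
    · rw [dKey_apply, dKey_apply]
      exact hlt

theorem dKey_mapDomain_lt {φ : ℕ → ℕ} (hφ : StrictMono φ) {g g' : ℕ →₀ ℕ}
    (h : dKey g < dKey g') : dKey (g.mapDomain φ) < dKey (g'.mapDomain φ) := by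
  rw [dKey_lt_iff] at h ⊢
  obtain ⟨v, hv, hlt⟩ := h
  refine ⟨φ v, fun w hw => ?_, ?_⟩
  · by_cases hr : w ∈ Set.range φ
    · obtain ⟨u, rfl⟩ := hr
      rw [Finsupp.mapDomain_apply hφ.injective, Finsupp.mapDomain_apply hφ.injective]
      exact hv u (hφ.lt_iff_lt.mp hw)
    · rw [Finsupp.mapDomain_notin_range _ _ hr, Finsupp.mapDomain_notin_range _ _ hr]
  · rw [Finsupp.mapDomain_apply hφ.injective, Finsupp.mapDomain_apply hφ.injective]
    exact hlt

theorem dKey_add (g m : ℕ →₀ ℕ) : dKey (g + m) = dKey g + dKey m := by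
  rw [dKey, Finsupp.mapDomain_add]; rfl

variable (c) in
/-- linear code of a variable -/
def vcode (v : Fin c × ℕ) : ℕ := c * v.2 + v.1

theorem vcode_injective : Function.Injective (vcode c) := by
  rintro ⟨i, j⟩ ⟨i', j'⟩ h
  simp only [vcode] at h
  have hi := i.isLt; have hi' := i'.isLt
  have hj : j = j' := by
    rcases lt_trichotomy j j' with hj | hj | hj
    · exfalso
      have h2 : c * (j + 1) ≤ c * j' := Nat.mul_le_mul_left _ hj
      rw [Nat.mul_succ] at h2
      omega
    · exact hj
    · exfalso
      have h2 : c * (j' + 1) ≤ c * j := Nat.mul_le_mul_left _ hj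
      rw [Nat.mul_succ] at h2
      omega
  subst hj
  have hii : i = i' := Fin.ext (by omega)
  rw [hii]

variable (c) in
/-- the action of `τ` on variable codes -/
def cmap (τ : Inc) (n : ℕ) : ℕ := c * τ.1 (n / c) + n % c

theorem cmap_strictMono (hc : 0 < c) (τ : Inc) : StrictMono (cmap c τ) := by
  intro n m hnm
  have hd : n / c ≤ m / c := Nat.div_le_div_right hnm.le
  rcases lt_or_eq_of_le hd with hd | hd
  · have hlt := τ.2 hd
    have h1 : n % c < c := Nat.mod_lt _ hc
    have h2 : c * (τ.1 (n / c) + 1) ≤ c * τ.1 (m / c) := Nat.mul_le_mul_left _ hlt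
    rw [Nat.mul_succ] at h2
    simp only [cmap]
    omega
  · have h1 : n % c < m % c := by
      have hn := Nat.div_add_mod n c
      have hm := Nat.div_add_mod m c
      rw [hd] at hn
      omega
    have h4 : c * τ.1 (n / c) = c * τ.1 (m / c) := by rw [hd]
    simp only [cmap]
    omega

theorem cmap_vcode (hc : 0 < c) (τ : Inc) (v : Fin c × ℕ) :
    cmap c τ (vcode c v) = vcode c (vmap c τ v) := by
  obtain ⟨i, j⟩ := v
  simp only [cmap, vcode, vmap]
  have h1 : (c * j + i.val) / c = j := by
    rw [Nat.mul_add_div hc, Nat.div_eq_of_lt i.isLt, add_zero]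
  have h2 : (c * j + i.val) % c = i.val := by
    rw [Nat.mul_add_mod, Nat.mod_eq_of_lt i.isLt]
  rw [h1, h2]

/-- key of an exponent -/
noncomputable def eKey (e : Expo c) : Lex (ℕᵒᵈ →₀ ℕ) := dKey (e.mapDomain (vcode c))

theorem eKey_injective : Function.Injective (eKey (c := c)) := fun e e' h =>
  Finsupp.mapDomain_injective vcode_injective (dKey_injective h)

theorem eKey_add (e m : Expo c) : eKey (e + m) = eKey e + eKey m := by
  rw [eKey, Finsupp.mapDomain_add, dKey_add]; rfl

theorem eKey_emap (hc : 0 < c) (e : Expo c) (τ : Inc) :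
    eKey (emap c τ e) = dKey ((e.mapDomain (vcode c)).mapDomain (cmap c τ)) := by
  have hfun : vcode c ∘ vmap c τ = cmap c τ ∘ vcode c := by
    funext v; exact (cmap_vcode hc τ v).symm
  rw [eKey, emap, ← Finsupp.mapDomain_comp, ← Finsupp.mapDomain_comp, hfun]

theorem eKey_emap_lt (hc : 0 < c) (τ : Inc) {e e' : Expo c} (h : eKey e < eKey e') :
    eKey (emap c τ e) < eKey (emap c τ e') := by
  rw [eKey_emap hc, eKey_emap hc]
  exact dKey_mapDomain_lt (cmap_strictMono hc τ) h

/-- indicator of the image of `π` -/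
noncomputable def indOf {n : ℕ} (π : OIHomNat n) : ℕ →₀ ℕ :=
  ∑ j : Fin n, Finsupp.single (π.1 j) 1

/-- key of a basis index -/
noncomputable def pKey {n : ℕ} (π : OIHomNat n) : Lex (ℕᵒᵈ →₀ ℕ) := dKey (indOf π)

theorem indOf_incAct {n : ℕ} (τ : Inc) (π : OIHomNat n) :
    indOf (incAct τ π) = (indOf π).mapDomain τ.1 := by
  rw [indOf, indOf, Finsupp.mapDomain_finset_sum]
  refine Finset.sum_congr rfl fun j _ => ?_
  rw [Finsupp.mapDomain_single]
  rfl

theorem indOf_ne_zero_iff {n : ℕ} (π : OIHomNat n) (v : ℕ) :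
    (indOf π) v ≠ 0 ↔ ∃ j, π.1 j = v := by
  classical
  rw [indOf, Finset.sum_apply']
  simp only [Finsupp.single_apply]
  rw [← Finset.sum_filter]
  constructor
  · intro h
    obtain ⟨j, hj, _⟩ := Finset.exists_ne_zero_of_sum_ne_zero h
    exact ⟨j, (Finset.mem_filter.mp hj).2⟩
  · rintro ⟨j, hj⟩
    intro h0
    rw [Finset.sum_const, smul_eq_mul, mul_one] at h0
    have : j ∈ Finset.filter (fun j => π.1 j = v) Finset.univ :=
      Finset.mem_filter.mpr ⟨Finset.mem_univ _, hj⟩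
    rw [Finset.card_eq_zero.mp h0] at this
    exact absurd this (Finset.notMem_empty _)

theorem strictMono_fin_eq_of_range_subset {n : ℕ} {f g : Fin n → ℕ}
    (hf : StrictMono f) (hg : StrictMono g) (h : Set.range f ⊆ Set.range g) : f = g := by
  classical
  have hcard : (Finset.univ.image g).card = n := by
    rw [Finset.card_image_of_injective _ hg.injective, Finset.card_univ, Fintype.card_fin]
  have hfs : ∀ x, f x ∈ Finset.univ.image g := by
    intro x
    obtain ⟨j, hj⟩ := h ⟨x, rfl⟩
    exact Finset.mem_image.mpr ⟨j, Finset.mem_univ _, hj⟩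
  have hgs : ∀ x, g x ∈ Finset.univ.image g := fun x =>
    Finset.mem_image.mpr ⟨x, Finset.mem_univ _, rfl⟩
  have e1 := Finset.orderEmbOfFin_unique hcard hfs hf
  have e2 := Finset.orderEmbOfFin_unique hcard hgs hg
  exact e1.trans e2.symm

theorem pKey_injective {n : ℕ} : Function.Injective (pKey (n := n)) := by
  intro π π' h
  have hind := dKey_injective h
  have hrange : Set.range π.1 ⊆ Set.range π'.1 := by
    rintro v ⟨j, rfl⟩
    have : (indOf π) (π.1 j) ≠ 0 := (indOf_ne_zero_iff π _).mpr ⟨j, rfl⟩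
    rw [hind] at this
    exact (indOf_ne_zero_iff π' _).mp this
  exact Subtype.ext (strictMono_fin_eq_of_range_subset π.2 π'.2 hrange)

/-- key of a term -/
noncomputable def TKey (t : Tm c d) : Om r := toLex (eKey t.2, toLex (t.1.1, pKey t.1.2))

theorem TKey_injective : Function.Injective (TKey (c := c) (d := d)) := by
  rintro ⟨⟨i, π⟩, e⟩ ⟨⟨i', π'⟩, e'⟩ h
  have h' := toLex.injective h
  have he : eKey e = eKey e' := congrArg Prod.fst h'
  have h2 := toLex.injective (congrArg Prod.snd h')
  have hi : i = i' := congrArg Prod.fst h2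
  subst hi
  have hp : pKey π = pKey π' := congrArg Prod.snd h2
  rw [eKey_injective he, pKey_injective hp]

theorem TKey_add_lt (m : Expo c) {b b' : Bdx d} {e e' : Expo c}
    (h : TKey (b, e) < TKey (b', e')) : TKey (b, e + m) < TKey (b', e' + m) := by
  simp only [TKey, Prod.Lex.lt_iff] at h ⊢
  rcases h with h | ⟨heq, hlt⟩
  · left
    rw [eKey_add, eKey_add]
    exact add_lt_add_left h _
  · right
    obtain rfl : e = e' := eKey_injective heq
    exact ⟨rfl, hlt⟩

theorem TKey_tmap_lt (hc : 0 < c) (τ : Inc) {t t' : Tm c d} (h : TKey t < TKey t') :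
    TKey (tmap c τ t) < TKey (tmap c τ t') := by
  obtain ⟨⟨i, π⟩, e⟩ := t
  obtain ⟨⟨i', π'⟩, e'⟩ := t'
  simp only [TKey, tmap, bmap, Prod.Lex.lt_iff] at h ⊢
  rcases h with h | ⟨heq, hlt⟩
  · exact Or.inl (eKey_emap_lt hc τ h)
  · right
    obtain rfl : e = e' := eKey_injective heq
    refine ⟨rfl, ?_⟩
    rcases hlt with hlt | ⟨hieq, hplt⟩
    · exact Or.inl hlt
    · right
      have hieq' : i = i' := hieq
      subst hieq'
      refine ⟨rfl, ?_⟩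
      simp only [pKey]
      rw [indOf_incAct, indOf_incAct]
      exact dKey_mapDomain_lt τ.2 hplt

/-- leading term data -/
def IsLead (f : FreeIncP K c d) (t : Tm c d) (a : K) : Prop :=
  tc f t = a ∧ a ≠ 0 ∧ ∀ s ∈ tsupp f, s ≠ t → TKey s < TKey t

theorem exists_isLead {f : FreeIncP K c d} (hf : f ≠ 0) : ∃ t a, IsLead f t a := by
  classical
  have hne : (tsupp f).Nonempty := by
    rw [Finset.nonempty_iff_ne_empty]
    intro h; exact hf (tsupp_eq_empty_iff.mp h)
  obtain ⟨t, ht, hmax⟩ := Finset.exists_max_image (tsupp f) TKey hne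
  refine ⟨t, tc f t, rfl, mem_tsupp.mp ht, fun s hs hst => ?_⟩
  exact lt_of_le_of_ne (hmax s hs) (fun hk => hst (TKey_injective hk))


theorem IsLead.monomial_smul {f : FreeIncP K c d} {b : Bdx d} {e : Expo c} {a : K}
    (h : IsLead f (b, e) a) (m : Expo c) :
    IsLead ((monomial m 1 : PInf K c) • f) (b, e + m) a := by
  obtain ⟨h1, h2, h3⟩ := h
  refine ⟨?_, h2, fun s hs hst => ?_⟩
  · rw [tc_monomial_smul, h1]
  · obtain ⟨⟨b2, e2⟩, ht2, rfl⟩ := Finset.mem_image.mp (tsupp_monomial_smul_subset m f hs)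
    have ht2ne : (b2, e2) ≠ ((b, e) : Tm c d) := by
      rintro h'; exact hst (by rw [Prod.mk.injEq] at h'; rw [h'.1, h'.2])
    have hlt : TKey ((b2, e2) : Tm c d) < TKey (b, e) := h3 _ ht2 ht2ne
    exact TKey_add_lt m hlt

theorem tmap_injective (τ : Inc) : Function.Injective (tmap c (d := d) τ) := by
  rintro ⟨b, e⟩ ⟨b', e'⟩ h
  simp only [tmap, Prod.mk.injEq] at h
  exact Prod.ext (bmap_injective τ h.1)
    (Finsupp.mapDomain_injective (vmap_injective τ) h.2)

theorem IsLead.act {f : FreeIncP K c d} {t : Tm c d} {a : K} (hc : 0 < c)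
    (h : IsLead f t a) (τ : Inc) :
    IsLead (freeIncPAct K c τ f) (tmap c τ t) a := by
  obtain ⟨h1, h2, h3⟩ := h
  refine ⟨by rw [tc_act, h1], h2, fun s hs hst => ?_⟩
  obtain ⟨t2, ht2, rfl⟩ := Finset.mem_image.mp (tsupp_act_subset τ f hs)
  have ht2ne : t2 ≠ t := by rintro rfl; exact hst rfl
  exact TKey_tmap_lt hc τ (h3 t2 ht2 ht2ne)

theorem IsLead.C_smul {f : FreeIncP K c d} {t : Tm c d} {a : K}
    (h : IsLead f t a) (k : K) (hka : k * a ≠ 0) :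
    IsLead ((C k : PInf K c) • f) t (k * a) := by
  obtain ⟨h1, h2, h3⟩ := h
  refine ⟨by rw [tc_C_smul, h1], hka, fun s hs hst => ?_⟩
  exact h3 s (tsupp_C_smul_subset k f hs) hst

end S18
namespace S18

open MvPolynomial Finsupp

variable {K : Type} [CommRing K] {c : ℕ} {r : ℕ} {d : Fin r → ℕ}

/-- the leading coefficient ideal of a submodule at a term -/
def LI (M : Submodule (PInf K c) (FreeIncP K c d)) (t : Tm c d) : Ideal K where
  carrier := {a | a = 0 ∨ ∃ x ∈ M, IsLead x t a}
  zero_mem' := Or.inl rfl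
  add_mem' := by
    rintro a b ha hb
    rcases ha with rfl | ⟨x, hx, hlx⟩
    · simpa using hb
    rcases hb with rfl | ⟨y, hy, hly⟩
    · simpa using Or.inr ⟨x, hx, hlx⟩
    by_cases hab : a + b = 0
    · exact Or.inl hab
    right
    refine ⟨x + y, M.add_mem hx hy, ?_, hab, fun s hs hst => ?_⟩
    · rw [tc_add, hlx.1, hly.1]
    · rcases Finset.mem_union.mp (tsupp_add_subset x y hs) with h | h
      · exact hlx.2.2 s h hst
      · exact hly.2.2 s h hst
  smul_mem' := by
    intro k a ha
    rcases ha with rfl | ⟨x, hx, hlx⟩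
    · exact Or.inl (by simp)
    by_cases hka : k * a = 0
    · exact Or.inl (by simpa using hka)
    right
    exact ⟨(C k : PInf K c) • x, M.smul_mem _ hx, hlx.C_smul k hka⟩

theorem mem_LI {M : Submodule (PInf K c) (FreeIncP K c d)} {t : Tm c d} {a : K} :
    a ∈ LI M t ↔ a = 0 ∨ ∃ x ∈ M, IsLead x t a := Iff.rfl

theorem LI_mono_mod {M N : Submodule (PInf K c) (FreeIncP K c d)} (h : M ≤ N) (t : Tm c d) :
    LI M t ≤ LI N t := by
  intro a ha
  rcases mem_LI.mp ha with rfl | ⟨x, hx, hlx⟩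
  · exact (LI N t).zero_mem
  · exact mem_LI.mpr (Or.inr ⟨x, h hx, hlx⟩)

/-- Inc-divisibility of terms -/
def DivLe (t t' : Tm c d) : Prop :=
  ∃ τ : Inc, bmap τ t.1 = t'.1 ∧ ∀ v : Fin c × ℕ, t.2 v ≤ t'.2 (vmap c τ v)

/-- Inc-stability of a submodule -/
def IncStable (M : Submodule (PInf K c) (FreeIncP K c d)) : Prop :=
  ∀ (τ : Inc) (x : FreeIncP K c d), x ∈ M → freeIncPAct K c τ x ∈ M

theorem LI_mono_div (hc : 0 < c) {M : Submodule (PInf K c) (FreeIncP K c d)}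
    (hstab : IncStable M) {t t' : Tm c d} (hdiv : DivLe t t') : LI M t ≤ LI M t' := by
  obtain ⟨b, e⟩ := t
  obtain ⟨b', e'⟩ := t'
  intro a ha
  rcases mem_LI.mp ha with rfl | ⟨x, hx, hlx⟩
  · exact (LI M _).zero_mem
  obtain ⟨τ, hb, he⟩ := hdiv
  have hle : emap c τ e ≤ e' := by
    rw [Finsupp.le_def]
    intro w
    by_cases hw : w ∈ Set.range (vmap c τ)
    · obtain ⟨v, rfl⟩ := hw
      rw [emap, Finsupp.mapDomain_apply (vmap_injective τ)]
      exact he v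
    · rw [emap, Finsupp.mapDomain_notin_range _ _ hw]
      exact Nat.zero_le _
  set m := e' - emap c τ e with hm_def
  have hm : emap c τ e + m = e' := add_tsub_cancel_of_le hle
  have h1 : IsLead (freeIncPAct K c τ x) (bmap τ b, emap c τ e) a := by
    have := hlx.act hc τ
    simpa [tmap] using this
  have h2 := h1.monomial_smul m
  rw [hb, hm] at h2
  exact mem_LI.mpr (Or.inr ⟨_, M.smul_mem _ (hstab τ x hx), h2⟩)

theorem eq_of_LI_eq {M N : Submodule (PInf K c) (FreeIncP K c d)} (hMN : M ≤ N)
    (h : ∀ t, LI M t = LI N t) : M = N := by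
  have key : ∀ κ : Om r, ∀ y ∈ N, (∀ s ∈ tsupp y, TKey s ≤ κ) → y ∈ M := by
    intro κ
    refine wellFounded_lt.induction
      (C := fun κ => ∀ y ∈ N, (∀ s ∈ tsupp y, TKey s ≤ κ) → y ∈ M) κ ?_
    clear κ
    intro κ IH y hy hbound
    by_cases hy0 : y = 0
    · rw [hy0]; exact M.zero_mem
    obtain ⟨t, a, hl⟩ := exists_isLead hy0
    have haN : a ∈ LI N t := mem_LI.mpr (Or.inr ⟨y, hy, hl⟩)
    rw [← h] at haN
    rcases mem_LI.mp haN with rfl | ⟨x, hxM, hlx⟩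
    · exact absurd rfl hl.2.1
    have hz : y - x ∈ N := N.sub_mem hy (hMN hxM)
    have hzbound : ∀ s ∈ tsupp (y - x), TKey s < TKey t := by
      intro s hs
      have hne : s ≠ t := by
        rintro rfl
        have h0 := mem_tsupp.mp hs
        rw [tc_sub, hl.1, hlx.1, sub_self] at h0
        exact h0 rfl
      have hmem : s ∈ tsupp y ∪ tsupp x := by
        have h0 := mem_tsupp.mp hs
        rw [tc_sub] at h0
        rw [Finset.mem_union, mem_tsupp, mem_tsupp]
        by_contra hcon
        push_neg at hcon
        rw [hcon.1, hcon.2, sub_zero] at h0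
        exact h0 rfl
      rcases Finset.mem_union.mp hmem with h' | h'
      · exact hl.2.2 s h' hne
      · exact hlx.2.2 s h' hne
    by_cases hz0 : y - x = 0
    · have hyx : y = x := sub_eq_zero.mp hz0
      rw [hyx]; exact hxM
    obtain ⟨t2, a2, hl2⟩ := exists_isLead hz0
    have ht2mem : t2 ∈ tsupp (y - x) := mem_tsupp.mpr (by rw [hl2.1]; exact hl2.2.1)
    have ht2 : TKey t2 < TKey t := hzbound t2 ht2mem
    have htk : TKey t ≤ κ := hbound t (mem_tsupp.mpr (by rw [hl.1]; exact hl.2.1))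
    have hzM : y - x ∈ M := by
      refine IH (TKey t2) (lt_of_lt_of_le ht2 htk) (y - x) hz (fun s hs => ?_)
      by_cases h' : s = t2
      · rw [h']
      · exact (hl2.2.2 s hs h').le
    have hyy : y = y - x + x := (sub_add_cancel y x).symm
    rw [hyy]
    exact M.add_mem hzM hxM
  apply le_antisymm hMN
  intro y hy
  by_cases hy0 : y = 0
  · rw [hy0]; exact M.zero_mem
  obtain ⟨t, a, hl⟩ := exists_isLead hy0
  refine key (TKey t) y hy (fun s hs => ?_)
  by_cases h' : s = t
  · rw [h']
  · exact (hl.2.2 s hs h').le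

end S18
namespace S18

open MvPolynomial Finsupp

variable {K : Type} [CommRing K] {c : ℕ} {r : ℕ} {d : Fin r → ℕ}

/-- extension of a strictly increasing finite map to an element of `Inc` -/
def extOf {n : ℕ} (g : Fin n → ℕ) (hg : StrictMono g) : Inc :=
  ⟨fun j => if h : j < n then g ⟨j, h⟩ else
      (if h0 : 0 < n then g ⟨n - 1, by omega⟩ + 1 + (j - n) else j), by
    intro a b hab
    dsimp only
    by_cases ha : a < n <;> by_cases hb : b < n
    · rw [dif_pos ha, dif_pos hb]
      exact hg (Fin.mk_lt_mk.mpr hab)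
    · have h0 : 0 < n := lt_of_le_of_lt (Nat.zero_le a) ha
      rw [dif_pos ha, dif_neg hb, dif_pos h0]
      have hle : g ⟨a, ha⟩ ≤ g ⟨n - 1, by omega⟩ := hg.monotone (Fin.mk_le_mk.mpr (by omega))
      omega
    · exact absurd hab (by omega)
    · by_cases h0 : 0 < n
      · rw [dif_neg ha, dif_neg hb, dif_pos h0, dif_pos h0]
        omega
      · rw [dif_neg ha, dif_neg hb, dif_neg h0, dif_neg h0]
        exact hab⟩

theorem extOf_lt {n : ℕ} (g : Fin n → ℕ) (hg : StrictMono g) {j : ℕ} (h : j < n) :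
    (extOf g hg).1 j = g ⟨j, h⟩ := dif_pos h

/-- the alphabet relation for the Higman encoding -/
def rA (c : ℕ) : ((Fin c → ℕ) × Bool) → ((Fin c → ℕ) × Bool) → Prop :=
  fun a b => (∀ i, a.1 i ≤ b.1 i) ∧ a.2 = b.2

instance : IsRefl ((Fin c → ℕ) × Bool) (rA c) := ⟨fun _ => ⟨fun _ => le_refl _, rfl⟩⟩

instance : IsTrans ((Fin c → ℕ) × Bool) (rA c) :=
  ⟨fun _ _ _ hab hbc => ⟨fun i => le_trans (hab.1 i) (hbc.1 i), hab.2.trans hbc.2⟩⟩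

instance : IsPreorder ((Fin c → ℕ) × Bool) (rA c) where

instance : IsPreorder (List ((Fin c → ℕ) × Bool)) (List.SublistForall₂ (rA c)) where

theorem pwo_rA : (Set.univ : Set ((Fin c → ℕ) × Bool)).PartiallyWellOrderedOn (rA c) := by
  intro f'
  let f : ℕ → (Fin c → ℕ) × Bool := fun n => (f' n).1
  obtain ⟨g, hg⟩ := (wellQuasiOrdered_le (α := Fin c → ℕ)).exists_monotone_subseq (fun n => (f n).1)
  obtain ⟨m, n, hmn, heq⟩ : ∃ m n, m < n ∧ (f (g m)).2 = (f (g n)).2 := by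
    obtain ⟨m, n, hne, heq⟩ :=
      Finite.exists_ne_map_eq_of_infinite (fun k : ℕ => (f (g k)).2)
    rcases hne.lt_or_gt with h | h
    · exact ⟨m, n, h, heq⟩
    · exact ⟨n, m, h, heq.symm⟩
  exact ⟨g m, g n, g.strictMono hmn, fun i => (hg _ _ hmn.le : _ ≤ _) i, heq⟩

/-- a bound on the data of a term -/
noncomputable def tmBound (t : Tm c d) : ℕ :=
  (t.2.support.sup fun v => v.2 + 1) ⊔ (Finset.univ.sup fun k => t.1.2.1 k + 1)

theorem tmBound_expo {t : Tm c d} {i : Fin c} {j : ℕ} (h : tmBound t ≤ j) : t.2 (i, j) = 0 := by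
  by_contra h0
  have hmem : (i, j) ∈ t.2.support := Finsupp.mem_support_iff.mpr h0
  have h3 : j + 1 ≤ t.2.support.sup (fun v => v.2 + 1) := by
    simpa using Finset.le_sup (f := fun v : Fin c × ℕ => v.2 + 1) hmem
  have h2 : (t.2.support.sup fun v => v.2 + 1) ≤ tmBound t := le_max_left _ _
  omega

theorem tmBound_pi {t : Tm c d} (k : Fin (d t.1.1)) : t.1.2.1 k < tmBound t := by
  have h3 : t.1.2.1 k + 1 ≤ Finset.univ.sup (fun k => t.1.2.1 k + 1) := by
    simpa using Finset.le_sup (f := fun k => t.1.2.1 k + 1) (Finset.mem_univ k)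
  have h2 : (Finset.univ.sup fun k => t.1.2.1 k + 1) ≤ tmBound t := le_max_right _ _
  omega

/-- the symbol at position `j` of the list encoding of a term -/
noncomputable def symOf (t : Tm c d) (j : ℕ) : (Fin c → ℕ) × Bool :=
  (fun i => t.2 (i, j), decide (∃ k, t.1.2.1 k = j))

/-- the list encoding of a term -/
noncomputable def lstOf (t : Tm c d) : List ((Fin c → ℕ) × Bool) :=
  (List.range (tmBound t)).map (symOf t)

/-- extraction of an order-embedding from a `SublistForall₂` -/
theorem sublistForall₂_exists {α : Type*} {R : α → α → Prop} :
    ∀ {l₁ l₂ : List α}, List.SublistForall₂ R l₁ l₂ →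
      ∃ ψ : ℕ → ℕ, (∀ {a b : ℕ}, a < b → b < l₁.length → ψ a < ψ b) ∧
        ∀ k (hk : k < l₁.length), ∃ hk' : ψ k < l₂.length,
          R (l₁.get ⟨k, hk⟩) (l₂.get ⟨ψ k, hk'⟩) := by
  intro l₁ l₂ h
  induction h with
  | nil =>
    exact ⟨id, fun _ hb => absurd hb (Nat.not_lt_zero _), fun k hk => absurd hk (Nat.not_lt_zero _)⟩
  | @cons a b l₁ l₂ hr hsub ih =>
    obtain ⟨ψ, hmono, hget⟩ := ih
    refine ⟨fun k => match k with | 0 => 0 | k + 1 => ψ k + 1, ?_, ?_⟩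
    · intro x y hxy hy
      match x, y with
      | 0, 0 => omega
      | 0, y + 1 => exact Nat.succ_pos _
      | x + 1, 0 => omega
      | x + 1, y + 1 =>
        show ψ x + 1 < ψ y + 1
        have : ψ x < ψ y := hmono (by omega) (by simpa using hy)
        omega
    · intro k hk
      match k with
      | 0 => exact ⟨Nat.succ_pos _, hr⟩
      | k + 1 =>
        obtain ⟨hk', hR⟩ := hget k (by simpa using hk)
        exact ⟨by simpa using Nat.succ_lt_succ hk', hR⟩
  | @cons_right a l₁ l₂ hsub ih =>
    obtain ⟨ψ, hmono, hget⟩ := ih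
    refine ⟨fun k => ψ k + 1, fun hxy hy => by
      dsimp only
      have := hmono hxy hy; omega, ?_⟩
    intro k hk
    obtain ⟨hk', hR⟩ := hget k hk
    exact ⟨Nat.succ_lt_succ hk', hR⟩

theorem lstOf_get (t : Tm c d) (k : ℕ) (hk : k < (lstOf t).length) :
    (lstOf t).get ⟨k, hk⟩ = symOf t k := by
  simp [lstOf]

theorem lstOf_length (t : Tm c d) : (lstOf t).length = tmBound t := by
  simp [lstOf]

theorem divle_of_sublist {t t' : Tm c d} (hi : t.1.1 = t'.1.1)
    (h : List.SublistForall₂ (rA c) (lstOf t) (lstOf t')) : DivLe t t' := by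
  obtain ⟨ψ, hmono, hget⟩ := sublistForall₂_exists h
  set N := tmBound t with hN
  -- the strictly increasing finite map
  have hgmono : StrictMono (fun k : Fin N => ψ k.1) := by
    intro a b hab
    exact hmono hab (by rw [lstOf_length]; exact b.isLt)
  set τ : Inc := extOf _ hgmono with hτ
  have hτval : ∀ j, j < N → τ.1 j = ψ j := fun j hj => extOf_lt _ _ hj
  have hsym : ∀ j (hj : j < N), ∃ hj' : ψ j < tmBound t',
      rA c (symOf t j) (symOf t' (ψ j)) := by
    intro j hj
    obtain ⟨hj', hR⟩ := hget j (by rw [lstOf_length]; exact hj)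
    rw [lstOf_get, lstOf_get] at hR
    exact ⟨by rwa [lstOf_length] at hj', hR⟩
  obtain ⟨⟨ib, π⟩, e⟩ := t
  obtain ⟨⟨ib', π'⟩, e'⟩ := t'
  obtain rfl : ib = ib' := hi
  refine ⟨τ, ?_, ?_⟩
  · -- the basis index is mapped correctly
    have hrange : Set.range (τ.1 ∘ π.1) ⊆ Set.range π'.1 := by
      rintro v ⟨k, rfl⟩
      have hπk : π.1 k < N := tmBound_pi (t := ((⟨ib, π⟩, e) : Tm c d)) k
      obtain ⟨hj', hR⟩ := hsym (π.1 k) hπk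
      have hmark : (symOf ((⟨ib, π⟩, e) : Tm c d) (π.1 k)).2 = true := by
        simp only [symOf, decide_eq_true_eq]
        exact ⟨k, rfl⟩
      have := hR.2
      rw [hmark] at this
      have hex : ∃ k', π'.1 k' = ψ (π.1 k) := by
        have := this.symm
        simpa [symOf] using this
      obtain ⟨k', hk'⟩ := hex
      refine ⟨k', ?_⟩
      rw [hk', Function.comp_apply, hτval _ hπk]
    have heq : τ.1 ∘ π.1 = π'.1 :=
      strictMono_fin_eq_of_range_subset (τ.2.comp π.2) π'.2 hrange
    exact congrArg (Sigma.mk ib) (Subtype.ext heq)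
  · -- the exponents are dominated
    rintro ⟨i, j⟩
    by_cases hj : j < N
    · obtain ⟨hj', hR⟩ := hsym j hj
      have := hR.1 i
      simp only [symOf] at this
      rw [vmap]
      simpa [hτval j hj] using this
    · have : e (i, j) = 0 := tmBound_expo (t := ((⟨ib, π⟩, e) : Tm c d)) (by omega)
      rw [this]
      exact Nat.zero_le _

/-- every sequence of terms has an Inc-divisibility-increasing subsequence -/
theorem exists_divle_chain (f : ℕ → Tm c d) :
    ∃ φ : ℕ → ℕ, StrictMono φ ∧ ∀ k, DivLe (f (φ k)) (f (φ (k + 1))) := by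
  classical
  obtain ⟨i, hinf⟩ := Finite.exists_infinite_fiber (f := fun n : ℕ => (f n).1.1)
  set S : Set ℕ := (fun n : ℕ => (f n).1.1) ⁻¹' {i} with hS
  haveI : Infinite S := hinf
  set g₁ : ℕ ↪o ℕ := Nat.orderEmbeddingOfSet S with hg₁
  have hg₁mem : ∀ n, (f (g₁ n)).1.1 = i := by
    intro n
    have : g₁ n ∈ S := by
      rw [hg₁, Nat.orderEmbeddingOfSet_apply]
      exact Subtype.mem _
    exact this
  have hH := Set.PartiallyWellOrderedOn.partiallyWellOrderedOn_sublistForall₂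
    (rA c) (pwo_rA (c := c))
  obtain ⟨g₂, hg₂⟩ := hH.exists_monotone_subseq (f := fun n => lstOf (f (g₁ n)))
    (fun n => by intro x _; exact Set.mem_univ x)
  refine ⟨fun k => g₁ (g₂ k), (g₁.strictMono.comp g₂.strictMono), fun k => ?_⟩
  refine divle_of_sublist ?_ (hg₂ k (k + 1) (by omega))
  rw [hg₁mem, hg₁mem]

end S18
namespace S18

open MvPolynomial Finsupp

variable {K : Type} [CommRing K] {c : ℕ} {r : ℕ} {d : Fin r → ℕ}

/-- the Inc-submodule generated by a set -/
noncomputable def IncSpan (s : Set (FreeIncP K c d)) : Submodule (PInf K c) (FreeIncP K c d) :=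
  Submodule.span (PInf K c)
    {y | ∃ (τ : Inc) (x : FreeIncP K c d), x ∈ s ∧ y = freeIncPAct K c τ x}

theorem subset_IncSpan {s : Set (FreeIncP K c d)} : s ⊆ IncSpan s := fun x hx =>
  Submodule.subset_span ⟨1, x, hx, (act_one x).symm⟩

theorem IncSpan_mono {s t : Set (FreeIncP K c d)} (h : s ⊆ t) : IncSpan s ≤ IncSpan t := by
  apply Submodule.span_mono
  rintro y ⟨τ, x, hx, rfl⟩
  exact ⟨τ, x, h hx, rfl⟩

theorem IncSpan_le {s : Set (FreeIncP K c d)} {M : Submodule (PInf K c) (FreeIncP K c d)}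
    (hstab : IncStable M) (hs : s ⊆ M) : IncSpan s ≤ M := by
  apply Submodule.span_le.mpr
  rintro y ⟨τ, x, hx, rfl⟩
  exact hstab τ x (hs hx)

theorem IncSpan_stable (s : Set (FreeIncP K c d)) : IncStable (IncSpan s) := by
  intro τ x hx
  induction hx using Submodule.span_induction with
  | mem y hy =>
    obtain ⟨σ, x0, hx0, rfl⟩ := hy
    rw [act_act]
    exact Submodule.subset_span ⟨τ * σ, x0, hx0, rfl⟩
  | zero => rw [act_zero]; exact Submodule.zero_mem _
  | add x y _ _ ih1 ih2 => rw [act_add]; exact Submodule.add_mem _ ih1 ih2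
  | smul a x _ ih => rw [act_smul]; exact Submodule.smul_mem _ _ ih

/-- **Noetherianity**: every Inc-stable submodule is finitely generated as an Inc-module. -/
theorem exists_finite_gen [IsNoetherianRing K] (hc : 0 < c)
    {M : Submodule (PInf K c) (FreeIncP K c d)} (hstab : IncStable M) :
    ∃ s : Finset (FreeIncP K c d), ↑s ⊆ (M : Set (FreeIncP K c d)) ∧ IncSpan ↑s = M := by
  classical
  by_contra hcon
  push_neg at hcon
  have hstep : ∀ s : Finset (FreeIncP K c d), ↑s ⊆ (M : Set (FreeIncP K c d)) →
      ∃ x, x ∈ M ∧ x ∉ IncSpan (↑s : Set (FreeIncP K c d)) := by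
    intro s hs
    have hne := hcon s hs
    have hle : IncSpan (↑s : Set (FreeIncP K c d)) ≤ M := IncSpan_le hstab hs
    by_contra h2
    push_neg at h2
    exact hne (le_antisymm hle fun x hx => h2 x hx)
  choose pick hpickM hpickN using hstep
  let T := {s : Finset (FreeIncP K c d) // ↑s ⊆ (M : Set (FreeIncP K c d))}
  let Fstep : T → T := fun p =>
    ⟨insert (pick p.1 p.2) p.1, by
      intro x hx
      rcases Finset.mem_insert.mp (by exact_mod_cast hx) with h | h
      · rw [h]; exact hpickM p.1 p.2
      · exact p.2 h⟩
  let sq : ℕ → T := fun n => Fstep^[n] ⟨∅, by simp⟩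
  have hsq_succ : ∀ n, sq (n + 1) = Fstep (sq n) := fun n =>
    Function.iterate_succ_apply' Fstep n _
  let Mo : ℕ → Submodule (PInf K c) (FreeIncP K c d) := fun n => IncSpan ↑(sq n).1
  have hMo_le_succ : ∀ n, Mo n ≤ Mo (n + 1) := by
    intro n
    apply IncSpan_mono
    rw [hsq_succ]
    intro x hx
    exact_mod_cast Finset.mem_insert_of_mem (by exact_mod_cast hx)
  have hMo_mono : Monotone Mo := monotone_nat_of_le_succ hMo_le_succ
  have hMo_ne : ∀ n, Mo n ≠ Mo (n + 1) := by
    intro n h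
    have hin : pick (sq n).1 (sq n).2 ∈ Mo (n + 1) := by
      apply subset_IncSpan
      rw [hsq_succ]
      exact_mod_cast Finset.mem_insert_self _ _
    rw [← h] at hin
    exact hpickN (sq n).1 (sq n).2 hin
  have hMo_stable : ∀ n, IncStable (Mo n) := fun n => IncSpan_stable _
  have hLI : ∀ n, ∃ t : Tm c d, LI (Mo n) t ≠ LI (Mo (n + 1)) t := by
    intro n
    by_contra h
    push_neg at h
    exact hMo_ne n (eq_of_LI_eq (hMo_le_succ n) h)
  choose tt htt using hLI
  obtain ⟨φ, hφmono, hφdiv⟩ := exists_divle_chain tt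
  have hstepJ : ∀ k, LI (Mo (φ k)) (tt (φ k)) ≤ LI (Mo (φ (k + 1))) (tt (φ (k + 1))) := by
    intro k
    calc LI (Mo (φ k)) (tt (φ k)) ≤ LI (Mo (φ (k + 1))) (tt (φ k)) :=
          LI_mono_mod (hMo_mono (hφmono (by omega)).le) _
    _ ≤ LI (Mo (φ (k + 1))) (tt (φ (k + 1))) :=
          LI_mono_div hc (hMo_stable _) (hφdiv k)
  let J : ℕ →o Ideal K :=
    ⟨fun k => LI (Mo (φ k)) (tt (φ k)), monotone_nat_of_le_succ hstepJ⟩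
  obtain ⟨n, hn⟩ := monotone_stabilizes_iff_noetherian.mpr inferInstance J
  have heq : J n = J (n + 1) := hn (n + 1) (by omega)
  -- derive the contradiction
  have h1 : LI (Mo (φ n)) (tt (φ n)) ≤ LI (Mo (φ n + 1)) (tt (φ n)) :=
    LI_mono_mod (hMo_le_succ (φ n)) _
  have h2 : LI (Mo (φ n + 1)) (tt (φ n)) ≤ LI (Mo (φ (n + 1))) (tt (φ n)) := by
    apply LI_mono_mod
    apply hMo_mono
    have := hφmono (show n < n + 1 by omega)
    omega
  have h3 : LI (Mo (φ (n + 1))) (tt (φ n)) ≤ LI (Mo (φ (n + 1))) (tt (φ (n + 1))) :=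
    LI_mono_div hc (hMo_stable _) (hφdiv n)
  have : LI (Mo (φ n + 1)) (tt (φ n)) = LI (Mo (φ n)) (tt (φ n)) := by
    apply le_antisymm
    · calc LI (Mo (φ n + 1)) (tt (φ n)) ≤ LI (Mo (φ (n + 1))) (tt (φ (n + 1))) :=
            le_trans h2 h3
      _ = LI (Mo (φ n)) (tt (φ n)) := heq.symm
    · exact h1
  exact htt (φ n) this.symm

end S18
namespace S18

open MvPolynomial Finsupp

variable {K : Type} [CommRing K] {c : ℕ} {r : ℕ} {d : Fin r → ℕ}

/-- all data of `x` lives on indices `< n` -/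
def WBelow (n : ℕ) (x : FreeIncP K c d) : Prop :=
  (∀ b ∈ x.support, ∀ k, (b.2).1 k < n) ∧
  (∀ b ∈ x.support, ∀ e ∈ (x b).support, ∀ v ∈ e.support, v.2 < n)

theorem exists_WBelow (x : FreeIncP K c d) : ∃ n, WBelow n x := by
  classical
  refine ⟨(x.support.sup fun b => Finset.univ.sup fun k => (b.2).1 k + 1) ⊔
    (x.support.sup fun b => (x b).support.sup fun e => e.support.sup fun v => v.2 + 1),
    ?_, ?_⟩
  · intro b hb k
    have h1 : (b.2).1 k + 1 ≤ Finset.univ.sup fun k => (b.2).1 k + 1 := by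
      simpa using Finset.le_sup (f := fun k => (b.2).1 k + 1) (Finset.mem_univ k)
    have h2 : (Finset.univ.sup fun k => (b.2).1 k + 1) ≤
        x.support.sup fun b => Finset.univ.sup fun k => (b.2).1 k + 1 :=
      Finset.le_sup (f := fun b => Finset.univ.sup fun k => (b.2).1 k + 1) hb
    have h3 := le_max_left (x.support.sup fun b => Finset.univ.sup fun k => (b.2).1 k + 1)
      (x.support.sup fun b => (x b).support.sup fun e => e.support.sup fun v => v.2 + 1)
    omega
  · intro b hb e he v hv
    have h1 : v.2 + 1 ≤ e.support.sup fun v => v.2 + 1 := by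
      simpa using Finset.le_sup (f := fun v : Fin c × ℕ => v.2 + 1) hv
    have h1' : (e.support.sup fun v => v.2 + 1) ≤
        (x b).support.sup fun e => e.support.sup fun v => v.2 + 1 :=
      Finset.le_sup (f := fun e : Expo c => e.support.sup fun v => v.2 + 1) he
    have h2 : ((x b).support.sup fun e => e.support.sup fun v => v.2 + 1) ≤
        x.support.sup fun b => (x b).support.sup fun e => e.support.sup fun v => v.2 + 1 :=
      Finset.le_sup (f := fun b => (x b).support.sup fun e => e.support.sup fun v => v.2 + 1) hb
    have h3 := le_max_right (x.support.sup fun b => Finset.univ.sup fun k => (b.2).1 k + 1)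
      (x.support.sup fun b => (x b).support.sup fun e => e.support.sup fun v => v.2 + 1)
    omega

theorem rename_congr_support {f g : Fin c × ℕ → Fin c × ℕ} (p : PInf K c)
    (h : ∀ e ∈ p.support, ∀ v ∈ e.support, f v = g v) : rename f p = rename g p := by
  have hp : p = ∑ e ∈ p.support, monomial e (coeff e p) := (as_sum p)
  rw [hp, map_sum, map_sum]
  apply Finset.sum_congr rfl
  intro e he
  rw [rename_monomial, rename_monomial, Finsupp.mapDomain_congr (h e he)]

/-- Inc elements agreeing below the width of `x` act equally on `x` -/
theorem act_congr (σ σ' : Inc) {n : ℕ} (h : ∀ j, j < n → σ.1 j = σ'.1 j)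
    {x : FreeIncP K c d} (hw : WBelow n x) :
    freeIncPAct K c σ x = freeIncPAct K c σ' x := by
  rw [freeIncPAct, freeIncPAct]
  apply Finsupp.sum_congr
  intro b hb
  have hbm : incAct σ b.2 = incAct σ' b.2 := by
    refine Subtype.ext (funext fun k => ?_)
    show σ.1 (b.2.1 k) = σ'.1 (b.2.1 k)
    exact h _ (hw.1 b hb k)
  have hP : incP K c σ (x b) = incP K c σ' (x b) := by
    rw [incP_apply, incP_apply]
    apply rename_congr_support
    intro e he v hv
    have : v.2 < n := hw.2 b hb e he v hv
    show (v.1, σ.1 v.2) = (v.1, σ'.1 v.2)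
    rw [h _ this]
  rw [hbm, hP]

/-- the canonical equivariant map from a free Inc-module determined by generators -/
noncomputable def coverMap {N : ℕ} (G : Fin N → FreeIncP K c d) (nb : Fin N → ℕ) :
    FreeIncP K c nb →ₗ[PInf K c] FreeIncP K c d :=
  Finsupp.lsum (PInf K c) fun p : Σ k : Fin N, OIHomNat (nb k) =>
    LinearMap.toSpanSingleton _ _ (freeIncPAct K c (extOf p.2.1 p.2.2) (G p.1))

theorem coverMap_single {N : ℕ} (G : Fin N → FreeIncP K c d) (nb : Fin N → ℕ)
    (p : Σ k : Fin N, OIHomNat (nb k)) (a : PInf K c) :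
    coverMap G nb (Finsupp.single p a) =
      a • freeIncPAct K c (extOf p.2.1 p.2.2) (G p.1) := by
  rw [coverMap, Finsupp.lsum_single, LinearMap.toSpanSingleton_apply]

theorem coverMap_equivariant {N : ℕ} {G : Fin N → FreeIncP K c d} {nb : Fin N → ℕ}
    (hWB : ∀ k, WBelow (nb k) (G k)) (τ : Inc) (x : FreeIncP K c nb) :
    coverMap G nb (freeIncPAct K c τ x) = freeIncPAct K c τ (coverMap G nb x) := by
  induction x using Finsupp.induction_linear with
  | zero => rw [act_zero, map_zero, act_zero]
  | add f g hf hg => rw [act_add, map_add, map_add, act_add, hf, hg]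
  | single p a =>
    obtain ⟨k, π⟩ := p
    rw [act_single, coverMap_single, coverMap_single, act_smul]
    congr 1
    show freeIncPAct K c (extOf (incAct τ π).1 (incAct τ π).2) (G k) =
      freeIncPAct K c τ (freeIncPAct K c (extOf π.1 π.2) (G k))
    rw [act_act]
    apply act_congr _ _ ?_ (hWB k)
    intro j hj
    rw [extOf_lt _ _ hj, Inc.mul_apply, extOf_lt _ _ hj]
    rfl

theorem coverMap_range {N : ℕ} {G : Fin N → FreeIncP K c d} {nb : Fin N → ℕ}
    (hWB : ∀ k, WBelow (nb k) (G k)) :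
    LinearMap.range (coverMap G nb) = IncSpan (Set.range G) := by
  apply le_antisymm
  · rintro y ⟨x, rfl⟩
    rw [coverMap, Finsupp.lsum_apply]
    apply Submodule.sum_mem
    intro p _
    dsimp only
    rw [LinearMap.toSpanSingleton_apply]
    apply Submodule.smul_mem
    exact Submodule.subset_span ⟨extOf p.2.1 p.2.2, G p.1, ⟨p.1, rfl⟩, rfl⟩
  · apply Submodule.span_le.mpr
    rintro y ⟨τ, x, ⟨k, rfl⟩, rfl⟩
    refine ⟨Finsupp.single ⟨k, ⟨fun j => τ.1 j.1, fun a b hab => τ.2 hab⟩⟩ 1, ?_⟩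
    rw [coverMap_single, one_smul]
    apply act_congr _ _ ?_ (hWB k)
    intro j hj
    rw [extOf_lt _ _ hj]

/-- the full cover statement -/
theorem cover_exists [IsNoetherianRing K] (hc : 0 < c)
    {M : Submodule (PInf K c) (FreeIncP K c d)} (hstab : IncStable M) :
    ∃ (N : ℕ) (nb : Fin N → ℕ) (G : Fin N → FreeIncP K c d),
      (∀ k, G k ∈ M) ∧ (∀ k, WBelow (nb k) (G k)) ∧
      LinearMap.range (coverMap G nb) = M := by
  classical
  obtain ⟨s, hsM, hspan⟩ := exists_finite_gen hc hstab
  refine ⟨s.card, ?_, ?_, ?_⟩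
  · exact fun k => Classical.choose (exists_WBelow ((s.equivFin.symm k).1 : FreeIncP K c d))
  · exact fun k => ((s.equivFin.symm k).1 : FreeIncP K c d)
  refine ⟨fun k => hsM (s.equivFin.symm k).2, fun k =>
    Classical.choose_spec (exists_WBelow _), ?_⟩
  rw [coverMap_range (fun k => Classical.choose_spec (exists_WBelow _))]
  rw [← hspan]
  congr 1
  ext y
  constructor
  · rintro ⟨k, rfl⟩
    exact (s.equivFin.symm k).2
  · intro hy
    exact ⟨s.equivFin ⟨y, hy⟩, by simp⟩

end S18
namespace S18

open MvPolynomial Finsupp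

variable {K : Type} [CommRing K] {c : ℕ}

/-- a stage of the resolution -/
structure Pkg (K : Type) [CommRing K] (c : ℕ) where
  rr : ℕ
  dd : Fin rr → ℕ
  M : Submodule (PInf K c) (FreeIncP K c dd)
  stab : IncStable M

variable [IsNoetherianRing K]

theorem cover_exists' (hc : 0 < c) (P : Pkg K c) :
    ∃ (N : ℕ) (nb : Fin N → ℕ) (ε : FreeIncP K c nb →ₗ[PInf K c] FreeIncP K c P.dd),
      (∀ (τ : Inc) (x : FreeIncP K c nb),
        ε (freeIncPAct K c τ x) = freeIncPAct K c τ (ε x)) ∧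
      LinearMap.range ε = P.M := by
  obtain ⟨N, nb, G, _, hWB, hrange⟩ := cover_exists hc P.stab
  exact ⟨N, nb, coverMap G nb, coverMap_equivariant hWB, hrange⟩

noncomputable def nextN (hc : 0 < c) (P : Pkg K c) : ℕ := (cover_exists' hc P).choose

noncomputable def nextnb (hc : 0 < c) (P : Pkg K c) : Fin (nextN hc P) → ℕ :=
  (cover_exists' hc P).choose_spec.choose

noncomputable def nextε (hc : 0 < c) (P : Pkg K c) :
    FreeIncP K c (nextnb hc P) →ₗ[PInf K c] FreeIncP K c P.dd :=
  (cover_exists' hc P).choose_spec.choose_spec.choose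

theorem nextε_spec (hc : 0 < c) (P : Pkg K c) :
    (∀ (τ : Inc) (x : FreeIncP K c (nextnb hc P)),
      nextε hc P (freeIncPAct K c τ x) = freeIncPAct K c τ (nextε hc P x)) ∧
    LinearMap.range (nextε hc P) = P.M :=
  (cover_exists' hc P).choose_spec.choose_spec.choose_spec

noncomputable def stepPkg (hc : 0 < c) (P : Pkg K c) : Pkg K c where
  rr := nextN hc P
  dd := nextnb hc P
  M := LinearMap.ker (nextε hc P)
  stab := by
    intro τ x hx
    rw [LinearMap.mem_ker] at hx ⊢
    rw [(nextε_spec hc P).1 τ x, hx, act_zero]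

noncomputable def chain (hc : 0 < c) (P0 : Pkg K c) : ℕ → Pkg K c
  | 0 => P0
  | n + 1 => stepPkg hc (chain hc P0 n)

end S18
namespace S18

open MvPolynomial Finsupp

variable {K : Type} [CommRing K] {c : ℕ} {r : ℕ} {d : Fin r → ℕ}

/-- weighted homogeneous component of an element of the free module -/
noncomputable def wcomp (W : Fin r → ℕ) (j : ℕ) (x : FreeIncP K c d) : FreeIncP K c d :=
  Finsupp.onFinset x.support
    (fun b => if W b.1 ≤ j then homogeneousComponent (j - W b.1) (x b) else 0)
    (fun b hb => Finsupp.mem_support_iff.mpr (fun h0 => hb (by rw [h0]; split <;> simp)))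

theorem wcomp_apply (W : Fin r → ℕ) (j : ℕ) (x : FreeIncP K c d) (b : Bdx d) :
    wcomp W j x b = if W b.1 ≤ j then homogeneousComponent (j - W b.1) (x b) else 0 := rfl

theorem wcomp_zero (W : Fin r → ℕ) (j : ℕ) : wcomp W j (0 : FreeIncP K c d) = 0 := by
  ext b e
  rw [wcomp_apply]
  split <;> simp

theorem wcomp_add (W : Fin r → ℕ) (j : ℕ) (x y : FreeIncP K c d) :
    wcomp W j (x + y) = wcomp W j x + wcomp W j y := by
  ext b e
  rw [Finsupp.add_apply, wcomp_apply, wcomp_apply, wcomp_apply, Finsupp.add_apply]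
  split <;> simp [map_add]

theorem wcomp_single (W : Fin r → ℕ) (j : ℕ) (p : Bdx d) (a : PInf K c) :
    wcomp W j (Finsupp.single p a) =
      Finsupp.single p (if W p.1 ≤ j then homogeneousComponent (j - W p.1) a else 0) := by
  classical
  ext b e
  rw [wcomp_apply]
  by_cases hbp : b = p
  · subst hbp
    rw [Finsupp.single_eq_same, Finsupp.single_eq_same]
  · rw [Finsupp.single_eq_of_ne' (fun h => hbp h.symm),
      Finsupp.single_eq_of_ne' (fun h => hbp h.symm)]
    split <;> simp

/-- `homCompF` is the weight-zero case of `wcomp` -/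
theorem homCompF_eq_wcomp (j : ℕ) (x : FreeIncP K c d) :
    homCompF K c j x = wcomp (fun _ => 0) j x := by
  ext b e
  rw [homCompF, Finsupp.mapRange_apply, wcomp_apply, if_pos (Nat.zero_le j), Nat.sub_zero]

/-- multiplying a homogeneous polynomial: homogeneous components shift -/
theorem homComp_mul_homog {a p : PInf K c} {m : ℕ} (hp : p.IsHomogeneous m) (k : ℕ) :
    homogeneousComponent k (a * p) =
      (if m ≤ k then homogeneousComponent (k - m) a else 0) * p := by
  classical
  conv_lhs => rw [← sum_homogeneousComponent a]
  rw [Finset.sum_mul, map_sum]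
  have hterm : ∀ i, homogeneousComponent k (homogeneousComponent i a * p) =
      if k = i + m then homogeneousComponent i a * p else 0 := fun i =>
    homogeneousComponent_of_mem
      ((mem_homogeneousSubmodule _ _).mpr
        ((homogeneousComponent_isHomogeneous i a).mul hp))
  rw [Finset.sum_congr rfl (fun i _ => hterm i)]
  by_cases hmk : m ≤ k
  · rw [if_pos hmk]
    rw [Finset.sum_eq_single (k - m) (fun i _ hne => if_neg (by omega))
      (fun hnotin => by
        rw [if_pos (by omega)]
        rw [homogeneousComponent_eq_zero _ _ (by
          simp only [Finset.mem_range] at hnotin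
          omega), zero_mul])]
    rw [if_pos (by omega)]
  · rw [if_neg hmk, zero_mul]
    apply Finset.sum_eq_zero
    intro i _
    rw [if_neg (by omega)]

/-- componentwise weighted homogeneity -/
def HomogF (W : Fin r → ℕ) (D : ℕ) (x : FreeIncP K c d) : Prop :=
  ∀ b, x b = 0 ∨ (W b.1 ≤ D ∧ (x b).IsHomogeneous (D - W b.1))

theorem HomogF.act {W : Fin r → ℕ} {D : ℕ} {x : FreeIncP K c d}
    (h : HomogF W D x) (τ : Inc) : HomogF W D (freeIncPAct K c τ x) := by
  intro b'
  rw [act_eq]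
  by_cases hb : ∃ b, bmap (d := d) τ b = b'
  · obtain ⟨b, rfl⟩ := hb
    rw [Finsupp.mapDomain_apply (bmap_injective τ), Finsupp.mapRange_apply]
    rcases h b with h0 | ⟨h1, h2⟩
    · rw [h0, map_zero]
      exact Or.inl rfl
    · right
      refine ⟨h1, ?_⟩
      rw [incP_apply]
      exact h2.rename_isHomogeneous
  · rw [Finsupp.mapDomain_notin_range]
    · exact Or.inl rfl
    · rintro ⟨b, rfl⟩; exact hb ⟨b, rfl⟩

theorem wcomp_homog (W : Fin r → ℕ) (j : ℕ) (x : FreeIncP K c d) :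
    HomogF W j (wcomp W j x) := by
  intro b
  rw [wcomp_apply]
  by_cases h : W b.1 ≤ j
  · rw [if_pos h]
    exact Or.inr ⟨h, homogeneousComponent_isHomogeneous _ _⟩
  · rw [if_neg h]
    exact Or.inl rfl

/-- the cover map commutes with weighted homogeneous components -/
theorem coverMap_wcomp {N : ℕ} {G : Fin N → FreeIncP K c d} {nb : Fin N → ℕ}
    {W : Fin r → ℕ} {D : Fin N → ℕ}
    (hG : ∀ k, HomogF W (D k) (G k)) (j : ℕ) (x : FreeIncP K c nb) :
    coverMap G nb (wcomp D j x) = wcomp W j (coverMap G nb x) := by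
  induction x using Finsupp.induction_linear with
  | zero => rw [wcomp_zero, map_zero, wcomp_zero]
  | add f g hf hg => rw [wcomp_add, map_add, map_add, wcomp_add, hf, hg]
  | single p a =>
    rw [wcomp_single, coverMap_single, coverMap_single]
    set v := freeIncPAct K c (extOf p.2.1 p.2.2) (G p.1) with hv
    have hvhom : HomogF W (D p.1) v := (hG p.1).act _
    apply Finsupp.ext
    intro b
    rw [Finsupp.smul_apply, wcomp_apply, Finsupp.smul_apply, smul_eq_mul, smul_eq_mul]
    rcases hvhom b with h0 | ⟨h1, h2⟩
    · rw [h0, mul_zero, mul_zero]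
      split <;> simp
    · rw [homComp_mul_homog h2 (j - W b.1)]
      by_cases hDj : D p.1 ≤ j
      · rw [if_pos hDj, if_pos (le_trans h1 hDj),
          if_pos (show D p.1 - W b.1 ≤ j - W b.1 by omega)]
        have heq : j - W b.1 - (D p.1 - W b.1) = j - D p.1 := by omega
        rw [heq]
      · rw [if_neg hDj, zero_mul]
        by_cases hWj : W b.1 ≤ j
        · rw [if_pos hWj, if_neg (show ¬ (D p.1 - W b.1 ≤ j - W b.1) by omega), zero_mul]
        · rw [if_neg hWj]

theorem sum_shift {M : Type*} [AddCommMonoid M] (g : ℕ → M) (w n : ℕ) :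
    ∑ j ∈ Finset.range n, (if w ≤ j then g (j - w) else 0) =
      ∑ i ∈ Finset.range (n - w), g i := by
  induction n with
  | zero => simp
  | succ n ih =>
    rw [Finset.sum_range_succ, ih]
    by_cases h : w ≤ n
    · rw [if_pos h]
      have h2 : n + 1 - w = (n - w) + 1 := by omega
      rw [h2, Finset.sum_range_succ]
    · rw [if_neg h, add_zero]
      have h2 : n + 1 - w = n - w := by omega
      rw [h2]

theorem sum_shift' (p : PInf K c) (w n : ℕ) :
    ∑ j ∈ Finset.range n, (if w ≤ j then homogeneousComponent (j - w) p else 0) =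
      ∑ i ∈ Finset.range (n - w), homogeneousComponent i p :=
  sum_shift (fun i => homogeneousComponent i p) w n

theorem sum_homComp_ge {p : PInf K c} {n : ℕ} (h : p.totalDegree < n) :
    ∑ i ∈ Finset.range n, homogeneousComponent i p = p := by
  conv_rhs => rw [← sum_homogeneousComponent p]
  symm
  apply Finset.sum_subset (Finset.range_subset_range.mpr (by omega))
  intro i _ hi
  apply homogeneousComponent_eq_zero _ _
  simp only [Finset.mem_range] at hi
  omega

theorem wcomp_sum (W : Fin r → ℕ) (x : FreeIncP K c d) :
    ∃ n0, ∀ n, n0 ≤ n → ∑ j ∈ Finset.range n, wcomp W j x = x := by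
  classical
  refine ⟨x.support.sup (fun b => W b.1 + (x b).totalDegree + 1), fun n hn => ?_⟩
  apply Finsupp.ext
  intro b
  rw [Finset.sum_apply']
  have hbody : ∀ j, wcomp W j x b =
      if W b.1 ≤ j then homogeneousComponent (j - W b.1) (x b) else 0 :=
    fun j => wcomp_apply W j x b
  rw [Finset.sum_congr rfl (fun j _ => hbody j), sum_shift']
  by_cases hb : b ∈ x.support
  · have hsup : W b.1 + (x b).totalDegree + 1 ≤ n :=
      le_trans (Finset.le_sup (f := fun b => W b.1 + (x b).totalDegree + 1) hb) hn
    rw [sum_homComp_ge (by omega)]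
  · have h0 : x b = 0 := by rwa [Finsupp.notMem_support_iff] at hb
    rw [h0]
    rw [Finset.sum_congr rfl (fun i _ => map_zero (homogeneousComponent i))]
    simp

end S18
namespace S18

open MvPolynomial Finsupp

variable {K : Type} [CommRing K] {c : ℕ} {r : ℕ} {d : Fin r → ℕ}

/-- a stage of the graded resolution -/
structure GPkg (K : Type) [CommRing K] (c : ℕ) where
  rr : ℕ
  dd : Fin rr → ℕ
  W : Fin rr → ℕ
  M : Submodule (PInf K c) (FreeIncP K c dd)
  stab : IncStable M
  graded : ∀ x ∈ M, ∀ j, wcomp W j x ∈ M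

variable [IsNoetherianRing K]

theorem gcover_exists' (hc : 0 < c) (P : GPkg K c) :
    ∃ (N : ℕ) (nb : Fin N → ℕ) (D : Fin N → ℕ)
      (ε : FreeIncP K c nb →ₗ[PInf K c] FreeIncP K c P.dd),
      (∀ (τ : Inc) (x : FreeIncP K c nb),
        ε (freeIncPAct K c τ x) = freeIncPAct K c τ (ε x)) ∧
      LinearMap.range ε = P.M ∧
      (∀ p : Σ k : Fin N, OIHomNat (nb k), HomogF P.W (D p.1) (ε (Finsupp.single p 1))) ∧
      (∀ x : FreeIncP K c nb, ε x = 0 → ∀ j, ε (wcomp D j x) = 0) := by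
  classical
  obtain ⟨s, hsM, hspan⟩ := exists_finite_gen hc P.stab
  set s' : Finset (FreeIncP K c P.dd) := s.biUnion (fun g =>
    (Finset.range (Classical.choose (wcomp_sum P.W g))).image
      (fun j => wcomp P.W j g)) with hs'
  have hmem' : ∀ y ∈ s', ∃ (g : FreeIncP K c P.dd) (j : ℕ), g ∈ s ∧ y = wcomp P.W j g := by
    intro y hy
    simp only [hs', Finset.mem_biUnion, Finset.mem_image, Finset.mem_range] at hy
    obtain ⟨g, hg, j, _, rfl⟩ := hy
    exact ⟨g, j, hg, rfl⟩
  have hs'M : ↑s' ⊆ (P.M : Set (FreeIncP K c P.dd)) := by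
    intro y hy
    obtain ⟨g, j, hg, rfl⟩ := hmem' y hy
    exact P.graded g (hsM hg) j
  have hspan' : IncSpan ↑s' = P.M := by
    apply le_antisymm (IncSpan_le P.stab hs'M)
    rw [← hspan]
    apply IncSpan_le (IncSpan_stable _)
    intro g hg
    have hsum := Classical.choose_spec (wcomp_sum P.W g) _ (le_refl _)
    rw [show g = ∑ j ∈ Finset.range (Classical.choose (wcomp_sum P.W g)),
      wcomp P.W j g from hsum.symm]
    apply Submodule.sum_mem
    intro j hj
    apply subset_IncSpan
    simp only [hs', Finset.mem_coe, Finset.mem_biUnion]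
    exact ⟨g, hg, Finset.mem_image.mpr ⟨j, hj, rfl⟩⟩
  have hhom : ∀ y ∈ s', ∃ Dg, HomogF P.W Dg y := by
    intro y hy
    obtain ⟨g, j, hg, rfl⟩ := hmem' y hy
    exact ⟨j, wcomp_homog _ _ _⟩
  set N := s'.card
  set G : Fin N → FreeIncP K c P.dd := fun k => (s'.equivFin.symm k).1 with hG
  have hGmem : ∀ k, G k ∈ s' := fun k => (s'.equivFin.symm k).2
  set nb : Fin N → ℕ := fun k => Classical.choose (exists_WBelow (G k)) with hnb
  have hWB : ∀ k, WBelow (nb k) (G k) := fun k => Classical.choose_spec (exists_WBelow (G k))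
  set D : Fin N → ℕ := fun k => Classical.choose (hhom (G k) (hGmem k)) with hD
  have hDhom : ∀ k, HomogF P.W (D k) (G k) :=
    fun k => Classical.choose_spec (hhom (G k) (hGmem k))
  refine ⟨N, nb, D, coverMap G nb, coverMap_equivariant hWB, ?_, ?_, ?_⟩
  · rw [coverMap_range hWB, ← hspan']
    congr 1
    ext y
    constructor
    · rintro ⟨k, rfl⟩
      exact hGmem k
    · intro hy
      exact ⟨s'.equivFin ⟨y, hy⟩, by simp [hG]⟩
  · intro p
    rw [coverMap_single, one_smul]
    exact (hDhom p.1).act _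
  · intro x hx j
    rw [coverMap_wcomp hDhom, hx, wcomp_zero]

noncomputable def gnextN (hc : 0 < c) (P : GPkg K c) : ℕ := (gcover_exists' hc P).choose

noncomputable def gnextnb (hc : 0 < c) (P : GPkg K c) : Fin (gnextN hc P) → ℕ :=
  (gcover_exists' hc P).choose_spec.choose

noncomputable def gnextD (hc : 0 < c) (P : GPkg K c) : Fin (gnextN hc P) → ℕ :=
  (gcover_exists' hc P).choose_spec.choose_spec.choose

noncomputable def gnextε (hc : 0 < c) (P : GPkg K c) :
    FreeIncP K c (gnextnb hc P) →ₗ[PInf K c] FreeIncP K c P.dd :=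
  (gcover_exists' hc P).choose_spec.choose_spec.choose_spec.choose

theorem gnextε_spec (hc : 0 < c) (P : GPkg K c) :
    (∀ (τ : Inc) (x : FreeIncP K c (gnextnb hc P)),
      gnextε hc P (freeIncPAct K c τ x) = freeIncPAct K c τ (gnextε hc P x)) ∧
    LinearMap.range (gnextε hc P) = P.M ∧
    (∀ p : Σ k : Fin (gnextN hc P), OIHomNat (gnextnb hc P k),
      HomogF P.W (gnextD hc P p.1) (gnextε hc P (Finsupp.single p 1))) ∧
    (∀ x : FreeIncP K c (gnextnb hc P),
      gnextε hc P x = 0 → ∀ j, gnextε hc P (wcomp (gnextD hc P) j x) = 0) :=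
  (gcover_exists' hc P).choose_spec.choose_spec.choose_spec.choose_spec

noncomputable def gstepPkg (hc : 0 < c) (P : GPkg K c) : GPkg K c where
  rr := gnextN hc P
  dd := gnextnb hc P
  W := gnextD hc P
  M := LinearMap.ker (gnextε hc P)
  stab := by
    intro τ x hx
    rw [LinearMap.mem_ker] at hx ⊢
    rw [(gnextε_spec hc P).1 τ x, hx, act_zero]
  graded := by
    intro x hx j
    rw [LinearMap.mem_ker] at hx ⊢
    exact (gnextε_spec hc P).2.2.2 x hx j

noncomputable def gchain (hc : 0 < c) (P0 : GPkg K c) : ℕ → GPkg K c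
  | 0 => P0
  | n + 1 => gstepPkg hc (gchain hc P0 n)

end S18
/-- Let `K` be a Noetherian commutative ring and `c ≥ 1`. Every
Inc-submodule `ℳ` of a finitely generated free Inc-module `ℱ = ⊕_{i=1}^r F^{Inc,d_i}`
over `𝒫 = K[x_{i,j} : i ∈ [c], j ∈ ℕ]` admits a free resolution
`⋯ → ℱ₂ → ℱ₁ → ℳ → 0` in which each `ℱ_i` is a free Inc-module over `𝒫`, finitely
generated as an Inc-module, and all differentials and the augmentation are
Inc-equivariant `𝒫`-module homomorphisms. Moreover, if `ℳ` is graded (for the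
standard grading of `𝒫`), then such a resolution exists with all differentials of
degree zero. -/
theorem stmt_18 (K : Type) [CommRing K] [IsNoetherianRing K] (c : ℕ) (hc : 1 ≤ c)
    {r : ℕ} (d : Fin r → ℕ)
    (ℳ : Submodule (PInf K c) (FreeIncP K c d))
    (hM : ∀ (τ : Inc) (x : FreeIncP K c d), x ∈ ℳ → freeIncPAct K c τ x ∈ ℳ) :
    -- an Inc-equivariant free resolution `⋯ → ℱ₂ → ℱ₁ → ℳ → 0` exists
    (∃ (rk : ℕ → ℕ) (dd : ∀ i, Fin (rk i) → ℕ)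
      (δ : ∀ i, FreeIncP K c (dd (i + 1)) →ₗ[PInf K c] FreeIncP K c (dd i))
      (ε : FreeIncP K c (dd 0) →ₗ[PInf K c] FreeIncP K c d),
      -- the differentials and the augmentation are Inc-equivariant
      (∀ (i : ℕ) (τ : Inc) (x : FreeIncP K c (dd (i + 1))),
        δ i (freeIncPAct K c τ x) = freeIncPAct K c τ (δ i x)) ∧
      (∀ (τ : Inc) (x : FreeIncP K c (dd 0)),
        ε (freeIncPAct K c τ x) = freeIncPAct K c τ (ε x)) ∧
      -- exactness: `ℱ₁ → ℳ → 0` and `range = ker` at every step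
      LinearMap.range ε = ℳ ∧
      LinearMap.range (δ 0) = LinearMap.ker ε ∧
      (∀ i, LinearMap.range (δ (i + 1)) = LinearMap.ker (δ i))) ∧
    -- moreover, if `ℳ` is a graded submodule, the resolution can be chosen graded
    -- with degree-zero differentials
    ((∀ x ∈ ℳ, ∀ j : ℕ, homCompF K c j x ∈ ℳ) →
      ∃ (rk : ℕ → ℕ) (dd : ∀ i, Fin (rk i) → ℕ)
        (δ : ∀ i, FreeIncP K c (dd (i + 1)) →ₗ[PInf K c] FreeIncP K c (dd i))
        (ε : FreeIncP K c (dd 0) →ₗ[PInf K c] FreeIncP K c d)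
        -- degrees of the basis elements of the free modules in the resolution
        (t : ∀ i, (Σ j : Fin (rk i), OIHomNat (dd i j)) → ℕ),
        (∀ (i : ℕ) (τ : Inc) (x : FreeIncP K c (dd (i + 1))),
          δ i (freeIncPAct K c τ x) = freeIncPAct K c τ (δ i x)) ∧
        (∀ (τ : Inc) (x : FreeIncP K c (dd 0)),
          ε (freeIncPAct K c τ x) = freeIncPAct K c τ (ε x)) ∧
        LinearMap.range ε = ℳ ∧
        LinearMap.range (δ 0) = LinearMap.ker ε ∧
        (∀ i, LinearMap.range (δ (i + 1)) = LinearMap.ker (δ i)) ∧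
        -- the augmentation has degree zero: the image of a basis element of
        -- degree `t 0 p` is homogeneous of degree `t 0 p`
        (∀ (p : Σ j : Fin (rk 0), OIHomNat (dd 0 j))
            (q : Σ i : Fin r, OIHomNat (d i)),
          ((ε (Finsupp.single p 1)) q).IsHomogeneous (t 0 p)) ∧
        -- the differentials have degree zero
        (∀ (i : ℕ) (p : Σ j : Fin (rk (i + 1)), OIHomNat (dd (i + 1) j))
            (q : Σ j : Fin (rk i), OIHomNat (dd i j)),
          ((δ i (Finsupp.single p 1)) q = 0) ∨
          (t i q ≤ t (i + 1) p ∧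
            ((δ i (Finsupp.single p 1)) q).IsHomogeneous (t (i + 1) p - t i q)))) := by
  constructor
  · -- ungraded part
    have hc0 : 0 < c := hc
    let P0 : S18.Pkg K c := ⟨r, d, ℳ, hM⟩
    let Ch : ℕ → S18.Pkg K c := S18.chain hc0 P0
    refine ⟨fun i => (Ch (i + 1)).rr, fun i => (Ch (i + 1)).dd,
      fun i => S18.nextε hc0 (Ch (i + 1)), S18.nextε hc0 P0, ?_, ?_, ?_, ?_, ?_⟩
    · exact fun i => (S18.nextε_spec hc0 (Ch (i + 1))).1
    · exact (S18.nextε_spec hc0 P0).1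
    · exact (S18.nextε_spec hc0 P0).2
    · exact (S18.nextε_spec hc0 (Ch 1)).2
    · exact fun i => (S18.nextε_spec hc0 (Ch (i + 2))).2
  · -- graded part
    intro hgr
    have hc0 : 0 < c := hc
    let P0 : S18.GPkg K c := ⟨r, d, fun _ => 0, ℳ, hM, by
      intro x hx j
      rw [← S18.homCompF_eq_wcomp]
      exact hgr x hx j⟩
    let Ch : ℕ → S18.GPkg K c := S18.gchain hc0 P0
    refine ⟨fun i => (Ch (i + 1)).rr, fun i => (Ch (i + 1)).dd,
      fun i => S18.gnextε hc0 (Ch (i + 1)), S18.gnextε hc0 P0,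
      fun i p => (Ch (i + 1)).W p.1, ?_, ?_, ?_, ?_, ?_, ?_, ?_⟩
    · exact fun i => (S18.gnextε_spec hc0 (Ch (i + 1))).1
    · exact (S18.gnextε_spec hc0 P0).1
    · exact (S18.gnextε_spec hc0 P0).2.1
    · exact (S18.gnextε_spec hc0 (Ch 1)).2.1
    · exact fun i => (S18.gnextε_spec hc0 (Ch (i + 2))).2.1
    · -- augmentation degrees
      intro p q
      have hsp := (S18.gnextε_spec hc0 P0).2.2.1 p q
      show MvPolynomial.IsHomogeneous
        ((S18.gnextε hc0 P0 (Finsupp.single p 1)) q) ((Ch 1).W p.1)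
      rcases hsp with h0 | ⟨_, h2⟩
      · rw [h0]
        exact MvPolynomial.isHomogeneous_zero _ _ _
      · exact h2
    · -- differential degrees
      intro i p q
      exact (S18.gnextε_spec hc0 (Ch (i + 1))).2.2.1 p q
end
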